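/- arXiv:2405.18341 — 2 statements merged into one kernel-verified Lean document; each statement's English description precedes it below -/
import Mathlib

section
/- Triangle inequality for the RDS integral: if f is RDS integrable with respect to α ∈ BV[a,b], then |f| is RDS integrable with respect to α, f is RDS integrable with respect to the variation function Vα(x) = V(α,[a,x]), and |∫_a^b f dα| ≤ ∫_a^b |f| dVα. -/
open Set Filter Topology
open scoped Classical

noncomputable section

/-- A partition `a = x 0 < x 1 < ... < x n = b` of `[a,b]`. -/
structure RDSPartition (a b : ℝ) where
  n : ℕ
  x : ℕ → ℝ
  mono : ∀ i, i < n → x i < x (i + 1)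
  first : x 0 = a
  last : x n = b

/-- Right limit `α(t+)`, with the convention `α(b+) = α(b)` at the right endpoint. -/
def rLim (b : ℝ) (α : ℝ → ℝ) (t : ℝ) : ℝ :=
  if t < b then Function.rightLim α t else α t

/-- Left limit `α(t-)`, with the convention `α(a-) = α(a)` at the left endpoint. -/
def lLim (a : ℝ) (α : ℝ → ℝ) (t : ℝ) : ℝ :=
  if a < t then Function.leftLim α t else α t

/-- `α`-length of the singleton `{t}` inside `[a,b]`: `α(t+) - α(t-)`. -/
def muPt (a b : ℝ) (α : ℝ → ℝ) (t : ℝ) : ℝ :=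
  rLim b α t - lLim a α t

/-- `α`-length of the open interval `(c,d)` inside `[a,b]`: `α(d-) - α(c+)`. -/
def muIoo (a b : ℝ) (α : ℝ → ℝ) (c d : ℝ) : ℝ :=
  lLim a α d - rLim b α c

/-- `f` is a step function with respect to the partition `P`: it is constant on each
open subinterval `(x (i-1), x i)` of `P`. -/
def IsStepOn (a b : ℝ) (f : ℝ → ℝ) (P : RDSPartition a b) : Prop :=
  ∀ i, i < P.n → ∀ s ∈ Set.Ioo (P.x i) (P.x (i + 1)),
    f s = f ((P.x i + P.x (i + 1)) / 2)

/-- The RDS integral of a step function with respect to the partition `P`: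
`Σ_{i=0}^n f(x_i) μ_α({x_i}) + Σ_{i=1}^n c_i μ_α(I_i)`. -/
def stepInt (a b : ℝ) (α : ℝ → ℝ) (P : RDSPartition a b) (f : ℝ → ℝ) : ℝ :=
  (∑ i ∈ Finset.range (P.n + 1), f (P.x i) * muPt a b α (P.x i)) +
    ∑ i ∈ Finset.range P.n,
      f ((P.x i + P.x (i + 1)) / 2) * muIoo a b α (P.x i) (P.x (i + 1))

/-- Upper envelope: infimum of RDS step integrals of step functions above `f` on `[a,b]`. -/
def upperRDS (a b : ℝ) (α f : ℝ → ℝ) : ℝ :=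
  sInf { r | ∃ (u : ℝ → ℝ) (P : RDSPartition a b), IsStepOn a b u P ∧
    (∀ t ∈ Set.Icc a b, f t ≤ u t) ∧ r = stepInt a b α P u }

/-- Lower envelope: supremum of RDS step integrals of step functions below `f` on `[a,b]`. -/
def lowerRDS (a b : ℝ) (α f : ℝ → ℝ) : ℝ :=
  sSup { r | ∃ (v : ℝ → ℝ) (P : RDSPartition a b), IsStepOn a b v P ∧
    (∀ t ∈ Set.Icc a b, v t ≤ f t) ∧ r = stepInt a b α P v }

/-- RDS integrability with respect to an increasing integrator. -/
def RDSIntegrableInc (a b : ℝ) (α f : ℝ → ℝ) : Prop :=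
  lowerRDS a b α f = upperRDS a b α f

/-- The RDS integral with respect to an increasing integrator. -/
def RDSIntegralInc (a b : ℝ) (α f : ℝ → ℝ) : ℝ := upperRDS a b α f

/-- RDS integrability with respect to a BV integrator: some Jordan decomposition
into increasing functions works. -/
def RDSIntegrable (a b : ℝ) (α f : ℝ → ℝ) : Prop :=
  ∃ αp αm : ℝ → ℝ, MonotoneOn αp (Set.Icc a b) ∧ MonotoneOn αm (Set.Icc a b) ∧
    (∀ t ∈ Set.Icc a b, α t = αp t - αm t) ∧
    RDSIntegrableInc a b αp f ∧ RDSIntegrableInc a b αm f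

/-- The RDS integral with respect to a BV integrator. -/
def RDSIntegral (a b : ℝ) (α f : ℝ → ℝ) : ℝ :=
  if h : RDSIntegrable a b α f then
    RDSIntegralInc a b h.choose f - RDSIntegralInc a b h.choose_spec.choose f
  else 0

/-- `f` is bounded on `[a,b]`. -/
def BddOn (a b : ℝ) (f : ℝ → ℝ) : Prop :=
  ∃ M : ℝ, ∀ t ∈ Set.Icc a b, |f t| ≤ M

end
noncomputable section Aux
open MeasureTheory

/-- clamp to `[a,b]` -/
def cl (a b t : ℝ) : ℝ := max a (min t b)

lemma cl_mono (a b : ℝ) : Monotone (cl a b) := fun _ _ h =>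
  max_le_max le_rfl (min_le_min h le_rfl)

lemma cl_eq {a b t : ℝ} (h : t ∈ Set.Icc a b) : cl a b t = t := by
  have := h.1; have := h.2; unfold cl
  rw [min_eq_left h.2, max_eq_right h.1]

lemma cl_mem {a b : ℝ} (hab : a ≤ b) (t : ℝ) : cl a b t ∈ Set.Icc a b :=
  ⟨le_max_left _ _, max_le hab (min_le_right _ _)⟩

lemma cl_of_le {a b t : ℝ} (h : t ≤ a) : cl a b t = a :=
  max_eq_left ((min_le_left _ _).trans h)

lemma cl_of_ge {a b t : ℝ} (hab : a ≤ b) (h : b ≤ t) : cl a b t = b := by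
  unfold cl; rw [min_eq_right h, max_eq_right hab]

/-- clamped function -/
def clf (a b : ℝ) (β : ℝ → ℝ) : ℝ → ℝ := fun t => β (cl a b t)

lemma clf_mono {a b : ℝ} {β : ℝ → ℝ} (hβ : MonotoneOn β (Set.Icc a b)) (hab : a ≤ b) :
    Monotone (clf a b β) := fun x y h =>
  hβ (cl_mem hab x) (cl_mem hab y) (cl_mono a b h)

lemma clf_eqOn {a b : ℝ} (β : ℝ → ℝ) : Set.EqOn β (clf a b β) (Set.Icc a b) := fun t ht => by
  simp [clf, cl_eq ht]

lemma clf_add (a b : ℝ) (β γ : ℝ → ℝ) :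
    clf a b (fun t => β t + γ t) = fun t => clf a b β t + clf a b γ t := rfl

lemma clf_sub (a b : ℝ) (β γ : ℝ → ℝ) :
    clf a b (fun t => β t - γ t) = fun t => clf a b β t - clf a b γ t := rfl

/-! ### right/left limits of monotone functions -/

lemma rLim_add {b : ℝ} {q r : ℝ → ℝ} (hq : Monotone q) (hr : Monotone r) (t : ℝ) :
    rLim b (fun x => q x + r x) t = rLim b q t + rLim b r t := by
  unfold rLim
  by_cases h : t < b
  · simp only [if_pos h]
    exact rightLim_eq_of_tendsto 
      ((hq.tendsto_rightLim t).add (hr.tendsto_rightLim t))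
  · simp [if_neg h]

lemma lLim_add {a : ℝ} {q r : ℝ → ℝ} (hq : Monotone q) (hr : Monotone r) (t : ℝ) :
    lLim a (fun x => q x + r x) t = lLim a q t + lLim a r t := by
  unfold lLim
  by_cases h : a < t
  · simp only [if_pos h]
    exact leftLim_eq_of_tendsto 
      ((hq.tendsto_leftLim t).add (hr.tendsto_leftLim t))
  · simp [if_neg h]

lemma muPt_add {a b : ℝ} {q r : ℝ → ℝ} (hq : Monotone q) (hr : Monotone r) (t : ℝ) :
    muPt a b (fun x => q x + r x) t = muPt a b q t + muPt a b r t := by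
  unfold muPt; rw [rLim_add hq hr, lLim_add hq hr]; ring

lemma muIoo_add {a b : ℝ} {q r : ℝ → ℝ} (hq : Monotone q) (hr : Monotone r) (c d : ℝ) :
    muIoo a b (fun x => q x + r x) c d = muIoo a b q c d + muIoo a b r c d := by
  unfold muIoo; rw [rLim_add hq hr, lLim_add hq hr]; ring

lemma lLim_le_rLim {a b : ℝ} {q : ℝ → ℝ} (hq : Monotone q) (t : ℝ) :
    lLim a q t ≤ rLim b q t := by
  unfold lLim rLim
  by_cases h1 : a < t <;> by_cases h2 : t < b <;> simp only [if_pos, if_neg, h1, h2]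
  · exact hq.leftLim_le_rightLim le_rfl
  · exact hq.leftLim_le le_rfl
  · exact hq.le_rightLim le_rfl
  · exact le_rfl

lemma muPt_nonneg {a b : ℝ} {q : ℝ → ℝ} (hq : Monotone q) (t : ℝ) :
    0 ≤ muPt a b q t := sub_nonneg.2 (lLim_le_rLim hq t)

lemma rLim_le_lLim {a b : ℝ} {q : ℝ → ℝ} (hq : Monotone q) {c d : ℝ} (hcd : c < d) :
    rLim b q c ≤ lLim a q d := by
  unfold lLim rLim
  by_cases h1 : a < d <;> by_cases h2 : c < b <;> simp only [if_pos, if_neg, h1, h2]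
  · exact hq.rightLim_le_leftLim hcd
  · exact hq.le_leftLim hcd
  · exact hq.rightLim_le hcd
  · exact hq hcd.le

lemma muIoo_nonneg {a b : ℝ} {q : ℝ → ℝ} (hq : Monotone q) {c d : ℝ} (hcd : c < d) :
    0 ≤ muIoo a b q c d := sub_nonneg.2 (rLim_le_lLim hq hcd)

/-! ### congruence -/

lemma rLim_eqOn {a b : ℝ} {β γ : ℝ → ℝ} (hγ : Monotone γ) (h : Set.EqOn β γ (Set.Icc a b))
    {t : ℝ} (ht : t ∈ Set.Icc a b) : rLim b β t = rLim b γ t := by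
  unfold rLim
  by_cases hb : t < b
  · simp only [if_pos hb]
    have hev : β =ᶠ[nhdsWithin t (Set.Ioi t)] γ := by
      filter_upwards [Ioo_mem_nhdsGT_of_mem (Set.mem_Ico.2 ⟨le_rfl, hb⟩)] with s hs
      exact h ⟨ht.1.trans hs.1.le, hs.2.le⟩
    have : Filter.Tendsto β (nhdsWithin t (Set.Ioi t)) (nhds (Function.rightLim γ t)) :=
      (hγ.tendsto_rightLim t).congr' hev.symm
    exact (rightLim_eq_of_tendsto this).trans
      (rightLim_eq_of_tendsto (hγ.tendsto_rightLim t)).symm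
  · simp only [if_neg hb]
    exact h ht

lemma lLim_eqOn {a b : ℝ} {β γ : ℝ → ℝ} (hγ : Monotone γ) (h : Set.EqOn β γ (Set.Icc a b))
    {t : ℝ} (ht : t ∈ Set.Icc a b) : lLim a β t = lLim a γ t := by
  unfold lLim
  by_cases ha : a < t
  · simp only [if_pos ha]
    have hev : β =ᶠ[nhdsWithin t (Set.Iio t)] γ := by
      filter_upwards [Ioo_mem_nhdsLT_of_mem (Set.mem_Ioc.2 ⟨ha, le_rfl⟩)] with s hs
      exact h ⟨hs.1.le, hs.2.le.trans ht.2⟩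
    have : Filter.Tendsto β (nhdsWithin t (Set.Iio t)) (nhds (Function.leftLim γ t)) :=
      (hγ.tendsto_leftLim t).congr' hev.symm
    exact (leftLim_eq_of_tendsto this).trans
      (leftLim_eq_of_tendsto (hγ.tendsto_leftLim t)).symm
  · simp only [if_neg ha]
    exact h ht

end Aux
noncomputable section Aux2
open MeasureTheory

variable {a b : ℝ}

namespace RDSPartition

lemma x_le_x (P : RDSPartition a b) {i j : ℕ} (hij : i ≤ j) (hj : j ≤ P.n) :
    P.x i ≤ P.x j := by
  induction j with
  | zero => simp_all
  | succ k ih =>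
    rcases Nat.lt_or_ge i (k+1) with h | h
    · exact (ih (Nat.lt_succ_iff.1 h) (le_trans (Nat.le_succ k) hj)).trans
        (P.mono k (Nat.lt_of_succ_le hj)).le
    · have : i = k + 1 := le_antisymm hij h
      subst this; rfl

lemma x_lt_x (P : RDSPartition a b) {i j : ℕ} (hij : i < j) (hj : j ≤ P.n) :
    P.x i < P.x j :=
  lt_of_lt_of_le (P.mono i (lt_of_lt_of_le hij hj))
    (P.x_le_x hij (le_trans (Nat.le_refl _) hj))

lemma x_mem (P : RDSPartition a b) {i : ℕ} (hi : i ≤ P.n) : P.x i ∈ Set.Icc a b := by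
  have h1 := P.x_le_x (Nat.zero_le i) hi
  have h2 := P.x_le_x hi (le_refl P.n)
  rw [P.first] at h1; rw [P.last] at h2
  exact ⟨h1, h2⟩

lemma mid_mem (P : RDSPartition a b) {i : ℕ} (hi : i < P.n) :
    (P.x i + P.x (i + 1)) / 2 ∈ Set.Ioo (P.x i) (P.x (i + 1)) := by
  constructor <;> nlinarith [P.mono i hi]

lemma mid_mem_Icc (P : RDSPartition a b) {i : ℕ} (hi : i < P.n) :
    (P.x i + P.x (i + 1)) / 2 ∈ Set.Icc a b := by
  have h := P.mid_mem hi
  exact ⟨(P.x_mem (le_of_lt hi)).1.trans h.1.le, h.2.le.trans (P.x_mem hi).2⟩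

/-- every point of `[a,b]` is a node or lies in an open subinterval -/
lemma locate (P : RDSPartition a b) {t : ℝ} (ht : t ∈ Set.Icc a b) :
    (∃ i ≤ P.n, P.x i = t) ∨ ∃ i < P.n, t ∈ Set.Ioo (P.x i) (P.x (i + 1)) := by
  classical
  set F := (Finset.range (P.n + 1)).filter (fun i => P.x i ≤ t) with hF
  have h0 : 0 ∈ F := by
    simp [hF, Finset.mem_filter, P.first, ht.1]
  have hFne : F.Nonempty := ⟨0, h0⟩
  set i := F.max' hFne with hi
  have hiF : i ∈ F := F.max'_mem hFne
  have hin : i ≤ P.n := by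
    have := (Finset.mem_filter.1 hiF).1; simpa [Nat.lt_succ_iff] using this
  have hit : P.x i ≤ t := (Finset.mem_filter.1 hiF).2
  rcases eq_or_lt_of_le hit with h | h
  · exact Or.inl ⟨i, hin, h⟩
  · have hilt : i < P.n := by
      rcases eq_or_lt_of_le hin with h' | h'
      · exfalso; rw [h', P.last] at h; exact absurd ht.2 (not_le.2 h)
      · exact h'
    refine Or.inr ⟨i, hilt, h, ?_⟩
    by_contra hcon
    push_neg at hcon
    have : i + 1 ∈ F := by
      simp only [hF, Finset.mem_filter, Finset.mem_range]
      exact ⟨Nat.succ_lt_succ hilt, hcon⟩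
    have := F.le_max' _ this
    omega

end RDSPartition

/-- the trivial partition -/
def Ptriv (hab : a < b) : RDSPartition a b where
  n := 1
  x := fun i => if i = 0 then a else b
  mono := by intro i hi; interval_cases i; simpa using hab
  first := by simp
  last := by simp

lemma isStepOn_const (c : ℝ) (P : RDSPartition a b) : IsStepOn a b (fun _ => c) P :=
  fun _ _ _ _ => rfl

/-- telescoping helper -/
lemma tele_sum (g h : ℕ → ℝ) (n : ℕ) :
    ((∑ i ∈ Finset.range (n + 1), (g i - h i)) + ∑ i ∈ Finset.range n, (h (i + 1) - g i))
      = g n - h 0 := by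
  induction n with
  | zero => simp
  | succ k ih =>
    rw [Finset.sum_range_succ (fun i => g i - h i), Finset.sum_range_succ (fun i => h (i+1) - g i)]
    have : (∑ i ∈ Finset.range (k + 1), (g i - h i)) + (g (k+1) - h (k+1)) +
        ((∑ i ∈ Finset.range k, (h (i + 1) - g i)) + (h (k+1) - g k))
        = ((∑ i ∈ Finset.range (k + 1), (g i - h i)) + ∑ i ∈ Finset.range k, (h (i + 1) - g i))
          + (g (k+1) - g k) := by ring
    rw [this, ih]; ring

lemma stepInt_const (β : ℝ → ℝ) (P : RDSPartition a b) (c : ℝ) :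
    stepInt a b β P (fun _ => c) = c * (β b - β a) := by
  unfold stepInt muPt muIoo
  rw [← Finset.mul_sum, ← Finset.mul_sum, ← mul_add,
    tele_sum (fun i => rLim b β (P.x i)) (fun i => lLim a β (P.x i)) P.n]
  have h1 : rLim b β (P.x P.n) = β b := by rw [P.last]; simp [rLim]
  have h2 : lLim a β (P.x 0) = β a := by rw [P.first]; simp [lLim]
  rw [h1, h2]

lemma stepInt_sub_f (β : ℝ → ℝ) (P : RDSPartition a b) (u v : ℝ → ℝ) :
    stepInt a b β P (fun t => u t - v t) = stepInt a b β P u - stepInt a b β P v := by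
  unfold stepInt
  simp only [sub_mul, Finset.sum_sub_distrib]
  ring

/-- stepInt only depends on the integrator on `[a,b]` (if being compared to a monotone one) -/
lemma stepInt_clf {β : ℝ → ℝ} (hβ : MonotoneOn β (Set.Icc a b)) (hab : a < b)
    (P : RDSPartition a b) (u : ℝ → ℝ) :
    stepInt a b β P u = stepInt a b (clf a b β) P u := by
  unfold stepInt
  congr 1
  · refine Finset.sum_congr rfl fun i hi => ?_
    have hx := P.x_mem (Nat.lt_succ_iff.1 (Finset.mem_range.1 hi))
    unfold muPt
    rw [rLim_eqOn (clf_mono hβ hab.le) (clf_eqOn β) hx,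
      lLim_eqOn (clf_mono hβ hab.le) (clf_eqOn β) hx]
  · refine Finset.sum_congr rfl fun i hi => ?_
    have hi' := Finset.mem_range.1 hi
    have hx1 := P.x_mem hi'.le
    have hx2 := P.x_mem hi'
    unfold muIoo
    rw [rLim_eqOn (clf_mono hβ hab.le) (clf_eqOn β) hx1,
      lLim_eqOn (clf_mono hβ hab.le) (clf_eqOn β) hx2]

lemma stepInt_congr {β γ : ℝ → ℝ} (hβ : MonotoneOn β (Set.Icc a b)) (hab : a < b)
    (h : Set.EqOn β γ (Set.Icc a b)) (P : RDSPartition a b) (u : ℝ → ℝ) :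
    stepInt a b β P u = stepInt a b γ P u := by
  have hγ : MonotoneOn γ (Set.Icc a b) := fun x hx y hy hxy => by
    rw [← h hx, ← h hy]; exact hβ hx hy hxy
  have : clf a b β = clf a b γ := funext fun t => h (cl_mem hab.le t)
  rw [stepInt_clf hβ hab, stepInt_clf hγ hab, this]

/-- additivity in the integrator -/
lemma stepInt_add_int {β γ : ℝ → ℝ} (hβ : MonotoneOn β (Set.Icc a b))
    (hγ : MonotoneOn γ (Set.Icc a b)) (hab : a < b) (P : RDSPartition a b) (u : ℝ → ℝ) :
    stepInt a b (fun t => β t + γ t) P u = stepInt a b β P u + stepInt a b γ P u := by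
  have hsum : MonotoneOn (fun t => β t + γ t) (Set.Icc a b) := fun x hx y hy hxy =>
    add_le_add (hβ hx hy hxy) (hγ hx hy hxy)
  rw [stepInt_clf hsum hab, stepInt_clf hβ hab, stepInt_clf hγ hab, clf_add]
  unfold stepInt
  have hq := clf_mono hβ hab.le
  have hr := clf_mono hγ hab.le
  have e1 : ∀ i ∈ Finset.range (P.n + 1),
      u (P.x i) * muPt a b (fun t => clf a b β t + clf a b γ t) (P.x i)
        = u (P.x i) * muPt a b (clf a b β) (P.x i) + u (P.x i) * muPt a b (clf a b γ) (P.x i) :=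
    fun i _ => by rw [muPt_add hq hr]; ring
  have e2 : ∀ i ∈ Finset.range P.n,
      u ((P.x i + P.x (i+1)) / 2) * muIoo a b (fun t => clf a b β t + clf a b γ t) (P.x i) (P.x (i+1))
        = u ((P.x i + P.x (i+1)) / 2) * muIoo a b (clf a b β) (P.x i) (P.x (i+1))
          + u ((P.x i + P.x (i+1)) / 2) * muIoo a b (clf a b γ) (P.x i) (P.x (i+1)) :=
    fun i _ => by rw [muIoo_add hq hr]; ring
  rw [Finset.sum_congr rfl e1, Finset.sum_congr rfl e2, Finset.sum_add_distrib,
    Finset.sum_add_distrib]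
  ring

end Aux2
noncomputable section Aux3
open MeasureTheory

variable {a b : ℝ} {β γ δ : ℝ → ℝ}

lemma MonotoneOn.addOn (hβ : MonotoneOn β (Set.Icc a b)) (hγ : MonotoneOn γ (Set.Icc a b)) :
    MonotoneOn (fun t => β t + γ t) (Set.Icc a b) := fun x hx y hy hxy =>
  add_le_add (hβ hx hy hxy) (hγ hx hy hxy)

lemma muPt_clf (hβ : MonotoneOn β (Set.Icc a b)) (hab : a < b) {t : ℝ} (ht : t ∈ Set.Icc a b) :
    muPt a b β t = muPt a b (clf a b β) t := by
  unfold muPt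
  rw [rLim_eqOn (clf_mono hβ hab.le) (clf_eqOn β) ht, lLim_eqOn (clf_mono hβ hab.le) (clf_eqOn β) ht]

lemma muIoo_clf (hβ : MonotoneOn β (Set.Icc a b)) (hab : a < b) {c d : ℝ}
    (hc : c ∈ Set.Icc a b) (hd : d ∈ Set.Icc a b) :
    muIoo a b β c d = muIoo a b (clf a b β) c d := by
  unfold muIoo
  rw [rLim_eqOn (clf_mono hβ hab.le) (clf_eqOn β) hc, lLim_eqOn (clf_mono hβ hab.le) (clf_eqOn β) hd]

lemma muPt_nonneg' (hβ : MonotoneOn β (Set.Icc a b)) (hab : a < b) {t : ℝ}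
    (ht : t ∈ Set.Icc a b) : 0 ≤ muPt a b β t := by
  rw [muPt_clf hβ hab ht]; exact muPt_nonneg (clf_mono hβ hab.le) t

lemma muIoo_nonneg' (hβ : MonotoneOn β (Set.Icc a b)) (hab : a < b) {c d : ℝ}
    (hc : c ∈ Set.Icc a b) (hd : d ∈ Set.Icc a b) (hcd : c < d) : 0 ≤ muIoo a b β c d := by
  rw [muIoo_clf hβ hab hc hd]; exact muIoo_nonneg (clf_mono hβ hab.le) hcd

lemma muPt_add' (hβ : MonotoneOn β (Set.Icc a b)) (hγ : MonotoneOn γ (Set.Icc a b))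
    (hab : a < b) {t : ℝ} (ht : t ∈ Set.Icc a b) :
    muPt a b (fun s => β s + γ s) t = muPt a b β t + muPt a b γ t := by
  rw [muPt_clf (hβ.addOn hγ) hab ht, muPt_clf hβ hab ht, muPt_clf hγ hab ht, clf_add,
    muPt_add (clf_mono hβ hab.le) (clf_mono hγ hab.le)]

lemma muIoo_add' (hβ : MonotoneOn β (Set.Icc a b)) (hγ : MonotoneOn γ (Set.Icc a b))
    (hab : a < b) {c d : ℝ} (hc : c ∈ Set.Icc a b) (hd : d ∈ Set.Icc a b) :
    muIoo a b (fun s => β s + γ s) c d = muIoo a b β c d + muIoo a b γ c d := by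
  rw [muIoo_clf (hβ.addOn hγ) hab hc hd, muIoo_clf hβ hab hc hd, muIoo_clf hγ hab hc hd, clf_add,
    muIoo_add (clf_mono hβ hab.le) (clf_mono hγ hab.le)]

lemma muPt_le (hβ : MonotoneOn β (Set.Icc a b)) (hγ : MonotoneOn γ (Set.Icc a b))
    (hd : MonotoneOn (fun t => γ t - β t) (Set.Icc a b)) (hab : a < b) {t : ℝ}
    (ht : t ∈ Set.Icc a b) : muPt a b β t ≤ muPt a b γ t := by
  have h1 : γ = fun s => β s + (γ s - β s) := funext fun s => by ring
  calc muPt a b β t ≤ muPt a b β t + muPt a b (fun s => γ s - β s) t := by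
        have := muPt_nonneg' hd hab ht; linarith
    _ = muPt a b γ t := by
        rw [← muPt_add' hβ hd hab ht]; exact congrFun (congrArg (muPt a b) h1.symm) t

lemma muIoo_le (hβ : MonotoneOn β (Set.Icc a b)) (hγ : MonotoneOn γ (Set.Icc a b))
    (hd : MonotoneOn (fun t => γ t - β t) (Set.Icc a b)) (hab : a < b) {c d : ℝ}
    (hc : c ∈ Set.Icc a b) (hd' : d ∈ Set.Icc a b) (hcd : c < d) :
    muIoo a b β c d ≤ muIoo a b γ c d := by
  have h1 : γ = fun s => β s + (γ s - β s) := funext fun s => by ring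
  calc muIoo a b β c d ≤ muIoo a b β c d + muIoo a b (fun s => γ s - β s) c d := by
        have := muIoo_nonneg' hd hab hc hd' hcd; linarith
    _ = muIoo a b γ c d := by
        rw [← muIoo_add' hβ hd hab hc hd']
        exact congrFun (congrFun (congrArg (muIoo a b) h1.symm) c) d

lemma abs_muPt_sub_le (hβ : MonotoneOn β (Set.Icc a b)) (hγ : MonotoneOn γ (Set.Icc a b))
    (hδ : MonotoneOn δ (Set.Icc a b))
    (h1 : MonotoneOn (fun t => δ t - β t + γ t) (Set.Icc a b))
    (h2 : MonotoneOn (fun t => δ t + β t - γ t) (Set.Icc a b)) (hab : a < b) {t : ℝ}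
    (ht : t ∈ Set.Icc a b) : |muPt a b β t - muPt a b γ t| ≤ muPt a b δ t := by
  rw [abs_sub_le_iff]
  constructor
  · have e : MonotoneOn (fun s => (γ s + δ s) - β s) (Set.Icc a b) := by
      have : (fun s => (γ s + δ s) - β s) = (fun s => δ s - β s + γ s) := funext fun s => by ring
      rw [this]; exact h1
    have := muPt_le hβ (hγ.addOn hδ) e hab ht
    rw [muPt_add' hγ hδ hab ht] at this; linarith
  · have e : MonotoneOn (fun s => (β s + δ s) - γ s) (Set.Icc a b) := by
      have : (fun s => (β s + δ s) - γ s) = (fun s => δ s + β s - γ s) := funext fun s => by ring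
      rw [this]; exact h2
    have := muPt_le hγ (hβ.addOn hδ) e hab ht
    rw [muPt_add' hβ hδ hab ht] at this; linarith

lemma abs_muIoo_sub_le (hβ : MonotoneOn β (Set.Icc a b)) (hγ : MonotoneOn γ (Set.Icc a b))
    (hδ : MonotoneOn δ (Set.Icc a b))
    (h1 : MonotoneOn (fun t => δ t - β t + γ t) (Set.Icc a b))
    (h2 : MonotoneOn (fun t => δ t + β t - γ t) (Set.Icc a b)) (hab : a < b) {c d : ℝ}
    (hc : c ∈ Set.Icc a b) (hd' : d ∈ Set.Icc a b) (hcd : c < d) :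
    |muIoo a b β c d - muIoo a b γ c d| ≤ muIoo a b δ c d := by
  rw [abs_sub_le_iff]
  constructor
  · have e : MonotoneOn (fun s => (γ s + δ s) - β s) (Set.Icc a b) := by
      have : (fun s => (γ s + δ s) - β s) = (fun s => δ s - β s + γ s) := funext fun s => by ring
      rw [this]; exact h1
    have := muIoo_le hβ (hγ.addOn hδ) e hab hc hd' hcd
    rw [muIoo_add' hγ hδ hab hc hd'] at this; linarith
  · have e : MonotoneOn (fun s => (β s + δ s) - γ s) (Set.Icc a b) := by
      have : (fun s => (β s + δ s) - γ s) = (fun s => δ s + β s - γ s) := funext fun s => by ring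
      rw [this]; exact h2
    have := muIoo_le hγ (hβ.addOn hδ) e hab hc hd' hcd
    rw [muIoo_add' hβ hδ hab hc hd'] at this; linarith

/-- generic termwise comparison of step integrals over the same partition -/
lemma stepInt_le_term {u v : ℝ → ℝ} (P : RDSPartition a b)
    (h1 : ∀ i ≤ P.n, u (P.x i) * muPt a b β (P.x i) ≤ v (P.x i) * muPt a b γ (P.x i))
    (h2 : ∀ i < P.n, u ((P.x i + P.x (i+1)) / 2) * muIoo a b β (P.x i) (P.x (i+1))
        ≤ v ((P.x i + P.x (i+1)) / 2) * muIoo a b γ (P.x i) (P.x (i+1))) :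
    stepInt a b β P u ≤ stepInt a b γ P v := by
  unfold stepInt
  refine add_le_add (Finset.sum_le_sum fun i hi => ?_) (Finset.sum_le_sum fun i hi => ?_)
  · exact h1 i (Nat.lt_succ_iff.1 (Finset.mem_range.1 hi))
  · exact h2 i (Finset.mem_range.1 hi)

lemma stepInt_nonneg (hβ : MonotoneOn β (Set.Icc a b)) (hab : a < b) (P : RDSPartition a b)
    {u : ℝ → ℝ} (hu : ∀ t ∈ Set.Icc a b, 0 ≤ u t) : 0 ≤ stepInt a b β P u := by
  have h0 : stepInt a b β P (fun _ => (0:ℝ)) = 0 := by rw [stepInt_const]; ring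
  rw [← h0]
  refine stepInt_le_term P (fun i hi => ?_) (fun i hi => ?_)
  · simp only [zero_mul]
    exact mul_nonneg (hu _ (P.x_mem hi)) (muPt_nonneg' hβ hab (P.x_mem hi))
  · simp only [zero_mul]
    exact mul_nonneg (hu _ (P.mid_mem_Icc hi))
      (muIoo_nonneg' hβ hab (P.x_mem hi.le) (P.x_mem hi) (P.mono i hi))

/-- same-partition monotonicity in the integrand -/
lemma stepInt_mono_f (hβ : MonotoneOn β (Set.Icc a b)) (hab : a < b) (P : RDSPartition a b)
    {u v : ℝ → ℝ} (huv : ∀ t ∈ Set.Icc a b, u t ≤ v t) :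
    stepInt a b β P u ≤ stepInt a b β P v := by
  refine stepInt_le_term P (fun i hi => ?_) (fun i hi => ?_)
  · exact mul_le_mul_of_nonneg_right (huv _ (P.x_mem hi)) (muPt_nonneg' hβ hab (P.x_mem hi))
  · exact mul_le_mul_of_nonneg_right (huv _ (P.mid_mem_Icc hi))
      (muIoo_nonneg' hβ hab (P.x_mem hi.le) (P.x_mem hi) (P.mono i hi))

/-- dominated comparison in the integrator, for nonnegative integrands -/
lemma stepInt_mono_int (hβ : MonotoneOn β (Set.Icc a b)) (hγ : MonotoneOn γ (Set.Icc a b))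
    (hd : MonotoneOn (fun t => γ t - β t) (Set.Icc a b)) (hab : a < b) (P : RDSPartition a b)
    {u : ℝ → ℝ} (hu : ∀ t ∈ Set.Icc a b, 0 ≤ u t) :
    stepInt a b β P u ≤ stepInt a b γ P u := by
  refine stepInt_le_term P (fun i hi => ?_) (fun i hi => ?_)
  · exact mul_le_mul_of_nonneg_left (muPt_le hβ hγ hd hab (P.x_mem hi)) (hu _ (P.x_mem hi))
  · exact mul_le_mul_of_nonneg_left
      (muIoo_le hβ hγ hd hab (P.x_mem hi.le) (P.x_mem hi) (P.mono i hi))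
      (hu _ (P.mid_mem_Icc hi))

/-- key signed inequality: `∫ w dβ − ∫ w dγ ≤ ∫ w' dδ` when `|μ_β − μ_γ| ≤ μ_δ` and `|w| ≤ w'` -/
lemma stepInt_signed_le (hβ : MonotoneOn β (Set.Icc a b)) (hγ : MonotoneOn γ (Set.Icc a b))
    (hδ : MonotoneOn δ (Set.Icc a b))
    (h1 : MonotoneOn (fun t => δ t - β t + γ t) (Set.Icc a b))
    (h2 : MonotoneOn (fun t => δ t + β t - γ t) (Set.Icc a b)) (hab : a < b)
    (P : RDSPartition a b) {w w' : ℝ → ℝ} (hw : ∀ t ∈ Set.Icc a b, |w t| ≤ w' t) :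
    stepInt a b β P w - stepInt a b γ P w ≤ stepInt a b δ P w' := by
  have key : ∀ (s : ℝ), s ∈ Set.Icc a b → ∀ (p q d : ℝ), |p - q| ≤ d →
      w s * p - w s * q ≤ w' s * d := by
    intro s hs p q d hpq
    have h1' : w s * p - w s * q = w s * (p - q) := by ring
    rw [h1']
    calc w s * (p - q) ≤ |w s * (p - q)| := le_abs_self _
      _ = |w s| * |p - q| := abs_mul _ _
      _ ≤ w' s * d := by
          refine mul_le_mul (hw s hs) hpq (abs_nonneg _) ((abs_nonneg (w s)).trans (hw s hs))
  unfold stepInt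
  have e : ∀ (A B C D E F : ℝ), (A - C) + (B - D) ≤ E + F → A + B - (C + D) ≤ E + F := by
    intro A B C D E F h; linarith
  apply e
  rw [← Finset.sum_sub_distrib, ← Finset.sum_sub_distrib]
  refine add_le_add (Finset.sum_le_sum fun i hi => ?_) (Finset.sum_le_sum fun i hi => ?_)
  · have hi' := Nat.lt_succ_iff.1 (Finset.mem_range.1 hi)
    exact key _ (P.x_mem hi') _ _ _ (abs_muPt_sub_le hβ hγ hδ h1 h2 hab (P.x_mem hi'))
  · have hi' := Finset.mem_range.1 hi
    exact key _ (P.mid_mem_Icc hi') _ _ _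
      (abs_muIoo_sub_le hβ hγ hδ h1 h2 hab (P.x_mem hi'.le) (P.x_mem hi') (P.mono i hi'))

end Aux3
noncomputable section Aux4
open MeasureTheory

variable {a b : ℝ} {q : ℝ → ℝ}

lemma leftLim_flatL (hq : Monotone q) (hL : ∀ x, x ≤ a → q x = q a) :
    Function.leftLim q a = q a := by
  refine leftLim_eq_of_tendsto ?_
  have hev : q =ᶠ[nhdsWithin a (Set.Iio a)] (fun _ => q a) := by
    filter_upwards [self_mem_nhdsWithin] with s hs
    exact hL s (le_of_lt hs)
  exact Filter.Tendsto.congr' hev.symm tendsto_const_nhds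

lemma rightLim_flatR (hq : Monotone q) (hR : ∀ x, b ≤ x → q x = q b) :
    Function.rightLim q b = q b := by
  refine rightLim_eq_of_tendsto ?_
  have hev : q =ᶠ[nhdsWithin b (Set.Ioi b)] (fun _ => q b) := by
    filter_upwards [self_mem_nhdsWithin] with s hs
    exact hR s (le_of_lt hs)
  exact Filter.Tendsto.congr' hev.symm tendsto_const_nhds

lemma leftLim_rightLim' (hq : Monotone q) (x : ℝ) :
    Function.leftLim (Function.rightLim q) x = Function.leftLim q x := by
  refine leftLim_eq_of_tendsto ?_
  refine tendsto_of_tendsto_of_tendsto_of_le_of_le' (hq.tendsto_leftLim x)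
    (tendsto_const_nhds : Filter.Tendsto (fun _ => Function.leftLim q x) _ _) ?_ ?_
  · exact Filter.Eventually.of_forall fun y => hq.le_rightLim le_rfl
  · filter_upwards [self_mem_nhdsWithin] with y hy
    have hy' : y < x := hy
    have hz1 : y < (y + x) / 2 := by linarith
    have hz2 : (y + x) / 2 < x := by linarith
    exact (hq.rightLim_le hz1).trans (hq.le_leftLim hz2)

lemma rLim_eq_rightLim (hq : Monotone q) (hR : ∀ x, b ≤ x → q x = q b) {t : ℝ} (ht : t ≤ b) :
    rLim b q t = Function.rightLim q t := by
  unfold rLim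
  by_cases h : t < b
  · rw [if_pos h]
  · rw [if_neg h]
    have : t = b := le_antisymm ht (not_lt.1 h)
    subst this
    exact (rightLim_flatR hq hR).symm

lemma lLim_eq_leftLim (hq : Monotone q) (hL : ∀ x, x ≤ a → q x = q a) {t : ℝ} (ht : a ≤ t) :
    lLim a q t = Function.leftLim q t := by
  unfold lLim
  by_cases h : a < t
  · rw [if_pos h]
  · rw [if_neg h]
    have : t = a := le_antisymm (not_lt.1 h) ht
    subst this
    exact (leftLim_flatL hq hL).symm

lemma smeas_singleton (hq : Monotone q) (hL : ∀ x, x ≤ a → q x = q a)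
    (hR : ∀ x, b ≤ x → q x = q b) {t : ℝ} (ht : t ∈ Set.Icc a b) :
    hq.stieltjesFunction.measure {t} = ENNReal.ofReal (muPt a b q t) := by
  rw [StieltjesFunction.measure_singleton]
  have hcoe : ⇑hq.stieltjesFunction = Function.rightLim q := funext hq.stieltjesFunction_eq
  rw [hcoe, leftLim_rightLim' hq]
  unfold muPt
  rw [rLim_eq_rightLim hq hR ht.2, lLim_eq_leftLim hq hL ht.1]

lemma smeas_Ioo (hq : Monotone q) (hL : ∀ x, x ≤ a → q x = q a)
    (hR : ∀ x, b ≤ x → q x = q b) {c d : ℝ} (hc : c ∈ Set.Icc a b) (hd : d ∈ Set.Icc a b) :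
    hq.stieltjesFunction.measure (Set.Ioo c d) = ENNReal.ofReal (muIoo a b q c d) := by
  rw [StieltjesFunction.measure_Ioo]
  have hcoe : ⇑hq.stieltjesFunction = Function.rightLim q := funext hq.stieltjesFunction_eq
  rw [hcoe, leftLim_rightLim' hq]
  unfold muIoo
  rw [rLim_eq_rightLim hq hR hc.2, lLim_eq_leftLim hq hL hd.1]

/-- Integral of a function over a singleton -/
lemma int_singleton {μ : Measure ℝ} (hfin : μ {t} ≠ ⊤) (u : ℝ → ℝ) :
    IntegrableOn u {t} μ ∧ ∫ s in ({t} : Set ℝ), u s ∂μ = (μ {t}).toReal * u t := by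
  have h1 : Set.EqOn (fun _ => u t) u {t} := fun s hs => by
    rw [Set.mem_singleton_iff] at hs; rw [hs]
  constructor
  · exact (integrableOn_const hfin).congr_fun h1 (measurableSet_singleton t)
  · rw [setIntegral_congr_fun (measurableSet_singleton t) h1.symm, setIntegral_const]
    simp [smul_eq_mul, Measure.real]

/-- Integral over an open interval where `u` is constant -/
lemma int_Ioo_const {μ : Measure ℝ} {c d : ℝ} (hfin : μ (Set.Ioo c d) ≠ ⊤) {u : ℝ → ℝ} {v : ℝ}
    (hc : ∀ s ∈ Set.Ioo c d, u s = v) :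
    IntegrableOn u (Set.Ioo c d) μ ∧ ∫ s in Set.Ioo c d, u s ∂μ = (μ (Set.Ioo c d)).toReal * v := by
  have h1 : Set.EqOn (fun _ => v) u (Set.Ioo c d) := fun s hs => (hc s hs).symm
  constructor
  · exact (integrableOn_const hfin).congr_fun h1 measurableSet_Ioo
  · rw [setIntegral_congr_fun measurableSet_Ioo h1.symm, setIntegral_const]
    simp [smul_eq_mul, Measure.real]

/-- KEY: the RDS step integral equals the Lebesgue–Stieltjes integral -/
lemma step_eq_integral (hab : a < b) (hq : Monotone q) (hL : ∀ x, x ≤ a → q x = q a)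
    (hR : ∀ x, b ≤ x → q x = q b) (P : RDSPartition a b) {u : ℝ → ℝ}
    (hu : IsStepOn a b u P) :
    IntegrableOn u (Set.Icc a b) hq.stieltjesFunction.measure ∧
    ∫ t in Set.Icc a b, u t ∂hq.stieltjesFunction.measure = stepInt a b q P u := by
  set μ := hq.stieltjesFunction.measure with hμ
  have hsing : ∀ t ∈ Set.Icc a b, IntegrableOn u {t} μ ∧
      ∫ s in ({t} : Set ℝ), u s ∂μ = u t * muPt a b q t := by
    intro t ht
    have h1 := smeas_singleton hq hL hR ht
    have h2 : μ {t} ≠ ⊤ := by rw [h1]; exact ENNReal.ofReal_ne_top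
    obtain ⟨hi, hv⟩ := int_singleton h2 u
    refine ⟨hi, ?_⟩
    rw [hv, h1, ENNReal.toReal_ofReal (muPt_nonneg hq t)]; ring
  have hopen : ∀ i, i < P.n → IntegrableOn u (Set.Ioo (P.x i) (P.x (i+1))) μ ∧
      ∫ s in Set.Ioo (P.x i) (P.x (i+1)), u s ∂μ
        = u ((P.x i + P.x (i+1)) / 2) * muIoo a b q (P.x i) (P.x (i+1)) := by
    intro i hi
    have h1 := smeas_Ioo hq hL hR (P.x_mem hi.le) (P.x_mem hi)
    have h2 : μ (Set.Ioo (P.x i) (P.x (i+1))) ≠ ⊤ := by rw [h1]; exact ENNReal.ofReal_ne_top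
    obtain ⟨hint, hv⟩ := int_Ioo_const h2 (hu i hi)
    refine ⟨hint, ?_⟩
    rw [hv, h1, ENNReal.toReal_ofReal (muIoo_nonneg hq (P.mono i hi))]; ring
  have main : ∀ k, k ≤ P.n → IntegrableOn u (Set.Icc a (P.x k)) μ ∧
      ∫ t in Set.Icc a (P.x k), u t ∂μ
        = (∑ i ∈ Finset.range (k+1), u (P.x i) * muPt a b q (P.x i))
          + ∑ i ∈ Finset.range k, u ((P.x i + P.x (i+1))/2) * muIoo a b q (P.x i) (P.x (i+1)) := by
    intro k
    induction k with
    | zero =>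
      intro _
      have h := hsing (P.x 0) (P.x_mem (Nat.zero_le _))
      have e : Set.Icc a (P.x 0) = {P.x 0} := by rw [P.first, Set.Icc_self]
      rw [e]
      refine ⟨h.1, ?_⟩
      rw [h.2]
      simp
    | succ k ih =>
      intro hk1
      have hkn : k < P.n := Nat.lt_of_succ_le hk1
      obtain ⟨ihi, ihv⟩ := ih hkn.le
      have hax : a ≤ P.x k := (P.x_mem hkn.le).1
      have hxx : P.x k < P.x (k+1) := P.mono k hkn
      have hdec1 : Set.Icc a (P.x (k+1)) = Set.Icc a (P.x k) ∪ Set.Ioc (P.x k) (P.x (k+1)) :=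
        (Set.Icc_union_Ioc_eq_Icc hax hxx.le).symm
      have hdec2 : Set.Ioc (P.x k) (P.x (k+1))
          = Set.Ioo (P.x k) (P.x (k+1)) ∪ {P.x (k+1)} := by
        rw [← Set.Icc_self]
        exact (Set.Ioo_union_Icc_eq_Ioc hxx le_rfl).symm
      obtain ⟨hoi, hov⟩ := hopen k hkn
      obtain ⟨hsi, hsv⟩ := hsing (P.x (k+1)) (P.x_mem hk1)
      have hIoc_int : IntegrableOn u (Set.Ioc (P.x k) (P.x (k+1))) μ := by
        rw [hdec2]; exact hoi.union hsi
      have hdisj1 : Disjoint (Set.Icc a (P.x k)) (Set.Ioc (P.x k) (P.x (k+1))) :=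
        Set.disjoint_left.2 fun t h1 h2 => absurd h1.2 (not_le.2 h2.1)
      have hdisj2 : Disjoint (Set.Ioo (P.x k) (P.x (k+1))) ({P.x (k+1)} : Set ℝ) :=
        Set.disjoint_singleton_right.2 (by simp)
      constructor
      · rw [hdec1]; exact ihi.union hIoc_int
      · rw [hdec1, setIntegral_union hdisj1 measurableSet_Ioc ihi hIoc_int, ihv, hdec2,
          setIntegral_union hdisj2 (measurableSet_singleton _) hoi hsi, hov, hsv,
          Finset.sum_range_succ (fun i => u (P.x i) * muPt a b q (P.x i)) (k+1),
          Finset.sum_range_succ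
            (fun i => u ((P.x i + P.x (i+1))/2) * muIoo a b q (P.x i) (P.x (i+1))) k]
        ring
  obtain ⟨hi, hv⟩ := main P.n le_rfl
  rw [P.last] at hi hv
  exact ⟨hi, hv⟩

lemma smeas_Icc_ne_top (hq : Monotone q) :
    hq.stieltjesFunction.measure (Set.Icc a b) ≠ ⊤ := by
  rw [StieltjesFunction.measure_Icc]
  exact ENNReal.ofReal_ne_top

end Aux4
noncomputable section Aux5
open MeasureTheory

variable {a b : ℝ} {β γ : ℝ → ℝ}

lemma clf_flatL (β : ℝ → ℝ) (hab : a ≤ b) : ∀ x, x ≤ a → clf a b β x = clf a b β a :=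
  fun x hx => by unfold clf; rw [cl_of_le hx, cl_of_le le_rfl]

lemma clf_flatR (β : ℝ → ℝ) (hab : a ≤ b) : ∀ x, b ≤ x → clf a b β x = clf a b β b :=
  fun x hx => by unfold clf; rw [cl_of_ge hab hx, cl_of_ge hab le_rfl]

/-- the Lebesgue–Stieltjes measure attached to a monotone-on-`[a,b]` integrator -/
def smeasure (hβ : MonotoneOn β (Set.Icc a b)) (hab : a ≤ b) : Measure ℝ :=
  (clf_mono hβ hab).stieltjesFunction.measure

lemma smeasure_ne_top (hβ : MonotoneOn β (Set.Icc a b)) (hab : a ≤ b) :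
    smeasure hβ hab (Set.Icc a b) ≠ ⊤ := smeas_Icc_ne_top _

/-- step integrals are Stieltjes integrals -/
lemma stepInt_eq_int (hβ : MonotoneOn β (Set.Icc a b)) (hab : a < b) (P : RDSPartition a b)
    {u : ℝ → ℝ} (hu : IsStepOn a b u P) :
    IntegrableOn u (Set.Icc a b) (smeasure hβ hab.le) ∧
    ∫ t in Set.Icc a b, u t ∂(smeasure hβ hab.le) = stepInt a b β P u := by
  rw [stepInt_clf hβ hab]
  exact step_eq_integral hab (clf_mono hβ hab.le) (clf_flatL β hab.le) (clf_flatR β hab.le) P hu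

/-- cross-partition comparison of step integrals -/
lemma stepInt_le_stepInt (hβ : MonotoneOn β (Set.Icc a b)) (hab : a < b)
    {P Q : RDSPartition a b} {u v : ℝ → ℝ} (hu : IsStepOn a b u P) (hv : IsStepOn a b v Q)
    (huv : ∀ t ∈ Set.Icc a b, u t ≤ v t) :
    stepInt a b β P u ≤ stepInt a b β Q v := by
  obtain ⟨hui, huv'⟩ := stepInt_eq_int hβ hab P hu
  obtain ⟨hvi, hvv'⟩ := stepInt_eq_int hβ hab Q hv
  rw [← huv', ← hvv']
  exact setIntegral_mono_on hui hvi measurableSet_Icc huv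

/-! ### refinements -/

/-- the partition associated to a finite set of nodes -/
def partOf (s : Finset ℝ) (ha : a ∈ s) (hb : b ∈ s) (hs : ∀ x ∈ s, x ∈ Set.Icc a b) :
    RDSPartition a b where
  n := (s.sort (· ≤ ·)).length - 1
  x := fun i => (s.sort (· ≤ ·)).getD i b
  mono := by
    intro i hi
    have hlen : 0 < (s.sort (· ≤ ·)).length := by
      rw [Finset.length_sort]; exact Finset.card_pos.2 ⟨a, ha⟩
    have h1 : i < (s.sort (· ≤ ·)).length := by omega
    have h2 : i + 1 < (s.sort (· ≤ ·)).length := by omega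
    beta_reduce
    rw [List.getD_eq_getElem _ _ h1, List.getD_eq_getElem _ _ h2]
    exact (Finset.sortedLT_sort s).strictMono_get
      (show (⟨i, h1⟩ : Fin _) < ⟨i+1, h2⟩ by simp)
  first := by
    have hlen : 0 < (s.sort (· ≤ ·)).length := by
      rw [Finset.length_sort]; exact Finset.card_pos.2 ⟨a, ha⟩
    beta_reduce
    rw [List.getD_eq_getElem _ _ hlen]
    have hmem : (s.sort (· ≤ ·))[0] ∈ s := Finset.mem_sort (· ≤ ·) |>.1 (List.getElem_mem _)
    refine le_antisymm ?_ (hs _ hmem).1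
    obtain ⟨j, hj, hja⟩ := List.mem_iff_getElem.1 ((Finset.mem_sort (· ≤ ·)).2 ha)
    rw [← hja]
    rcases Nat.eq_zero_or_pos j with h | h
    · subst h; exact le_rfl
    · exact ((Finset.sortedLT_sort s).strictMono_get
        (show (⟨0, hlen⟩ : Fin _) < ⟨j, hj⟩ by simpa using h)).le
  last := by
    have hlen : 0 < (s.sort (· ≤ ·)).length := by
      rw [Finset.length_sort]; exact Finset.card_pos.2 ⟨a, ha⟩
    have hl : (s.sort (· ≤ ·)).length - 1 < (s.sort (· ≤ ·)).length := by omega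
    beta_reduce
    rw [List.getD_eq_getElem _ _ hl]
    have hmem : (s.sort (· ≤ ·))[(s.sort (· ≤ ·)).length - 1] ∈ s :=
      Finset.mem_sort (· ≤ ·) |>.1 (List.getElem_mem _)
    refine le_antisymm (hs _ hmem).2 ?_
    obtain ⟨j, hj, hjb⟩ := List.mem_iff_getElem.1 ((Finset.mem_sort (· ≤ ·)).2 hb)
    rw [← hjb]
    rcases Nat.lt_or_ge j ((s.sort (· ≤ ·)).length - 1) with h | h
    · exact ((Finset.sortedLT_sort s).strictMono_get
        (show (⟨j, hj⟩ : Fin _) < ⟨_, hl⟩ by simpa using h)).le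
    · have : j = (s.sort (· ≤ ·)).length - 1 := by omega
      subst this; exact le_rfl

lemma partOf_x_mem (s : Finset ℝ) (ha : a ∈ s) (hb : b ∈ s) (hs : ∀ x ∈ s, x ∈ Set.Icc a b)
    {i : ℕ} (hi : i ≤ (partOf s ha hb hs).n) : (partOf s ha hb hs).x i ∈ s := by
  have hlen : 0 < (s.sort (· ≤ ·)).length := by
    rw [Finset.length_sort]; exact Finset.card_pos.2 ⟨a, ha⟩
  have h1 : i < (s.sort (· ≤ ·)).length := by
    have : (partOf s ha hb hs).n = (s.sort (· ≤ ·)).length - 1 := rfl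
    omega
  show (s.sort (· ≤ ·)).getD i b ∈ s
  rw [List.getD_eq_getElem _ _ h1]
  exact Finset.mem_sort (· ≤ ·) |>.1 (List.getElem_mem _)

lemma partOf_exhaust (s : Finset ℝ) (ha : a ∈ s) (hb : b ∈ s) (hs : ∀ x ∈ s, x ∈ Set.Icc a b)
    {y : ℝ} (hy : y ∈ s) : ∃ i ≤ (partOf s ha hb hs).n, (partOf s ha hb hs).x i = y := by
  obtain ⟨j, hj, hjy⟩ := List.mem_iff_getElem.1 ((Finset.mem_sort (· ≤ ·)).2 hy)
  refine ⟨j, by show j ≤ (s.sort (· ≤ ·)).length - 1; omega, ?_⟩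
  show (s.sort (· ≤ ·)).getD j b = y
  rw [List.getD_eq_getElem _ _ hj]; exact hjy

/-- if every node of `P` is a node of `R`, a step function on `P` is a step function on `R` -/
lemma IsStepOn.refine {P R : RDSPartition a b} {u : ℝ → ℝ} (hu : IsStepOn a b u P)
    (h : ∀ i ≤ P.n, ∃ j ≤ R.n, R.x j = P.x i) : IsStepOn a b u R := by
  intro k hk s hs
  classical
  -- find the interval of P containing (R.x k, R.x (k+1))
  set F := (Finset.range (P.n + 1)).filter (fun i => P.x i ≤ R.x k) with hF
  have h0 : 0 ∈ F := by
    simp only [hF, Finset.mem_filter, Finset.mem_range]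
    refine ⟨by omega, ?_⟩
    have h2 := R.x_le_x (Nat.zero_le k) hk.le
    rw [R.first] at h2
    rw [P.first]
    exact h2
  have hFne : F.Nonempty := ⟨0, h0⟩
  set i := F.max' hFne with hi
  have hiF : i ∈ F := F.max'_mem hFne
  have hin : i ≤ P.n := by
    have := (Finset.mem_filter.1 hiF).1; rw [Finset.mem_range] at this; omega
  have hile : P.x i ≤ R.x k := (Finset.mem_filter.1 hiF).2
  have hilt : i < P.n := by
    rcases eq_or_lt_of_le hin with h' | h'
    · exfalso
      have h1 : P.x i = b := by rw [h', P.last]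
      have h2 : R.x (k+1) ≤ b := by
        have h3 := R.x_le_x hk (le_refl R.n)
        rw [R.last] at h3; exact h3
      have := R.mono k hk
      linarith [hile]
    · exact h'
  have hnext : R.x k < P.x (i+1) := by
    by_contra hcon
    push_neg at hcon
    have : i + 1 ∈ F := by
      simp only [hF, Finset.mem_filter, Finset.mem_range]
      exact ⟨by omega, hcon⟩
    have := F.le_max' _ this
    omega
  have hnext2 : R.x (k+1) ≤ P.x (i+1) := by
    obtain ⟨j, hj, hjx⟩ := h (i+1) hilt
    have hkj : k < j := by
      by_contra hcon
      push_neg at hcon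
      have := R.x_le_x hcon hk.le
      rw [hjx] at this
      linarith
    rw [← hjx]
    exact R.x_le_x hkj hj
  have hsub : Set.Ioo (R.x k) (R.x (k+1)) ⊆ Set.Ioo (P.x i) (P.x (i+1)) := fun t ht =>
    ⟨lt_of_le_of_lt hile ht.1, lt_of_lt_of_le ht.2 hnext2⟩
  have hmid := R.mid_mem hk
  rw [hu i hilt s (hsub hs), hu i hilt _ (hsub hmid)]

/-- common refinement of two partitions -/
lemma common_refine (hab : a < b) (P Q : RDSPartition a b) :
    ∃ R : RDSPartition a b, (∀ u, IsStepOn a b u P → IsStepOn a b u R) ∧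
      (∀ u, IsStepOn a b u Q → IsStepOn a b u R) := by
  classical
  set s := ((Finset.range (P.n + 1)).image P.x) ∪ ((Finset.range (Q.n + 1)).image Q.x) with hsdef
  have ha : a ∈ s := by
    simp only [hsdef, Finset.mem_union, Finset.mem_image]
    exact Or.inl ⟨0, by simp, P.first⟩
  have hb : b ∈ s := by
    simp only [hsdef, Finset.mem_union, Finset.mem_image]
    exact Or.inl ⟨P.n, by simp, P.last⟩
  have hs : ∀ x ∈ s, x ∈ Set.Icc a b := by
    intro x hx
    simp only [hsdef, Finset.mem_union, Finset.mem_image, Finset.mem_range] at hx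
    rcases hx with ⟨i, hi, rfl⟩ | ⟨i, hi, rfl⟩
    · exact P.x_mem (by omega)
    · exact Q.x_mem (by omega)
  refine ⟨partOf s ha hb hs, ?_, ?_⟩
  · intro u hu
    refine hu.refine fun i hi => ?_
    have : P.x i ∈ s := by
      simp only [hsdef, Finset.mem_union, Finset.mem_image, Finset.mem_range]
      exact Or.inl ⟨i, by omega, rfl⟩
    obtain ⟨j, hj, hjx⟩ := partOf_exhaust s ha hb hs this
    exact ⟨j, hj, hjx⟩
  · intro u hu
    refine hu.refine fun i hi => ?_
    have : Q.x i ∈ s := by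
      simp only [hsdef, Finset.mem_union, Finset.mem_image, Finset.mem_range]
      exact Or.inr ⟨i, by omega, rfl⟩
    obtain ⟨j, hj, hjx⟩ := partOf_exhaust s ha hb hs this
    exact ⟨j, hj, hjx⟩

end Aux5
noncomputable section Aux6
open MeasureTheory

variable {a b : ℝ} {β γ : ℝ → ℝ} {f : ℝ → ℝ}

lemma stepInt_indep (hβ : MonotoneOn β (Set.Icc a b)) (hab : a < b) {P R : RDSPartition a b}
    {u : ℝ → ℝ} (hP : IsStepOn a b u P) (hR : IsStepOn a b u R) :
    stepInt a b β P u = stepInt a b β R u := by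
  rw [← (stepInt_eq_int hβ hab P hP).2, ← (stepInt_eq_int hβ hab R hR).2]

lemma isStepOn_map2 {P : RDSPartition a b} {u v : ℝ → ℝ} (hu : IsStepOn a b u P)
    (hv : IsStepOn a b v P) (g : ℝ → ℝ → ℝ) :
    IsStepOn a b (fun t => g (u t) (v t)) P := by
  intro i hi s hs
  simp only
  rw [hu i hi s hs, hv i hi s hs]

lemma isStepOn_comp {P : RDSPartition a b} {u : ℝ → ℝ} (hu : IsStepOn a b u P) (g : ℝ → ℝ) :
    IsStepOn a b (fun t => g (u t)) P := by
  intro i hi s hs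
  simp only
  rw [hu i hi s hs]

/-- membership in the upper set -/
lemma mem_upperSet {P : RDSPartition a b} {u : ℝ → ℝ} (hu : IsStepOn a b u P)
    (hfu : ∀ t ∈ Set.Icc a b, f t ≤ u t) :
    stepInt a b β P u ∈ { r | ∃ (w : ℝ → ℝ) (Q : RDSPartition a b), IsStepOn a b w Q ∧
      (∀ t ∈ Set.Icc a b, f t ≤ w t) ∧ r = stepInt a b β Q w } :=
  ⟨u, P, hu, hfu, rfl⟩

lemma mem_lowerSet {P : RDSPartition a b} {v : ℝ → ℝ} (hv : IsStepOn a b v P)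
    (hvf : ∀ t ∈ Set.Icc a b, v t ≤ f t) :
    stepInt a b β P v ∈ { r | ∃ (w : ℝ → ℝ) (Q : RDSPartition a b), IsStepOn a b w Q ∧
      (∀ t ∈ Set.Icc a b, w t ≤ f t) ∧ r = stepInt a b β Q w } :=
  ⟨v, P, hv, hvf, rfl⟩

section Bounded

variable (hβ : MonotoneOn β (Set.Icc a b)) (hab : a < b) {M : ℝ}
  (hM : ∀ t ∈ Set.Icc a b, |f t| ≤ M)

include hβ hab hM

lemma upper_nonempty : { r | ∃ (w : ℝ → ℝ) (Q : RDSPartition a b), IsStepOn a b w Q ∧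
    (∀ t ∈ Set.Icc a b, f t ≤ w t) ∧ r = stepInt a b β Q w }.Nonempty :=
  ⟨_, mem_upperSet (isStepOn_const M (Ptriv hab))
    (fun t ht => (le_abs_self _).trans (hM t ht))⟩

lemma lower_nonempty : { r | ∃ (w : ℝ → ℝ) (Q : RDSPartition a b), IsStepOn a b w Q ∧
    (∀ t ∈ Set.Icc a b, w t ≤ f t) ∧ r = stepInt a b β Q w }.Nonempty :=
  ⟨_, mem_lowerSet (isStepOn_const (-M) (Ptriv hab))
    (fun t ht => neg_le.1 ((neg_le_abs _).trans (hM t ht)))⟩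

lemma lower_le_of_upper : ∀ r ∈ { r | ∃ (w : ℝ → ℝ) (Q : RDSPartition a b), IsStepOn a b w Q ∧
    (∀ t ∈ Set.Icc a b, w t ≤ f t) ∧ r = stepInt a b β Q w },
    ∀ r' ∈ { r | ∃ (w : ℝ → ℝ) (Q : RDSPartition a b), IsStepOn a b w Q ∧
    (∀ t ∈ Set.Icc a b, f t ≤ w t) ∧ r = stepInt a b β Q w }, r ≤ r' := by
  rintro r ⟨v, Q, hv, hvf, rfl⟩ r' ⟨u, P, hu, hfu, rfl⟩
  exact stepInt_le_stepInt hβ hab hv hu fun t ht => (hvf t ht).trans (hfu t ht)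

lemma lower_bddAbove : BddAbove { r | ∃ (w : ℝ → ℝ) (Q : RDSPartition a b), IsStepOn a b w Q ∧
    (∀ t ∈ Set.Icc a b, w t ≤ f t) ∧ r = stepInt a b β Q w } := by
  obtain ⟨r', hr'⟩ := upper_nonempty hβ hab hM
  exact ⟨r', fun r hr => lower_le_of_upper hβ hab hM r hr r' hr'⟩

lemma upper_bddBelow : BddBelow { r | ∃ (w : ℝ → ℝ) (Q : RDSPartition a b), IsStepOn a b w Q ∧
    (∀ t ∈ Set.Icc a b, f t ≤ w t) ∧ r = stepInt a b β Q w } := by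
  obtain ⟨r, hr⟩ := lower_nonempty hβ hab hM
  exact ⟨r, fun r' hr' => lower_le_of_upper hβ hab hM r hr r' hr'⟩

lemma lowerRDS_le_upperRDS : lowerRDS a b β f ≤ upperRDS a b β f := by
  refine csSup_le (lower_nonempty hβ hab hM) fun r hr => ?_
  exact le_csInf (upper_nonempty hβ hab hM) fun r' hr' => lower_le_of_upper hβ hab hM r hr r' hr'

lemma upperRDS_le_step {P : RDSPartition a b} {u : ℝ → ℝ} (hu : IsStepOn a b u P)
    (hfu : ∀ t ∈ Set.Icc a b, f t ≤ u t) : upperRDS a b β f ≤ stepInt a b β P u :=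
  csInf_le (upper_bddBelow hβ hab hM) (mem_upperSet hu hfu)

lemma step_le_lowerRDS {P : RDSPartition a b} {v : ℝ → ℝ} (hv : IsStepOn a b v P)
    (hvf : ∀ t ∈ Set.Icc a b, v t ≤ f t) : stepInt a b β P v ≤ lowerRDS a b β f :=
  le_csSup (lower_bddAbove hβ hab hM) (mem_lowerSet hv hvf)

/-- criterion for integrability -/
lemma int_of_brackets
    (h : ∀ ε > (0:ℝ), ∃ (P : RDSPartition a b) (u v : ℝ → ℝ), IsStepOn a b u P ∧ IsStepOn a b v P ∧
      (∀ t ∈ Set.Icc a b, v t ≤ f t) ∧ (∀ t ∈ Set.Icc a b, f t ≤ u t) ∧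
      stepInt a b β P u - stepInt a b β P v ≤ ε) :
    RDSIntegrableInc a b β f := by
  have hle := lowerRDS_le_upperRDS hβ hab hM
  refine le_antisymm hle ?_
  refine le_of_forall_pos_le_add fun ε hε => ?_
  obtain ⟨P, u, v, hu, hv, hvf, hfu, hdiff⟩ := h ε hε
  calc upperRDS a b β f ≤ stepInt a b β P u := upperRDS_le_step hβ hab hM hu hfu
    _ ≤ stepInt a b β P v + ε := by linarith
    _ ≤ lowerRDS a b β f + ε := by linarith [step_le_lowerRDS hβ hab hM hv hvf]

/-- extraction of good brackets on a single partition -/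
lemma brackets_of_int (hint : RDSIntegrableInc a b β f) :
    ∀ ε > (0:ℝ), ∃ (P : RDSPartition a b) (u v : ℝ → ℝ), IsStepOn a b u P ∧ IsStepOn a b v P ∧
      (∀ t ∈ Set.Icc a b, v t ≤ f t) ∧ (∀ t ∈ Set.Icc a b, f t ≤ u t) ∧
      stepInt a b β P u - stepInt a b β P v ≤ ε := by
  intro ε hε
  have h1 : ∃ r ∈ { r | ∃ (w : ℝ → ℝ) (Q : RDSPartition a b), IsStepOn a b w Q ∧
      (∀ t ∈ Set.Icc a b, f t ≤ w t) ∧ r = stepInt a b β Q w },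
      r < upperRDS a b β f + ε / 2 := by
    apply Real.lt_sInf_add_pos (upper_nonempty hβ hab hM)
    linarith
  have h2 : ∃ r ∈ { r | ∃ (w : ℝ → ℝ) (Q : RDSPartition a b), IsStepOn a b w Q ∧
      (∀ t ∈ Set.Icc a b, w t ≤ f t) ∧ r = stepInt a b β Q w },
      lowerRDS a b β f + (-(ε / 2)) < r := by
    apply Real.add_neg_lt_sSup (lower_nonempty hβ hab hM)
    linarith
  obtain ⟨r, ⟨u, P, hu, hfu, rfl⟩, hru⟩ := h1
  obtain ⟨r', ⟨v, Q, hv, hvf, rfl⟩, hrv⟩ := h2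
  obtain ⟨R, hRP, hRQ⟩ := common_refine hab P Q
  have huR := hRP u hu
  have hvR := hRQ v hv
  refine ⟨R, u, v, huR, hvR, hvf, hfu, ?_⟩
  rw [← stepInt_indep hβ hab hu huR, ← stepInt_indep hβ hab hv hvR]
  rw [RDSIntegrableInc] at hint
  linarith [hint]

end Bounded

/-- simultaneous ε-brackets for two integrators -/
lemma brackets₂ (hβ : MonotoneOn β (Set.Icc a b)) (hγ : MonotoneOn γ (Set.Icc a b))
    (hab : a < b) {M : ℝ} (hM : ∀ t ∈ Set.Icc a b, |f t| ≤ M)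
    (hβi : RDSIntegrableInc a b β f) (hγi : RDSIntegrableInc a b γ f) :
    ∀ ε > (0:ℝ), ∃ (P : RDSPartition a b) (u v : ℝ → ℝ), IsStepOn a b u P ∧ IsStepOn a b v P ∧
      (∀ t ∈ Set.Icc a b, v t ≤ f t) ∧ (∀ t ∈ Set.Icc a b, f t ≤ u t) ∧
      stepInt a b β P u - stepInt a b β P v ≤ ε ∧
      stepInt a b γ P u - stepInt a b γ P v ≤ ε := by
  intro ε hε
  obtain ⟨P1, u1, v1, hu1, hv1, hv1f, hfu1, hd1⟩ := brackets_of_int hβ hab hM hβi ε hε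
  obtain ⟨P2, u2, v2, hu2, hv2, hv2f, hfu2, hd2⟩ := brackets_of_int hγ hab hM hγi ε hε
  obtain ⟨R, hR1, hR2⟩ := common_refine hab P1 P2
  have hu1R := hR1 u1 hu1
  have hv1R := hR1 v1 hv1
  have hu2R := hR2 u2 hu2
  have hv2R := hR2 v2 hv2
  set u := fun t => min (u1 t) (u2 t) with hudef
  set v := fun t => max (v1 t) (v2 t) with hvdef
  have huR : IsStepOn a b u R := isStepOn_map2 hu1R hu2R min
  have hvR : IsStepOn a b v R := isStepOn_map2 hv1R hv2R max
  have hvf : ∀ t ∈ Set.Icc a b, v t ≤ f t := fun t ht =>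
    max_le (hv1f t ht) (hv2f t ht)
  have hfu : ∀ t ∈ Set.Icc a b, f t ≤ u t := fun t ht =>
    le_min (hfu1 t ht) (hfu2 t ht)
  refine ⟨R, u, v, huR, hvR, hvf, hfu, ?_, ?_⟩
  · have h1 : ∀ t ∈ Set.Icc a b, u t - v t ≤ u1 t - v1 t := fun t ht => by
      have := min_le_left (u1 t) (u2 t)
      have := le_max_left (v1 t) (v2 t)
      simp only [hudef, hvdef]
      have h4 := min_le_left (u1 t) (u2 t)
      have h5 := le_max_left (v1 t) (v2 t)
      linarith
    calc stepInt a b β R u - stepInt a b β R v = stepInt a b β R (fun t => u t - v t) :=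
          (stepInt_sub_f β R u v).symm
      _ ≤ stepInt a b β R (fun t => u1 t - v1 t) := stepInt_mono_f hβ hab R h1
      _ = stepInt a b β R u1 - stepInt a b β R v1 := stepInt_sub_f β R u1 v1
      _ = stepInt a b β P1 u1 - stepInt a b β P1 v1 := by
          rw [stepInt_indep hβ hab hu1 hu1R, stepInt_indep hβ hab hv1 hv1R]
      _ ≤ ε := hd1
  · have h1 : ∀ t ∈ Set.Icc a b, u t - v t ≤ u2 t - v2 t := fun t ht => by
      simp only [hudef, hvdef]
      have h4 := min_le_right (u1 t) (u2 t)
      have h5 := le_max_right (v1 t) (v2 t)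
      linarith
    calc stepInt a b γ R u - stepInt a b γ R v = stepInt a b γ R (fun t => u t - v t) :=
          (stepInt_sub_f γ R u v).symm
      _ ≤ stepInt a b γ R (fun t => u2 t - v2 t) := stepInt_mono_f hγ hab R h1
      _ = stepInt a b γ R u2 - stepInt a b γ R v2 := stepInt_sub_f γ R u2 v2
      _ = stepInt a b γ P2 u2 - stepInt a b γ P2 v2 := by
          rw [stepInt_indep hγ hab hu2 hu2R, stepInt_indep hγ hab hv2 hv2R]
      _ ≤ ε := hd2

end Aux6
noncomputable section Aux7
open MeasureTheory

variable {a b : ℝ} {β γ : ℝ → ℝ} {f : ℝ → ℝ}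

/-- congruence of envelopes in the integrator -/
lemma upperRDS_congr (hβ : MonotoneOn β (Set.Icc a b)) (hab : a < b)
    (h : Set.EqOn β γ (Set.Icc a b)) (f : ℝ → ℝ) :
    upperRDS a b β f = upperRDS a b γ f := by
  unfold upperRDS
  congr 1
  ext r
  constructor
  · rintro ⟨u, P, hu, hfu, rfl⟩
    exact ⟨u, P, hu, hfu, stepInt_congr hβ hab h P u⟩
  · rintro ⟨u, P, hu, hfu, rfl⟩
    exact ⟨u, P, hu, hfu, (stepInt_congr hβ hab h P u).symm⟩

lemma lowerRDS_congr (hβ : MonotoneOn β (Set.Icc a b)) (hab : a < b)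
    (h : Set.EqOn β γ (Set.Icc a b)) (f : ℝ → ℝ) :
    lowerRDS a b β f = lowerRDS a b γ f := by
  unfold lowerRDS
  congr 1
  ext r
  constructor
  · rintro ⟨u, P, hu, hfu, rfl⟩
    exact ⟨u, P, hu, hfu, stepInt_congr hβ hab h P u⟩
  · rintro ⟨u, P, hu, hfu, rfl⟩
    exact ⟨u, P, hu, hfu, (stepInt_congr hβ hab h P u).symm⟩

lemma RDSIntegrableInc_congr (hβ : MonotoneOn β (Set.Icc a b)) (hab : a < b)
    (h : Set.EqOn β γ (Set.Icc a b)) (f : ℝ → ℝ) :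
    RDSIntegrableInc a b β f ↔ RDSIntegrableInc a b γ f := by
  unfold RDSIntegrableInc
  rw [upperRDS_congr hβ hab h, lowerRDS_congr hβ hab h]

/-- integrability of `|f|` from integrability of `f` (increasing integrator) -/
lemma int_abs (hβ : MonotoneOn β (Set.Icc a b)) (hab : a < b) {M : ℝ}
    (hM : ∀ t ∈ Set.Icc a b, |f t| ≤ M) (hint : RDSIntegrableInc a b β f) :
    RDSIntegrableInc a b β (fun t => |f t|) := by
  have hM' : ∀ t ∈ Set.Icc a b, |(|f t|)| ≤ M := fun t ht => by
    rw [abs_abs]; exact hM t ht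
  refine int_of_brackets hβ hab hM' fun ε hε => ?_
  obtain ⟨P, u, v, hu, hv, hvf, hfu, hdiff⟩ := brackets_of_int hβ hab hM hint ε hε
  set u' := fun t => max (u t) (-(v t)) with hu'def
  set v' := fun t => max (v t) (-(u t)) with hv'def
  have hu' : IsStepOn a b u' P := isStepOn_map2 hu hv (fun x y => max x (-y))
  have hv' : IsStepOn a b v' P := isStepOn_map2 hv hu (fun x y => max x (-y))
  refine ⟨P, u', v', hu', hv', ?_, ?_, ?_⟩
  · intro t ht
    simp only [hv'def]
    refine max_le ((hvf t ht).trans (le_abs_self _)) ?_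
    rw [neg_le]
    exact (neg_abs_le _).trans (hfu t ht)
  · intro t ht
    simp only [hu'def]
    have h1 : f t ≤ max (u t) (-(v t)) := (hfu t ht).trans (le_max_left _ _)
    have h2 : -(f t) ≤ max (u t) (-(v t)) := (neg_le_neg (hvf t ht)).trans (le_max_right _ _)
    exact abs_le.2 ⟨by linarith, h1⟩
  · have hle : ∀ t ∈ Set.Icc a b, u' t - v' t ≤ u t - v t := by
      intro t ht
      simp only [hu'def, hv'def]
      have k1 : v t ≤ max (v t) (-(u t)) := le_max_left _ _
      have k2 : -(u t) ≤ max (v t) (-(u t)) := le_max_right _ _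
      have k3 : max (u t) (-(v t)) ≤ (u t - v t) + max (v t) (-(u t)) :=
        max_le (by linarith) (by linarith)
      linarith
    calc stepInt a b β P u' - stepInt a b β P v'
        = stepInt a b β P (fun t => u' t - v' t) := (stepInt_sub_f β P u' v').symm
      _ ≤ stepInt a b β P (fun t => u t - v t) := stepInt_mono_f hβ hab P hle
      _ = stepInt a b β P u - stepInt a b β P v := stepInt_sub_f β P u v
      _ ≤ ε := hdiff

end Aux7
noncomputable section Aux8
open MeasureTheory

variable {a b : ℝ} {β γ : ℝ → ℝ} {f : ℝ → ℝ}

/-- integrability transfers to a dominated integrator -/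
lemma int_dominated (hβ : MonotoneOn β (Set.Icc a b)) (hγ : MonotoneOn γ (Set.Icc a b))
    (hd : MonotoneOn (fun t => γ t - β t) (Set.Icc a b)) (hab : a < b) {M : ℝ}
    (hM : ∀ t ∈ Set.Icc a b, |f t| ≤ M) (hint : RDSIntegrableInc a b γ f) :
    RDSIntegrableInc a b β f := by
  refine int_of_brackets hβ hab hM fun ε hε => ?_
  obtain ⟨P, u, v, hu, hv, hvf, hfu, hdiff⟩ := brackets_of_int hγ hab hM hint ε hε
  refine ⟨P, u, v, hu, hv, hvf, hfu, ?_⟩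
  have hnn : ∀ t ∈ Set.Icc a b, 0 ≤ u t - v t := fun t ht =>
    sub_nonneg.2 ((hvf t ht).trans (hfu t ht))
  calc stepInt a b β P u - stepInt a b β P v
      = stepInt a b β P (fun t => u t - v t) := (stepInt_sub_f β P u v).symm
    _ ≤ stepInt a b γ P (fun t => u t - v t) := stepInt_mono_int hβ hγ hd hab P hnn
    _ = stepInt a b γ P u - stepInt a b γ P v := stepInt_sub_f γ P u v
    _ ≤ ε := hdiff

/-- additivity of the integral in the integrator -/
lemma int_add (hβ : MonotoneOn β (Set.Icc a b)) (hγ : MonotoneOn γ (Set.Icc a b))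
    (hab : a < b) {M : ℝ} (hM : ∀ t ∈ Set.Icc a b, |f t| ≤ M)
    (hβi : RDSIntegrableInc a b β f) (hγi : RDSIntegrableInc a b γ f) :
    RDSIntegrableInc a b (fun t => β t + γ t) f ∧
    upperRDS a b (fun t => β t + γ t) f = upperRDS a b β f + upperRDS a b γ f := by
  have hsum := hβ.addOn hγ
  have hint : RDSIntegrableInc a b (fun t => β t + γ t) f := by
    refine int_of_brackets hsum hab hM fun ε hε => ?_
    obtain ⟨P, u, v, hu, hv, hvf, hfu, hd1, hd2⟩ :=
      brackets₂ hβ hγ hab hM hβi hγi (ε/2) (by linarith)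
    refine ⟨P, u, v, hu, hv, hvf, hfu, ?_⟩
    rw [stepInt_add_int hβ hγ hab P u, stepInt_add_int hβ hγ hab P v]
    linarith
  refine ⟨hint, ?_⟩
  have key : ∀ ε > (0:ℝ),
      |upperRDS a b (fun t => β t + γ t) f - (upperRDS a b β f + upperRDS a b γ f)| ≤ 2*ε := by
    intro ε hε
    obtain ⟨P, u, v, hu, hv, hvf, hfu, hd1, hd2⟩ := brackets₂ hβ hγ hab hM hβi hγi ε hε
    have hβu := upperRDS_le_step hβ hab hM hu hfu
    have hγu := upperRDS_le_step hγ hab hM hu hfu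
    have hβv := step_le_lowerRDS hβ hab hM hv hvf
    have hγv := step_le_lowerRDS hγ hab hM hv hvf
    have hβe : lowerRDS a b β f = upperRDS a b β f := hβi
    have hγe : lowerRDS a b γ f = upperRDS a b γ f := hγi
    have hsu := upperRDS_le_step hsum hab hM hu hfu
    have hsv := step_le_lowerRDS hsum hab hM hv hvf
    have hslow := lowerRDS_le_upperRDS hsum hab hM
    have e1 := stepInt_add_int hβ hγ hab P u
    have e2 := stepInt_add_int hβ hγ hab P v
    rw [abs_le]
    constructor <;> linarith
  have : |upperRDS a b (fun t => β t + γ t) f - (upperRDS a b β f + upperRDS a b γ f)| ≤ 0 := by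
    by_contra hcon
    push_neg at hcon
    have := key (|upperRDS a b (fun t => β t + γ t) f
      - (upperRDS a b β f + upperRDS a b γ f)| / 4) (by linarith)
    linarith
  have := abs_nonneg (upperRDS a b (fun t => β t + γ t) f
    - (upperRDS a b β f + upperRDS a b γ f))
  have heq : |upperRDS a b (fun t => β t + γ t) f
      - (upperRDS a b β f + upperRDS a b γ f)| = 0 := le_antisymm ‹_› ‹_›
  rw [abs_eq_zero] at heq
  linarith

end Aux8
noncomputable section Aux9
open MeasureTheory

variable {a b : ℝ} {α p m : ℝ → ℝ}

/-- subadditivity of variation for a difference of real functions -/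
lemma eVariationOn_sub_le (p m : ℝ → ℝ) (s : Set ℝ) :
    eVariationOn (fun x => p x - m x) s ≤ eVariationOn p s + eVariationOn m s := by
  refine iSup_le ?_
  rintro ⟨n, ⟨u, hu, us⟩⟩
  have hterm : ∀ i, edist (p (u (i+1)) - m (u (i+1))) (p (u i) - m (u i))
      ≤ edist (p (u (i+1))) (p (u i)) + edist (m (u (i+1))) (m (u i)) := by
    intro i
    rw [edist_dist, edist_dist, edist_dist, Real.dist_eq, Real.dist_eq, Real.dist_eq,
      ← ENNReal.ofReal_add (abs_nonneg _) (abs_nonneg _)]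
    apply ENNReal.ofReal_le_ofReal
    have : p (u (i+1)) - m (u (i+1)) - (p (u i) - m (u i))
        = (p (u (i+1)) - p (u i)) + -(m (u (i+1)) - m (u i)) := by ring
    rw [this]
    exact (abs_add_le _ _).trans (by rw [abs_neg])
  calc (∑ i ∈ Finset.range n, edist ((fun x => p x - m x) (u (i+1))) ((fun x => p x - m x) (u i)))
      ≤ ∑ i ∈ Finset.range n, (edist (p (u (i+1))) (p (u i)) + edist (m (u (i+1))) (m (u i))) :=
        Finset.sum_le_sum fun i _ => hterm i
    _ = (∑ i ∈ Finset.range n, edist (p (u (i+1))) (p (u i)))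
        + ∑ i ∈ Finset.range n, edist (m (u (i+1))) (m (u i)) := Finset.sum_add_distrib
    _ ≤ eVariationOn p s + eVariationOn m s :=
        add_le_add (eVariationOn.sum_le (f := p) (n := n) hu us) (eVariationOn.sum_le (f := m) (n := n) hu us)

section Var

variable (hab : a < b) (hα : BoundedVariationOn α (Set.Icc a b))

include hα

lemma var_fin {t : ℝ} (ht : t ∈ Set.Icc a b) : eVariationOn α (Set.Icc a t) ≠ ⊤ :=
  fun h => hα (eq_top_iff.2 (h ▸ eVariationOn.mono α (Set.Icc_subset_Icc le_rfl ht.2)))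

lemma var_split {s t : ℝ} (hs : s ∈ Set.Icc a b) (ht : t ∈ Set.Icc a b) (hst : s ≤ t) :
    eVariationOn α (Set.Icc a s) + eVariationOn α (Set.Icc s t) = eVariationOn α (Set.Icc a t) := by
  have := eVariationOn.Icc_add_Icc α (s := (Set.univ : Set ℝ)) hs.1 hst (Set.mem_univ s)
  simpa [Set.univ_inter] using this

lemma var_seg_fin {s t : ℝ} (hs : s ∈ Set.Icc a b) (ht : t ∈ Set.Icc a b) (hst : s ≤ t) :
    eVariationOn α (Set.Icc s t) ≠ ⊤ := by
  intro h
  have h2 := var_split hα hs ht hst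
  rw [h] at h2
  have h3 : eVariationOn α (Set.Icc a s) + ⊤ = ⊤ := add_top _
  rw [h3] at h2
  exact var_fin hα ht h2.symm

lemma var_incr {s t : ℝ} (hs : s ∈ Set.Icc a b) (ht : t ∈ Set.Icc a b) (hst : s ≤ t) :
    (eVariationOn α (Set.Icc a t)).toReal - (eVariationOn α (Set.Icc a s)).toReal = (eVariationOn α (Set.Icc s t)).toReal := by
  have h1 := var_split hα hs ht hst
  have h2 := var_fin hα ht
  have h3 := var_fin hα hs
  have h4 := var_seg_fin hα hs ht hst
  rw [← h1, ENNReal.toReal_add h3 h4]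
  ring

lemma var_mono : MonotoneOn (fun t => (eVariationOn α (Set.Icc a t)).toReal) (Set.Icc a b) := by
  intro s hs t ht hst
  have := var_incr hα hs ht hst
  have h5 : (0:ℝ) ≤ (eVariationOn α (Set.Icc s t)).toReal := ENNReal.toReal_nonneg
  simp only at this ⊢
  linarith

/-- `|α t - α s| ≤ (eVariationOn α (Set.Icc a t)).toReal - (eVariationOn α (Set.Icc a s)).toReal` -/
lemma var_dom {s t : ℝ} (hs : s ∈ Set.Icc a b) (ht : t ∈ Set.Icc a b) (hst : s ≤ t) :
    |α t - α s| ≤ (eVariationOn α (Set.Icc a t)).toReal - (eVariationOn α (Set.Icc a s)).toReal := by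
  rw [var_incr hα hs ht hst]
  have h1 : edist (α s) (α t) ≤ eVariationOn α (Set.Icc s t) :=
    eVariationOn.edist_le α (Set.left_mem_Icc.2 hst) (Set.right_mem_Icc.2 hst)
  rw [edist_dist, Real.dist_eq, abs_sub_comm] at h1
  have h2 := var_seg_fin hα hs ht hst
  calc |α t - α s| = (ENNReal.ofReal |α t - α s|).toReal := by
        rw [ENNReal.toReal_ofReal (abs_nonneg _)]
    _ ≤ (eVariationOn α (Set.Icc s t)).toReal := by
        apply ENNReal.toReal_mono h2 h1
end Var

section VarDec

variable (hab : a < b) (hα : BoundedVariationOn α (Set.Icc a b))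
  (hp : MonotoneOn p (Set.Icc a b)) (hm : MonotoneOn m (Set.Icc a b))
  (hdec : ∀ t ∈ Set.Icc a b, α t = p t - m t)

include hα hp hm hdec

/-- `V` increments are dominated by those of `p + m` -/
lemma var_le_sum {s t : ℝ} (hs : s ∈ Set.Icc a b) (ht : t ∈ Set.Icc a b) (hst : s ≤ t) :
    (eVariationOn α (Set.Icc a t)).toReal - (eVariationOn α (Set.Icc a s)).toReal ≤ (p t + m t) - (p s + m s) := by
  rw [var_incr hα hs ht hst]
  have hsub : Set.Icc s t ⊆ Set.Icc a b := Set.Icc_subset_Icc hs.1 ht.2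
  have h0 : eVariationOn α (Set.Icc s t) = eVariationOn (fun x => p x - m x) (Set.Icc s t) :=
    eVariationOn.eq_of_eqOn fun x hx => hdec x (hsub hx)
  have h1 := eVariationOn_sub_le p m (Set.Icc s t)
  have h2 : eVariationOn p (Set.Icc s t) ≤ ENNReal.ofReal (p t - p s) := by
    have := (hp.eVariationOn_le hs ht : eVariationOn p (Set.Icc a b ∩ Set.Icc s t) ≤ _)
    rwa [Set.inter_eq_self_of_subset_right hsub] at this
  have h3 : eVariationOn m (Set.Icc s t) ≤ ENNReal.ofReal (m t - m s) := by
    have := (hm.eVariationOn_le hs ht : eVariationOn m (Set.Icc a b ∩ Set.Icc s t) ≤ _)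
    rwa [Set.inter_eq_self_of_subset_right hsub] at this
  have h4 : eVariationOn α (Set.Icc s t) ≤ ENNReal.ofReal (p t - p s) + ENNReal.ofReal (m t - m s) := by
    rw [h0]; exact h1.trans (add_le_add h2 h3)
  have h5 : (ENNReal.ofReal (p t - p s) + ENNReal.ofReal (m t - m s)).toReal
      = (p t - p s) + (m t - m s) := by
    rw [ENNReal.toReal_add ENNReal.ofReal_ne_top ENNReal.ofReal_ne_top,
      ENNReal.toReal_ofReal (sub_nonneg.2 (hp hs ht hst)),
      ENNReal.toReal_ofReal (sub_nonneg.2 (hm hs ht hst))]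
  calc (eVariationOn α (Set.Icc s t)).toReal
      ≤ (ENNReal.ofReal (p t - p s) + ENNReal.ofReal (m t - m s)).toReal :=
        ENNReal.toReal_mono (by simp [ENNReal.add_eq_top]) h4
    _ = (p t - p s) + (m t - m s) := h5
    _ = (p t + m t) - (p s + m s) := by ring

lemma var_sum_sub_mono : MonotoneOn (fun t => (p t + m t) - (eVariationOn α (Set.Icc a t)).toReal) (Set.Icc a b) := by
  intro s hs t ht hst
  have := var_le_sum hα hp hm hdec hs ht hst
  simp only at this ⊢
  linarith

lemma var_sub_alpha_mono : MonotoneOn (fun t => (eVariationOn α (Set.Icc a t)).toReal - (p t - m t)) (Set.Icc a b) := by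
  intro s hs t ht hst
  have h1 := var_dom hα hs ht hst
  rw [hdec s hs, hdec t ht] at h1
  have h2 := abs_le.1 h1
  simp only at h2 ⊢
  have := h2.2
  linarith

lemma var_add_alpha_mono : MonotoneOn (fun t => (eVariationOn α (Set.Icc a t)).toReal + (p t - m t)) (Set.Icc a b) := by
  intro s hs t ht hst
  have h1 := var_dom hα hs ht hst
  rw [hdec s hs, hdec t ht] at h1
  have h2 := abs_le.1 h1
  simp only at h2 ⊢
  have := h2.1
  linarith

end VarDec
end Aux9
noncomputable section Aux10
open MeasureTheory

variable {a b : ℝ} {β : ℝ → ℝ} {f : ℝ → ℝ}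

/-- a step function is bounded on `[a,b]` -/
lemma step_bounds {P : RDSPartition a b} {u : ℝ → ℝ} (hu : IsStepOn a b u P) :
    ∃ M, ∀ t ∈ Set.Icc a b, |u t| ≤ M := by
  classical
  set s := ((Finset.range (P.n + 1)).image (fun i => |u (P.x i)|)) ∪
    ((Finset.range P.n).image (fun i => |u ((P.x i + P.x (i+1)) / 2)|)) with hsdef
  have hne : s.Nonempty := by
    refine ⟨|u (P.x 0)|, ?_⟩
    simp only [hsdef, Finset.mem_union, Finset.mem_image, Finset.mem_range]
    exact Or.inl ⟨0, by omega, rfl⟩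
  refine ⟨s.max' hne, fun t ht => ?_⟩
  rcases P.locate ht with ⟨i, hi, rfl⟩ | ⟨i, hi, hti⟩
  · refine s.le_max' _ ?_
    simp only [hsdef, Finset.mem_union, Finset.mem_image, Finset.mem_range]
    exact Or.inl ⟨i, by omega, rfl⟩
  · rw [hu i hi t hti]
    refine s.le_max' _ ?_
    simp only [hsdef, Finset.mem_union, Finset.mem_image, Finset.mem_range]
    exact Or.inr ⟨i, hi, rfl⟩

lemma upperRDS_of_unbddAbove (h : ¬∃ M, ∀ t ∈ Set.Icc a b, f t ≤ M) :
    upperRDS a b β f = 0 := by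
  unfold upperRDS
  convert Real.sInf_empty using 2
  rw [Set.eq_empty_iff_forall_notMem]
  rintro r ⟨u, P, hu, hfu, rfl⟩
  obtain ⟨M, hM⟩ := step_bounds hu
  exact h ⟨M, fun t ht => (hfu t ht).trans ((le_abs_self _).trans (hM t ht))⟩

lemma lowerRDS_of_unbddBelow (h : ¬∃ M, ∀ t ∈ Set.Icc a b, M ≤ f t) :
    lowerRDS a b β f = 0 := by
  unfold lowerRDS
  convert Real.sSup_empty using 2
  rw [Set.eq_empty_iff_forall_notMem]
  rintro r ⟨u, P, hu, huf, rfl⟩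
  obtain ⟨M, hM⟩ := step_bounds hu
  refine h ⟨-M, fun t ht => le_trans ?_ (huf t ht)⟩
  have := (neg_abs_le (u t)).trans (le_abs_self (u t))
  have h2 := hM t ht
  have h3 := neg_abs_le (u t)
  linarith

lemma stepInt_neg_f (β : ℝ → ℝ) (P : RDSPartition a b) (u : ℝ → ℝ) :
    stepInt a b β P (fun t => -(u t)) = - stepInt a b β P u := by
  unfold stepInt
  simp only [neg_mul, Finset.sum_neg_distrib]
  ring

/-- duality between upper and lower envelopes -/
lemma upperRDS_neg (β f : ℝ → ℝ) :
    upperRDS a b β f = - lowerRDS a b β (fun t => -(f t)) := by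
  unfold upperRDS lowerRDS
  rw [Real.sInf_def]
  congr 2
  ext r
  simp only [Set.mem_neg, Set.mem_setOf_eq]
  constructor
  · rintro ⟨u, P, hu, hfu, hr⟩
    refine ⟨fun t => -(u t), P, isStepOn_comp hu Neg.neg, fun t ht => neg_le_neg (hfu t ht), ?_⟩
    rw [stepInt_neg_f, ← hr, neg_neg]
  · rintro ⟨u, P, hu, huf, hr⟩
    refine ⟨fun t => -(u t), P, isStepOn_comp hu Neg.neg, fun t ht => ?_, ?_⟩
    · have := huf t ht
      simp only
      linarith
    · rw [stepInt_neg_f, ← hr]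

end Aux10
noncomputable section Aux11
open MeasureTheory

variable {a b : ℝ} {β f : ℝ → ℝ}

lemma stepInt_add_f (β : ℝ → ℝ) (P : RDSPartition a b) (u v : ℝ → ℝ) :
    stepInt a b β P (fun t => u t + v t) = stepInt a b β P u + stepInt a b β P v := by
  unfold stepInt
  simp only [add_mul, Finset.sum_add_distrib]
  ring

/-- nodes are not interior to open subintervals -/
lemma RDSPartition.node_not_mem_Ioo (P : RDSPartition a b) {i k : ℕ} (hi : i ≤ P.n) (hk : k < P.n) :
    P.x i ∉ Set.Ioo (P.x k) (P.x (k+1)) := by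
  rintro ⟨h1, h2⟩
  have hik : k < i := by
    by_contra hcon
    push_neg at hcon
    exact absurd (P.x_le_x hcon hk.le) (not_le.2 h1)
  have hik2 : i < k + 1 := by
    by_contra hcon
    push_neg at hcon
    exact absurd (P.x_le_x hcon hi) (not_le.2 h2)
  omega

/-- nodes are distinct -/
lemma RDSPartition.x_inj (P : RDSPartition a b) {i j : ℕ} (hi : i ≤ P.n) (hj : j ≤ P.n)
    (hij : i ≠ j) : P.x i ≠ P.x j := by
  rcases Nat.lt_or_ge i j with h | h
  · exact ne_of_lt (P.x_lt_x h hj)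
  · exact (ne_of_lt (P.x_lt_x (by omega) hi)).symm

section Jump

/-- the jump function with jumps `2⁻ⁿ` at the points `t n` -/
def jumpF (b : ℝ) (t : ℕ → ℝ) : ℝ → ℝ := fun x =>
  ∑' n, (if t n < x ∨ (t n = b ∧ b ≤ x) then ((2:ℝ)⁻¹)^n else 0)

lemma jumpF_summable (b : ℝ) (t : ℕ → ℝ) (x : ℝ) :
    Summable (fun n => (if t n < x ∨ (t n = b ∧ b ≤ x) then ((2:ℝ)⁻¹)^n else 0)) := by
  refine Summable.of_nonneg_of_le (fun n => ?_) (fun n => ?_)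
    (summable_geometric_of_lt_one (by norm_num) (by norm_num) : Summable fun n => ((2:ℝ)⁻¹)^n)
  · split <;> positivity
  · split
    · exact le_rfl
    · positivity

lemma jumpF_mono (b : ℝ) (t : ℕ → ℝ) : Monotone (jumpF b t) := by
  intro x y hxy
  refine Summable.tsum_le_tsum (fun n => ?_) (jumpF_summable b t x) (jumpF_summable b t y)
  by_cases h : t n < x ∨ (t n = b ∧ b ≤ x)
  · rw [if_pos h, if_pos]
    rcases h with h | ⟨h1, h2⟩
    · exact Or.inl (lt_of_lt_of_le h hxy)
    · exact Or.inr ⟨h1, h2.trans hxy⟩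
  · rw [if_neg h]
    split <;> positivity

lemma jumpF_gap (b : ℝ) (t : ℕ → ℝ) {x y : ℝ} (hxy : y ≤ x) (N : ℕ)
    (hy : ¬(t N < y ∨ (t N = b ∧ b ≤ y))) (hx : t N < x ∨ (t N = b ∧ b ≤ x)) :
    jumpF b t y + ((2:ℝ)⁻¹)^N ≤ jumpF b t x := by
  have hsum : Summable (fun n => (if n = N then ((2:ℝ)⁻¹)^N else 0)) :=
    summable_of_ne_finset_zero (s := {N}) (fun n hn => if_neg (by simpa using hn))
  have h1 : jumpF b t y + ((2:ℝ)⁻¹)^N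
      = ∑' n, ((if t n < y ∨ (t n = b ∧ b ≤ y) then ((2:ℝ)⁻¹)^n else 0)
          + (if n = N then ((2:ℝ)⁻¹)^N else 0)) := by
    rw [Summable.tsum_add (jumpF_summable b t y) hsum, tsum_eq_single N (fun n hn => if_neg hn)]
    simp [jumpF]
  rw [h1]
  refine Summable.tsum_le_tsum (fun n => ?_) ((jumpF_summable b t y).add hsum) (jumpF_summable b t x)
  by_cases hn : n = N
  · subst hn
    rw [if_neg hy, if_pos hx, if_pos rfl]
    simp
  · rw [if_neg hn, add_zero]
    by_cases h : t n < y ∨ (t n = b ∧ b ≤ y)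
    · rw [if_pos h, if_pos]
      rcases h with h | ⟨h1', h2⟩
      · exact Or.inl (lt_of_lt_of_le h hxy)
      · exact Or.inr ⟨h1', h2.trans hxy⟩
    · rw [if_neg h]
      split <;> positivity

lemma jumpF_jump (hab : a < b) (t : ℕ → ℝ) (htm : ∀ n, t n ∈ Set.Icc a b) (N : ℕ) :
    ((2:ℝ)⁻¹)^N ≤ muPt a b (jumpF b t) (t N) := by
  have hmono := jumpF_mono b t
  rcases lt_or_eq_of_le (htm N).2 with hlt | heq
  · -- t N < b : use the right limit
    have h1 : rLim b (jumpF b t) (t N) ≥ jumpF b t (t N) + ((2:ℝ)⁻¹)^N := by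
      unfold rLim
      rw [if_pos hlt]
      have hev : ∀ᶠ x in nhdsWithin (t N) (Set.Ioi (t N)),
          jumpF b t (t N) + ((2:ℝ)⁻¹)^N ≤ jumpF b t x := by
        filter_upwards [self_mem_nhdsWithin] with x hx
        refine jumpF_gap b t (le_of_lt hx) N ?_ (Or.inl hx)
        rintro (h | ⟨h1, h2⟩)
        · exact lt_irrefl _ h
        · rw [h1] at hlt; exact lt_irrefl _ hlt
      exact ge_of_tendsto (hmono.tendsto_rightLim (t N)) hev
    have h2 : lLim a (jumpF b t) (t N) ≤ jumpF b t (t N) := by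
      unfold lLim
      split
      · exact hmono.leftLim_le le_rfl
      · exact le_rfl
    unfold muPt
    linarith
  · -- t N = b : use the left limit
    have hcond : t N < b ∨ (t N = b ∧ b ≤ b) := Or.inr ⟨heq, le_rfl⟩
    have h1 : rLim b (jumpF b t) (t N) = jumpF b t b := by
      unfold rLim
      rw [heq, if_neg (lt_irrefl b)]
    have h2 : lLim a (jumpF b t) (t N) ≤ jumpF b t b - ((2:ℝ)⁻¹)^N := by
      unfold lLim
      rw [heq, if_pos hab]
      have hev : ∀ᶠ x in nhdsWithin b (Set.Iio b),
          jumpF b t x ≤ jumpF b t b - ((2:ℝ)⁻¹)^N := by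
        filter_upwards [self_mem_nhdsWithin] with x hx
        have := jumpF_gap b t (le_of_lt hx) N ?_ hcond
        · linarith
        · rintro (h | ⟨h1', h2⟩)
          · rw [heq] at h; exact absurd hx (not_lt.2 (le_of_lt h))
          · exact absurd h2 (not_le.2 hx)
      exact le_of_tendsto (hmono.tendsto_leftLim b) hev
    unfold muPt
    rw [h1]
    linarith

end Jump

/-- junk-value lemma: lower sums are unbounded when `f` has fast peaks at jump points -/
lemma lowerRDS_junk (hab : a < b) (hβ : MonotoneOn β (Set.Icc a b))
    (t : ℕ → ℝ) (htm : ∀ n, t n ∈ Set.Icc a b)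
    (hjump : ∀ n, ((2:ℝ)⁻¹)^n ≤ muPt a b β (t n)) {L : ℝ} (hL0 : 0 ≤ L)
    (hL : ∀ s ∈ Set.Icc a b, -L ≤ f s) (hg : ∀ n, (4:ℝ)^n ≤ f (t n)) :
    lowerRDS a b β f = 0 := by
  classical
  refine Real.sSup_of_not_bddAbove ?_
  rintro ⟨c, hc⟩
  -- for each N we construct a lower step function with large integral
  have key : ∀ N : ℕ, -L * (β b - β a) + (2:ℝ)^N ≤ c := by
    intro N
    set s₀ : Finset ℝ := {a, t N, b} with hs₀
    have ha : a ∈ s₀ := by simp [hs₀]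
    have hb : b ∈ s₀ := by simp [hs₀]
    have hs : ∀ x ∈ s₀, x ∈ Set.Icc a b := by
      intro x hx
      simp only [hs₀, Finset.mem_insert, Finset.mem_singleton] at hx
      rcases hx with rfl | rfl | rfl
      · exact ⟨le_rfl, hab.le⟩
      · exact htm N
      · exact ⟨hab.le, le_rfl⟩
    set P := partOf s₀ ha hb hs with hP
    obtain ⟨i₀, hi₀, hx₀⟩ := partOf_exhaust s₀ ha hb hs (show t N ∈ s₀ by simp [hs₀])
    rw [← hP] at hi₀ hx₀
    set v : ℝ → ℝ := fun s => -L + (if s = t N then f (t N) + L else 0) with hv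
    have hvstep : IsStepOn a b v P := by
      intro k hk s hsIoo
      have hs1 : s ≠ t N := by
        intro h
        rw [← h] at hx₀
        exact P.node_not_mem_Ioo hi₀ hk (hx₀ ▸ hsIoo)
      have hs2 : (P.x k + P.x (k+1)) / 2 ≠ t N := by
        intro h
        rw [← h] at hx₀
        exact P.node_not_mem_Ioo hi₀ hk (hx₀ ▸ P.mid_mem hk)
      simp only [hv, if_neg hs1, if_neg hs2]
    have hvf : ∀ s ∈ Set.Icc a b, v s ≤ f s := by
      intro s hsm
      simp only [hv]
      by_cases h : s = t N
      · rw [if_pos h, h]; ring_nf; exact le_rfl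
      · rw [if_neg h]; simpa using hL s hsm
    have hmem := mem_lowerSet (β := β) (f := f) hvstep hvf
    have hval : -L * (β b - β a) + (2:ℝ)^N ≤ stepInt a b β P v := by
      have e1 : stepInt a b β P v = stepInt a b β P (fun _ => -L)
          + stepInt a b β P (fun s => if s = t N then f (t N) + L else 0) :=
        stepInt_add_f β P _ _
      have e2 : stepInt a b β P (fun _ => -L) = -L * (β b - β a) := stepInt_const β P (-L)
      have e3 : stepInt a b β P (fun s => if s = t N then f (t N) + L else 0)
          = (f (t N) + L) * muPt a b β (t N) := by
        unfold stepInt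
        have hpt : ∀ i ∈ Finset.range (P.n + 1), i ≠ i₀ →
            (if P.x i = t N then f (t N) + L else 0) * muPt a b β (P.x i) = 0 := by
          intro i hi hne
          rw [if_neg, zero_mul]
          rw [← hx₀]
          exact P.x_inj (Nat.lt_succ_iff.1 (Finset.mem_range.1 hi)) hi₀ hne
        have hmid : ∀ i ∈ Finset.range P.n,
            (if (P.x i + P.x (i+1)) / 2 = t N then f (t N) + L else 0)
              * muIoo a b β (P.x i) (P.x (i+1)) = 0 := by
          intro i hi
          rw [if_neg, zero_mul]
          intro h
          rw [← h] at hx₀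
          exact P.node_not_mem_Ioo hi₀ (Finset.mem_range.1 hi) (hx₀ ▸ P.mid_mem (Finset.mem_range.1 hi))
        rw [Finset.sum_eq_single i₀ hpt (fun h => absurd (Finset.mem_range.2 (by omega)) h),
          Finset.sum_congr rfl hmid]
        simp [hx₀]
      have e4 : (2:ℝ)^N ≤ (f (t N) + L) * muPt a b β (t N) := by
        have h1 : (4:ℝ)^N ≤ f (t N) + L := by linarith [hg N]
        have h2 := hjump N
        have h3 : (0:ℝ) ≤ ((2:ℝ)⁻¹)^N := by positivity
        have h5 : (4:ℝ)^N * ((2:ℝ)⁻¹)^N ≤ (f (t N) + L) * muPt a b β (t N) :=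
          mul_le_mul h1 h2 h3 (le_trans (by positivity) h1)
        have h6 : (4:ℝ)^N * ((2:ℝ)⁻¹)^N = (2:ℝ)^N := by
          rw [← mul_pow]; norm_num
        linarith
      rw [e1, e2, e3]
      linarith
    exact hval.trans (hc hmem)
  obtain ⟨N, hN⟩ := pow_unbounded_of_one_lt (c + L * (β b - β a)) (by norm_num : (1:ℝ) < 2)
  have := key N
  linarith

end Aux11
noncomputable section Aux12
open MeasureTheory

variable {a b : ℝ} {α β f g : ℝ → ℝ}

lemma monoOn_congr {s : Set ℝ} (h : ∀ x, f x = g x) (hf : MonotoneOn f s) : MonotoneOn g s := by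
  have : f = g := funext h
  rwa [← this]

lemma lowerRDS_neg (β f : ℝ → ℝ) :
    lowerRDS a b β f = - upperRDS a b β (fun t => -(f t)) := by
  have h := upperRDS_neg (a := a) (b := b) β (fun t => -(f t))
  have e : (fun t => -(-(f t))) = f := funext fun t => neg_neg _
  rw [e] at h
  linarith

/-- junk integrability: peaks aligned with jumps -/
lemma RDSIntegrableInc_junk (hab : a < b) (hβ : MonotoneOn β (Set.Icc a b))
    (t : ℕ → ℝ) (htm : ∀ n, t n ∈ Set.Icc a b)
    (hjump : ∀ n, ((2:ℝ)⁻¹)^n ≤ muPt a b β (t n)) {L : ℝ} (hL0 : 0 ≤ L)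
    (hL : ∀ s ∈ Set.Icc a b, -L ≤ g s) (hg : ∀ n, (4:ℝ)^n ≤ g (t n))
    (hub : ¬∃ M, ∀ s ∈ Set.Icc a b, g s ≤ M) :
    RDSIntegrableInc a b β g := by
  unfold RDSIntegrableInc
  rw [upperRDS_of_unbddAbove hub, lowerRDS_junk hab hβ t htm hjump hL0 hL hg]

lemma RDSIntegrableInc_of_neg (h : RDSIntegrableInc a b β (fun t => -(g t))) :
    RDSIntegrableInc a b β g := by
  unfold RDSIntegrableInc at h ⊢
  have h1 := upperRDS_neg (a := a) (b := b) β g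
  have h2 := lowerRDS_neg (a := a) (b := b) β g
  linarith

/-- doubly unbounded functions are trivially integrable against anything -/
lemma RDSIntegrableInc_of_doubly_unbdd (hub : ¬∃ M, ∀ s ∈ Set.Icc a b, g s ≤ M)
    (hlb : ¬∃ M, ∀ s ∈ Set.Icc a b, M ≤ g s) (β : ℝ → ℝ) :
    RDSIntegrableInc a b β g := by
  unfold RDSIntegrableInc
  rw [upperRDS_of_unbddAbove hub, lowerRDS_of_unbddBelow hlb]

/-- well-definedness of the BV RDS integral (bounded case) -/
lemma RDSIntegral_eq (hab : a < b) {M : ℝ} (hM : ∀ t ∈ Set.Icc a b, |f t| ≤ M)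
    (h : RDSIntegrable a b α f) {p m : ℝ → ℝ} (hp : MonotoneOn p (Set.Icc a b))
    (hm : MonotoneOn m (Set.Icc a b)) (hdec : ∀ t ∈ Set.Icc a b, α t = p t - m t)
    (hpi : RDSIntegrableInc a b p f) (hmi : RDSIntegrableInc a b m f) :
    RDSIntegral a b α f = upperRDS a b p f - upperRDS a b m f := by
  rw [RDSIntegral, dif_pos h]
  obtain ⟨hp', hm', hdec', hpi', hmi'⟩ := h.choose_spec.choose_spec
  show upperRDS a b h.choose f - upperRDS a b h.choose_spec.choose f = _
  set p' := h.choose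
  set m' := h.choose_spec.choose
  have e1 : Set.EqOn (fun t => p' t + m t) (fun t => p t + m' t) (Set.Icc a b) := by
    intro t ht
    have := hdec t ht
    have := hdec' t ht
    simp only
    linarith
  have A := (int_add hp' hm hab hM hpi' hmi).2
  have B := (int_add hp hm' hab hM hpi hmi').2
  have C := upperRDS_congr (hp'.addOn hm) hab e1 f
  rw [A, B] at C
  linarith

end Aux12
noncomputable section Aux13
open MeasureTheory

variable {a b : ℝ} {α f p m : ℝ → ℝ}

lemma abs_integral_le (hab : a < b) (hα : BoundedVariationOn α (Set.Icc a b))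
    {M : ℝ} (hM : ∀ t ∈ Set.Icc a b, |f t| ≤ M)
    (hp : MonotoneOn p (Set.Icc a b)) (hm : MonotoneOn m (Set.Icc a b))
    (hdec : ∀ t ∈ Set.Icc a b, α t = p t - m t)
    (hpi : RDSIntegrableInc a b p f) (hmi : RDSIntegrableInc a b m f) :
    |upperRDS a b p f - upperRDS a b m f| ≤
      upperRDS a b (fun t => p t + m t) (fun t => |f t|)
        - upperRDS a b (fun t => p t + m t - (eVariationOn α (Set.Icc a t)).toReal)
            (fun t => |f t|) := by
  set V : ℝ → ℝ := fun t => (eVariationOn α (Set.Icc a t)).toReal with hVdef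
  set βp : ℝ → ℝ := fun t => p t + m t with hβpdef
  set βm : ℝ → ℝ := fun t => p t + m t - V t with hβmdef
  have hV : MonotoneOn V (Set.Icc a b) := var_mono hα
  have hβp : MonotoneOn βp (Set.Icc a b) := hp.addOn hm
  have hβm : MonotoneOn βm (Set.Icc a b) := var_sum_sub_mono hα hp hm hdec
  have hdiff : MonotoneOn (fun t => βp t - βm t) (Set.Icc a b) :=
    monoOn_congr (fun x => by simp only [hβpdef, hβmdef]; try ring) hV
  have hdiff2 : MonotoneOn (fun t => βp t - V t) (Set.Icc a b) :=
    monoOn_congr (fun x => by simp only [hβpdef, hβmdef]; try ring) hβm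
  have h1 : MonotoneOn (fun t => V t - p t + m t) (Set.Icc a b) :=
    monoOn_congr (fun x => by ring) (var_sub_alpha_mono hα hp hm hdec)
  have h2 : MonotoneOn (fun t => V t + p t - m t) (Set.Icc a b) :=
    monoOn_congr (fun x => by ring) (var_add_alpha_mono hα hp hm hdec)
  have h1' : MonotoneOn (fun t => V t - m t + p t) (Set.Icc a b) :=
    monoOn_congr (fun x => by ring) (var_add_alpha_mono hα hp hm hdec)
  have h2' : MonotoneOn (fun t => V t + m t - p t) (Set.Icc a b) :=
    monoOn_congr (fun x => by ring) (var_sub_alpha_mono hα hp hm hdec)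
  have hM' : ∀ t ∈ Set.Icc a b, |(|f t|)| ≤ M := fun t ht => by
    rw [abs_abs]; exact hM t ht
  have hβpi : RDSIntegrableInc a b βp f := (int_add hp hm hab hM hpi hmi).1
  have hβmi : RDSIntegrableInc a b βm f := int_dominated hβm hβp hdiff hab hM hβpi
  have hβpa : RDSIntegrableInc a b βp (fun t => |f t|) := int_abs hβp hab hM hβpi
  have hβma : RDSIntegrableInc a b βm (fun t => |f t|) := int_abs hβm hab hM hβmi
  have key : ∀ ε > (0:ℝ), |upperRDS a b p f - upperRDS a b m f| ≤
      (upperRDS a b βp (fun t => |f t|) - upperRDS a b βm (fun t => |f t|)) + 5*ε := by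
    intro ε hε
    obtain ⟨R, u, v, hu, hv, hvf, hfu, hd1, hd2⟩ := brackets₂ hp hm hab hM hpi hmi ε hε
    set U' : ℝ → ℝ := fun t => max (u t) (-(v t)) with hU'def
    set V' : ℝ → ℝ := fun t => max (v t) (-(u t)) with hV'def
    have hU's : IsStepOn a b U' R := isStepOn_map2 hu hv (fun x y => max x (-y))
    have hV's : IsStepOn a b V' R := isStepOn_map2 hv hu (fun x y => max x (-y))
    have hV'f : ∀ t ∈ Set.Icc a b, V' t ≤ |f t| := by
      intro t ht
      simp only [hV'def]
      refine max_le ((hvf t ht).trans (le_abs_self _)) ?_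
      rw [neg_le]
      exact (neg_abs_le _).trans (hfu t ht)
    have hfU' : ∀ t ∈ Set.Icc a b, |f t| ≤ U' t := by
      intro t ht
      simp only [hU'def]
      have k1 : f t ≤ max (u t) (-(v t)) := (hfu t ht).trans (le_max_left _ _)
      have k2 : -(f t) ≤ max (u t) (-(v t)) := (neg_le_neg (hvf t ht)).trans (le_max_right _ _)
      exact abs_le.2 ⟨by linarith, k1⟩
    have hUV'le : ∀ t ∈ Set.Icc a b, U' t - V' t ≤ u t - v t := by
      intro t ht
      simp only [hU'def, hV'def]
      have k1 : v t ≤ max (v t) (-(u t)) := le_max_left _ _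
      have k2 : -(u t) ≤ max (v t) (-(u t)) := le_max_right _ _
      have k3 : max (u t) (-(v t)) ≤ (u t - v t) + max (v t) (-(u t)) :=
        max_le (by linarith) (by linarith)
      linarith
    have hUV'nn : ∀ t ∈ Set.Icc a b, 0 ≤ U' t - V' t := by
      intro t ht
      have huv : v t ≤ u t := (hvf t ht).trans (hfu t ht)
      simp only [hU'def, hV'def]
      have : max (v t) (-(u t)) ≤ max (u t) (-(v t)) :=
        max_le (huv.trans (le_max_left _ _)) ((neg_le_neg huv).trans (le_max_right _ _))
      linarith
    have hvabs : ∀ t ∈ Set.Icc a b, |v t| ≤ U' t := by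
      intro t ht
      have huv : v t ≤ u t := (hvf t ht).trans (hfu t ht)
      simp only [hU'def]
      refine abs_le.2 ⟨?_, huv.trans (le_max_left _ _)⟩
      have := le_max_right (u t) (-(v t))
      linarith
    -- bounds of envelopes by step values
    have hup1 : upperRDS a b p f ≤ stepInt a b p R u := upperRDS_le_step hp hab hM hu hfu
    have hup2 : stepInt a b p R v ≤ upperRDS a b p f := by
      have := step_le_lowerRDS hp hab hM hv hvf
      rw [hpi] at this; exact this
    have hum1 : upperRDS a b m f ≤ stepInt a b m R u := upperRDS_le_step hm hab hM hu hfu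
    have hum2 : stepInt a b m R v ≤ upperRDS a b m f := by
      have := step_le_lowerRDS hm hab hM hv hvf
      rw [hmi] at this; exact this
    -- the signed step inequalities
    have hsgn1 : stepInt a b p R v - stepInt a b m R v ≤ stepInt a b V R U' :=
      stepInt_signed_le hp hm hV h1 h2 hab R hvabs
    have hsgn2 : stepInt a b m R v - stepInt a b p R v ≤ stepInt a b V R U' :=
      stepInt_signed_le hm hp hV h1' h2' hab R hvabs
    -- decomposition of the variation step integral
    have eβ : ∀ w : ℝ → ℝ, stepInt a b βp R w = stepInt a b βm R w + stepInt a b V R w := by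
      intro w
      have e : (fun t => βm t + V t) = βp := funext fun t => by
        simp only [hβpdef, hβmdef]; ring
      rw [← e]
      exact stepInt_add_int hβm hV hab R w
    -- bound on the variation integral of (u - v)
    have bound0 : stepInt a b V R (fun t => u t - v t) ≤ 2*ε := by
      have e1 : stepInt a b V R (fun t => u t - v t)
          ≤ stepInt a b βp R (fun t => u t - v t) :=
        stepInt_mono_int hV hβp hdiff2 hab R (fun t ht => sub_nonneg.2 ((hvf t ht).trans (hfu t ht)))
      have e2 : stepInt a b βp R (fun t => u t - v t)
          = stepInt a b p R (fun t => u t - v t) + stepInt a b m R (fun t => u t - v t) :=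
        stepInt_add_int hp hm hab R _
      rw [stepInt_sub_f p R u v, stepInt_sub_f m R u v] at e2
      linarith
    have bound1 : stepInt a b V R (fun t => U' t - V' t) ≤ 2*ε :=
      le_trans (stepInt_mono_f hV hab R hUV'le) bound0
    have bound2 : stepInt a b βm R (fun t => U' t - V' t) ≤ 2*ε := by
      have e1 : stepInt a b βm R (fun t => U' t - V' t)
          ≤ stepInt a b βp R (fun t => U' t - V' t) :=
        stepInt_mono_int hβm hβp hdiff hab R hUV'nn
      have e2 : stepInt a b βp R (fun t => U' t - V' t)
          ≤ stepInt a b βp R (fun t => u t - v t) := stepInt_mono_f hβp hab R hUV'le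
      have e3 : stepInt a b βp R (fun t => u t - v t)
          = stepInt a b p R (fun t => u t - v t) + stepInt a b m R (fun t => u t - v t) :=
        stepInt_add_int hp hm hab R _
      rw [stepInt_sub_f p R u v, stepInt_sub_f m R u v] at e3
      linarith
    have eVU : stepInt a b V R U' ≤ stepInt a b V R V' + 2*ε := by
      have := stepInt_sub_f V R U' V'
      linarith
    have eVV : stepInt a b V R V' = stepInt a b βp R V' - stepInt a b βm R V' := by
      have := eβ V'; linarith
    have eβpV : stepInt a b βp R V' ≤ upperRDS a b βp (fun t => |f t|) := by
      have := step_le_lowerRDS hβp hab hM' hV's hV'f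
      rw [hβpa] at this; exact this
    have eβmV : upperRDS a b βm (fun t => |f t|) - 2*ε ≤ stepInt a b βm R V' := by
      have e1 : upperRDS a b βm (fun t => |f t|) ≤ stepInt a b βm R U' :=
        upperRDS_le_step hβm hab hM' hU's hfU'
      have e2 := stepInt_sub_f βm R U' V'
      linarith
    rw [abs_le]
    constructor
    · -- lower bound
      have chain : upperRDS a b m f - upperRDS a b p f ≤ stepInt a b V R U' + ε := by
        have : stepInt a b m R u ≤ stepInt a b m R v + ε := by linarith
        linarith
      have : stepInt a b V R U' ≤ (upperRDS a b βp (fun t => |f t|)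
          - upperRDS a b βm (fun t => |f t|)) + 4*ε := by linarith
      linarith
    · have chain : upperRDS a b p f - upperRDS a b m f ≤ stepInt a b V R U' + ε := by
        have : stepInt a b p R u ≤ stepInt a b p R v + ε := by linarith
        linarith
      have : stepInt a b V R U' ≤ (upperRDS a b βp (fun t => |f t|)
          - upperRDS a b βm (fun t => |f t|)) + 4*ε := by linarith
      linarith
  by_contra hcon
  push_neg at hcon
  set X := |upperRDS a b p f - upperRDS a b m f|
  set Y := upperRDS a b βp (fun t => |f t|) - upperRDS a b βm (fun t => |f t|)
  have : X ≤ Y + 5 * ((X - Y)/6) := key ((X - Y)/6) (by simp only [X, Y] at hcon ⊢; linarith)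
  simp only [X, Y] at this hcon
  linarith

end Aux13
theorem stmt12 (a b : ℝ) (hab : a < b) (α f : ℝ → ℝ)
    (hα : BoundedVariationOn α (Set.Icc a b)) (hf : RDSIntegrable a b α f) :
    RDSIntegrable a b α (fun t => |f t|) ∧
    RDSIntegrable a b (fun t => (eVariationOn α (Set.Icc a t)).toReal) f ∧
    |RDSIntegral a b α f| ≤
      RDSIntegral a b (fun t => (eVariationOn α (Set.Icc a t)).toReal)
        (fun t => |f t|) := by
  classical
  have hf' := hf
  obtain ⟨p, m, hp, hm, hdec, hpi, hmi⟩ := hf'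
  set V : ℝ → ℝ := fun t => (eVariationOn α (Set.Icc a t)).toReal with hVdef
  have hV : MonotoneOn V (Set.Icc a b) := var_mono hα
  by_cases hbdd : BddOn a b f
  · -- bounded case
    obtain ⟨M, hM⟩ := hbdd
    have hM' : ∀ t ∈ Set.Icc a b, |(|f t|)| ≤ M := fun t ht => by
      rw [abs_abs]; exact hM t ht
    have hβp : MonotoneOn (fun t => p t + m t) (Set.Icc a b) := hp.addOn hm
    have hβm : MonotoneOn (fun t => p t + m t - V t) (Set.Icc a b) :=
      var_sum_sub_mono hα hp hm hdec
    have hβpi : RDSIntegrableInc a b (fun t => p t + m t) f := (int_add hp hm hab hM hpi hmi).1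
    have hβmi : RDSIntegrableInc a b (fun t => p t + m t - V t) f :=
      int_dominated hβm hβp (monoOn_congr (fun x => by ring) hV) hab hM hβpi
    have hVdec : ∀ t ∈ Set.Icc a b, V t = (p t + m t) - (p t + m t - V t) :=
      fun t ht => by ring
    have hir : RDSIntegrable a b V (fun t => |f t|) :=
      ⟨fun t => p t + m t, fun t => p t + m t - V t, hβp, hβm, hVdec,
        int_abs hβp hab hM hβpi, int_abs hβm hab hM hβmi⟩
    refine ⟨⟨p, m, hp, hm, hdec, int_abs hp hab hM hpi, int_abs hm hab hM hmi⟩,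
      ⟨fun t => p t + m t, fun t => p t + m t - V t, hβp, hβm, hVdec, hβpi, hβmi⟩, ?_⟩
    rw [RDSIntegral_eq hab hM hf hp hm hdec hpi hmi,
      RDSIntegral_eq hab hM' hir hβp hβm hVdec (int_abs hβp hab hM hβpi)
        (int_abs hβm hab hM hβmi)]
    exact abs_integral_le hab hα hM hp hm hdec hpi hmi
  · -- unbounded case
    rw [BddOn] at hbdd
    push_neg at hbdd
    have habs : ¬∃ M, ∀ s ∈ Set.Icc a b, |f s| ≤ M := by
      rintro ⟨M, hM⟩
      obtain ⟨t, ht, hgt⟩ := hbdd M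
      exact absurd (hM t ht) (not_le.2 hgt)
    choose tseq htm hpk using fun n : ℕ => hbdd ((4:ℝ)^n)
    have hDm : Monotone (jumpF b tseq) := jumpF_mono b tseq
    have hjmp := jumpF_jump hab tseq htm
    have goal1 : RDSIntegrable a b α (fun t => |f t|) := by
      have hj1 : ∀ (q : ℝ → ℝ), MonotoneOn q (Set.Icc a b) →
          ∀ n, ((2:ℝ)⁻¹)^n ≤ muPt a b (fun t => q t + jumpF b tseq t) (tseq n) := by
        intro q hq n
        rw [muPt_add' hq (hDm.monotoneOn _) hab (htm n)]
        have h2 := muPt_nonneg' hq hab (htm n)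
        have h3 := hjmp n
        linarith
      have hinc : ∀ (q : ℝ → ℝ), MonotoneOn q (Set.Icc a b) →
          RDSIntegrableInc a b (fun t => q t + jumpF b tseq t) (fun t => |f t|) := by
        intro q hq
        refine RDSIntegrableInc_junk hab (hq.addOn (hDm.monotoneOn _)) tseq htm (hj1 q hq)
          (L := 0) le_rfl (fun s hs => by simpa using abs_nonneg (f s))
          (fun n => (hpk n).le) habs
      exact ⟨fun t => p t + jumpF b tseq t, fun t => m t + jumpF b tseq t,
        hp.addOn (hDm.monotoneOn _), hm.addOn (hDm.monotoneOn _),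
        fun t ht => by have := hdec t ht; simp only; linarith,
        hinc p hp, hinc m hm⟩
    have goal2 : RDSIntegrable a b V f := by
      by_cases hub : ∃ Mu, ∀ s ∈ Set.Icc a b, f s ≤ Mu
      · -- bounded above hence unbounded below; use peaks of -f
        obtain ⟨Mu, hMu⟩ := hub
        have hlb : ¬∃ Ml, ∀ s ∈ Set.Icc a b, Ml ≤ f s := by
          rintro ⟨Ml, hMl⟩
          exact habs ⟨max Mu (-Ml), fun s hs =>
            abs_le.2 ⟨by have := hMl s hs; have := le_max_right Mu (-Ml); linarith,
              (hMu s hs).trans (le_max_left _ _)⟩⟩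
        have hneg : ∀ n : ℕ, ∃ t ∈ Set.Icc a b, (4:ℝ)^n < -(f t) := by
          intro n
          push_neg at hlb
          obtain ⟨t, ht, hlt⟩ := hlb (-((4:ℝ)^n))
          exact ⟨t, ht, by linarith⟩
        choose t2 ht2 hpk2 using hneg
        have hD2m : Monotone (jumpF b t2) := jumpF_mono b t2
        have hjmp2 := jumpF_jump hab t2 ht2
        have hubneg : ¬∃ M, ∀ s ∈ Set.Icc a b, -(f s) ≤ M := by
          rintro ⟨M, hMl⟩
          exact hlb ⟨-M, fun s hs => by have := hMl s hs; linarith⟩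
        have hj1 : ∀ (q : ℝ → ℝ), MonotoneOn q (Set.Icc a b) →
            ∀ n, ((2:ℝ)⁻¹)^n ≤ muPt a b (fun t => q t + jumpF b t2 t) (t2 n) := by
          intro q hq n
          rw [muPt_add' hq (hD2m.monotoneOn _) hab (ht2 n)]
          have h2 := muPt_nonneg' hq hab (ht2 n)
          have h3 := hjmp2 n
          linarith
        have hinc : ∀ (q : ℝ → ℝ), MonotoneOn q (Set.Icc a b) →
            RDSIntegrableInc a b (fun t => q t + jumpF b t2 t) f := by
          intro q hq
          refine RDSIntegrableInc_of_neg ?_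
          refine RDSIntegrableInc_junk hab (hq.addOn (hD2m.monotoneOn _)) t2 ht2 (hj1 q hq)
            (L := max 0 Mu) (le_max_left _ _)
            (fun s hs => by have := (hMu s hs).trans (le_max_right 0 Mu); linarith)
            (fun n => (hpk2 n).le) hubneg
        have hzm : MonotoneOn (fun _ : ℝ => (0:ℝ)) (Set.Icc a b) := monotoneOn_const
        refine ⟨fun t => V t + jumpF b t2 t, fun t => 0 + jumpF b t2 t,
          hV.addOn (hD2m.monotoneOn _), hzm.addOn (hD2m.monotoneOn _),
          fun t ht => by simp only; ring, hinc V hV, hinc (fun _ => 0) hzm⟩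
      · by_cases hlb : ∃ Ml, ∀ s ∈ Set.Icc a b, Ml ≤ f s
        · -- bounded below, unbounded above: peaks of f
          obtain ⟨Ml, hMl⟩ := hlb
          have hup : ∀ n : ℕ, ∃ t ∈ Set.Icc a b, (4:ℝ)^n < f t := by
            intro n
            push_neg at hub
            obtain ⟨t, ht, hlt⟩ := hub ((4:ℝ)^n)
            exact ⟨t, ht, hlt⟩
          choose t2 ht2 hpk2 using hup
          have hD2m : Monotone (jumpF b t2) := jumpF_mono b t2
          have hjmp2 := jumpF_jump hab t2 ht2
          have hj1 : ∀ (q : ℝ → ℝ), MonotoneOn q (Set.Icc a b) →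
              ∀ n, ((2:ℝ)⁻¹)^n ≤ muPt a b (fun t => q t + jumpF b t2 t) (t2 n) := by
            intro q hq n
            rw [muPt_add' hq (hD2m.monotoneOn _) hab (ht2 n)]
            have h2 := muPt_nonneg' hq hab (ht2 n)
            have h3 := hjmp2 n
            linarith
          have hinc : ∀ (q : ℝ → ℝ), MonotoneOn q (Set.Icc a b) →
              RDSIntegrableInc a b (fun t => q t + jumpF b t2 t) f := by
            intro q hq
            refine RDSIntegrableInc_junk hab (hq.addOn (hD2m.monotoneOn _)) t2 ht2 (hj1 q hq)
              (L := max 0 (-Ml)) (le_max_left _ _)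
              (fun s hs => by
                have h1 := hMl s hs
                have h2 := le_max_right 0 (-Ml)
                linarith)
              (fun n => (hpk2 n).le) hub
          have hzm : MonotoneOn (fun _ : ℝ => (0:ℝ)) (Set.Icc a b) := monotoneOn_const
          refine ⟨fun t => V t + jumpF b t2 t, fun t => 0 + jumpF b t2 t,
            hV.addOn (hD2m.monotoneOn _), hzm.addOn (hD2m.monotoneOn _),
            fun t ht => by simp only; ring, hinc V hV, hinc (fun _ => 0) hzm⟩
        · -- doubly unbounded
          refine ⟨V, fun _ => 0, hV, monotoneOn_const, fun t ht => by simp, ?_, ?_⟩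
          · exact RDSIntegrableInc_of_doubly_unbdd hub hlb V
          · exact RDSIntegrableInc_of_doubly_unbdd hub hlb _
    refine ⟨goal1, goal2, ?_⟩
    have hLHS : RDSIntegral a b α f = 0 := by
      rw [RDSIntegral, dif_pos hf]
      obtain ⟨hc1m, hc2m, hcdec, hc1i, hc2i⟩ := hf.choose_spec.choose_spec
      show upperRDS a b hf.choose f - upperRDS a b hf.choose_spec.choose f = 0
      by_cases hub : ∃ Mu, ∀ s ∈ Set.Icc a b, f s ≤ Mu
      · obtain ⟨Mu, hMu⟩ := hub
        have hlb : ¬∃ Ml, ∀ s ∈ Set.Icc a b, Ml ≤ f s := by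
          rintro ⟨Ml, hMl⟩
          exact habs ⟨max Mu (-Ml), fun s hs =>
            abs_le.2 ⟨by have := hMl s hs; have := le_max_right Mu (-Ml); linarith,
              (hMu s hs).trans (le_max_left _ _)⟩⟩
        have e1 : upperRDS a b hf.choose f = 0 := by
          rw [RDSIntegrableInc] at hc1i
          rw [← hc1i]
          exact lowerRDS_of_unbddBelow hlb
        have e2 : upperRDS a b hf.choose_spec.choose f = 0 := by
          rw [RDSIntegrableInc] at hc2i
          rw [← hc2i]
          exact lowerRDS_of_unbddBelow hlb
        rw [e1, e2]; ring
      · rw [upperRDS_of_unbddAbove hub, upperRDS_of_unbddAbove hub]; ring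
    have hRHS : RDSIntegral a b V (fun t => |f t|) = 0 := by
      rw [RDSIntegral]
      split_ifs with h
      · show upperRDS a b h.choose (fun t => |f t|)
            - upperRDS a b h.choose_spec.choose (fun t => |f t|) = 0
        rw [upperRDS_of_unbddAbove habs, upperRDS_of_unbddAbove habs]; ring
      · rfl
    rw [hLHS, hRHS]
    simp
end

section
/- Uniform convergence theorem for the RDS integral: if α ∈ BV[a,b], each f_k is RDS integrable with respect to α, and f_k → f uniformly on [a,b], then f is RDS integrable with respect to α and lim_{k→∞} ∫_a^b f_k dα = ∫_a^b f dα. -/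
open Set Filter Topology
open scoped Classical

open MeasureTheory
open scoped ENNReal

noncomputable section
namespace RDS13

/-- clamp of γ to [a,b] -/
def cl (a b : ℝ) (γ : ℝ → ℝ) : ℝ → ℝ := fun t => γ (max a (min b t))

variable {a b : ℝ} {γ : ℝ → ℝ}

lemma cl_eq_of_mem (ht : t ∈ Icc a b) : cl a b γ t = γ t := by
  rcases ht with ⟨h1, h2⟩
  simp [cl, min_eq_right h2, max_eq_right h1]

lemma cl_of_le (h : t ≤ a) (hab : a ≤ b) : cl a b γ t = γ a := by
  simp [cl, max_eq_left (le_trans (min_le_right b t) h)]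

lemma cl_of_ge (h : b ≤ t) : cl a b γ t = γ (max a b) := by
  simp [cl, min_eq_left h]

lemma cl_mono (hab : a ≤ b) (hγ : MonotoneOn γ (Icc a b)) : Monotone (cl a b γ) := by
  intro s t hst
  have hmem : ∀ u : ℝ, max a (min b u) ∈ Icc a b := fun u =>
    ⟨le_max_left _ _, max_le hab (min_le_left _ _)⟩
  exact hγ (hmem s) (hmem t) (max_le_max le_rfl (min_le_min le_rfl hst))


/-- Stieltjes function associated to the clamped integrator. -/
def stj (a b : ℝ) (γ : ℝ → ℝ) : StieltjesFunction ℝ :=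
  if h : Monotone (cl a b γ) then h.stieltjesFunction else StieltjesFunction.id

/-- Associated measure. -/
def mu (a b : ℝ) (γ : ℝ → ℝ) : Measure ℝ := (stj a b γ).measure

lemma stj_apply (h : Monotone (cl a b γ)) (t : ℝ) :
    stj a b γ t = Function.rightLim (cl a b γ) t := by
  simp only [stj, dif_pos h]
  exact h.stieltjesFunction_eq t

section mono
variable (hab : a < b) (hγ : MonotoneOn γ (Icc a b))
include hab hγ

lemma cl_mono' : Monotone (cl a b γ) := cl_mono hab.le hγ

/-- value of F on (-∞, a) region: F t = γ a for t < a; also rightLim at points ≥ b is γ b. -/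
lemma rightLim_cl_of_lt_a (ht : t < a) : Function.rightLim (cl a b γ) t = γ a := by
  apply rightLim_eq_of_tendsto (α := ℝ) (f := cl a b γ)
  apply Tendsto.congr' _ tendsto_const_nhds
  filter_upwards [Ioo_mem_nhdsGT_of_mem (by exact ⟨le_rfl, ht⟩ : t ∈ Ico t a)] with s hs
  exact (cl_of_le hs.2.le hab.le).symm

lemma rightLim_cl_of_ge_b (ht : b ≤ t) : Function.rightLim (cl a b γ) t = γ b := by
  apply rightLim_eq_of_tendsto (α := ℝ) (f := cl a b γ)
  apply Tendsto.congr' _ tendsto_const_nhds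
  filter_upwards [self_mem_nhdsWithin] with s hs
  rw [cl_of_ge (le_trans ht (le_of_lt hs)), max_eq_right hab.le]

lemma rightLim_cl_eq (ht : t ∈ Ico a b) :
    Function.rightLim (cl a b γ) t = Function.rightLim γ t := by
  have h1 : Tendsto (cl a b γ) (𝓝[>] t) (𝓝 (Function.rightLim (cl a b γ) t)) :=
    (cl_mono' hab hγ).tendsto_rightLim t
  have h2 : Tendsto γ (𝓝[>] t) (𝓝 (Function.rightLim (cl a b γ) t)) := by
    apply h1.congr'
    filter_upwards [Ioo_mem_nhdsGT_of_mem (by exact ⟨le_rfl, ht.2⟩ : t ∈ Ico t b)] with s hs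
    exact cl_eq_of_mem ⟨le_trans ht.1 hs.1.le, hs.2.le⟩
  exact (rightLim_eq_of_tendsto h2).symm

lemma leftLim_cl_of_le_a (ht : t ≤ a) : Function.leftLim (cl a b γ) t = γ a := by
  apply leftLim_eq_of_tendsto (α := ℝ) (f := cl a b γ)
  apply Tendsto.congr' _ tendsto_const_nhds
  filter_upwards [self_mem_nhdsWithin] with s (hs : s ∈ Iio t)
  exact (cl_of_le (le_trans hs.out.le ht) hab.le).symm

lemma leftLim_cl_eq (ht : t ∈ Ioc a b) :
    Function.leftLim (cl a b γ) t = Function.leftLim γ t := by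
  have h1 : Tendsto (cl a b γ) (𝓝[<] t) (𝓝 (Function.leftLim (cl a b γ) t)) :=
    (cl_mono' hab hγ).tendsto_leftLim t
  have h2 : Tendsto γ (𝓝[<] t) (𝓝 (Function.leftLim (cl a b γ) t)) := by
    apply h1.congr'
    filter_upwards [Ioo_mem_nhdsLT_of_mem (by exact ⟨ht.1, le_rfl⟩ : t ∈ Ioc a t)] with s hs
    exact cl_eq_of_mem ⟨hs.1.le, le_trans hs.2.le ht.2⟩
  exact (leftLim_eq_of_tendsto h2).symm

/-- F t = rLim b γ t on Icc. -/
lemma stj_eq_rLim (ht : t ∈ Icc a b) : stj a b γ t = rLim b γ t := by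
  rw [stj_apply (cl_mono' hab hγ)]
  rcases lt_or_eq_of_le ht.2 with h | h
  · rw [rLim, if_pos h, rightLim_cl_eq hab hγ ⟨ht.1, h⟩]
  · simp only [rLim, h, lt_irrefl, if_false]; exact rightLim_cl_of_ge_b hab hγ le_rfl

/-- leftLim F t = lLim a γ t on Icc. -/
lemma leftLim_stj_eq (ht : t ∈ Icc a b) : Function.leftLim (stj a b γ) t = lLim a γ t := by
  have hm := cl_mono' hab hγ
  have key : Function.leftLim (stj a b γ) t = Function.leftLim (cl a b γ) t := by
    apply leftLim_eq_of_tendsto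
    have h1 : Tendsto (cl a b γ) (𝓝[<] t) (𝓝 (Function.leftLim (cl a b γ) t)) :=
      hm.tendsto_leftLim t
    apply tendsto_of_tendsto_of_tendsto_of_le_of_le' h1 tendsto_const_nhds
    · filter_upwards with s
      rw [stj_apply hm]; exact hm.le_rightLim le_rfl
    · filter_upwards [self_mem_nhdsWithin] with s (hs : s ∈ Iio t)
      rw [stj_apply hm]; exact hm.rightLim_le_leftLim hs
  rcases lt_or_eq_of_le ht.1 with h | h
  · rw [key, lLim, if_pos h, leftLim_cl_eq hab hγ ⟨h, ht.2⟩]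
  · rw [key, ← h]
    simp only [lLim, lt_irrefl, if_false]
    exact leftLim_cl_of_le_a hab hγ le_rfl


lemma stj_tendsto_atBot : Tendsto (stj a b γ) atBot (𝓝 (γ a)) := by
  apply Tendsto.congr' _ (tendsto_const_nhds (α := ℝ))
  filter_upwards [eventually_lt_atBot a] with t ht
  rw [stj_apply (cl_mono' hab hγ), rightLim_cl_of_lt_a hab hγ ht]

lemma stj_tendsto_atTop : Tendsto (stj a b γ) atTop (𝓝 (γ b)) := by
  apply Tendsto.congr' _ (tendsto_const_nhds (α := ℝ))
  filter_upwards [eventually_ge_atTop b] with t ht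
  rw [stj_apply (cl_mono' hab hγ), rightLim_cl_of_ge_b hab hγ ht]

lemma mu_univ : mu a b γ univ = ENNReal.ofReal (γ b - γ a) :=
  (stj a b γ).measure_univ (stj_tendsto_atBot hab hγ) (stj_tendsto_atTop hab hγ)

lemma mu_fin : IsFiniteMeasure (mu a b γ) :=
  ⟨by rw [mu_univ hab hγ]; exact ENNReal.ofReal_lt_top⟩

lemma mu_singleton (ht : t ∈ Icc a b) :
    mu a b γ {t} = ENNReal.ofReal (muPt a b γ t) := by
  rw [mu, (stj a b γ).measure_singleton, muPt, stj_eq_rLim hab hγ ht, leftLim_stj_eq hab hγ ht]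

lemma muPt_nonneg (ht : t ∈ Icc a b) : 0 ≤ muPt a b γ t := by
  rw [muPt, ← stj_eq_rLim hab hγ ht, ← leftLim_stj_eq hab hγ ht, sub_nonneg]
  exact (stj a b γ).mono.leftLim_le le_rfl

lemma mu_Ioo (hc : c ∈ Icc a b) (hd : d ∈ Icc a b) :
    mu a b γ (Ioo c d) = ENNReal.ofReal (muIoo a b γ c d) := by
  rw [mu, (stj a b γ).measure_Ioo, muIoo, stj_eq_rLim hab hγ hc, leftLim_stj_eq hab hγ hd]

lemma muIoo_nonneg (hc : c ∈ Icc a b) (hd : d ∈ Icc a b) (hcd : c < d) :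
    0 ≤ muIoo a b γ c d := by
  rw [muIoo, ← stj_eq_rLim hab hγ hc, ← leftLim_stj_eq hab hγ hd, sub_nonneg]
  exact (stj a b γ).mono.le_leftLim hcd

lemma mu_singleton_toReal (ht : t ∈ Icc a b) :
    (mu a b γ {t}).toReal = muPt a b γ t := by
  rw [mu_singleton hab hγ ht, ENNReal.toReal_ofReal (muPt_nonneg hab hγ ht)]

lemma mu_Ioo_toReal (hc : c ∈ Icc a b) (hd : d ∈ Icc a b) (hcd : c < d) :
    (mu a b γ (Ioo c d)).toReal = muIoo a b γ c d := by
  rw [mu_Ioo hab hγ hc hd, ENNReal.toReal_ofReal (muIoo_nonneg hab hγ hc hd hcd)]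

lemma mu_Icc : mu a b γ (Icc a b) = ENNReal.ofReal (γ b - γ a) := by
  rw [mu, (stj a b γ).measure_Icc]
  have h1 : stj a b γ b = γ b := by
    rw [stj_eq_rLim hab hγ (right_mem_Icc.2 hab.le), rLim, if_neg (lt_irrefl b)]
  have h2 : Function.leftLim (stj a b γ) a = γ a := by
    rw [leftLim_stj_eq hab hγ (left_mem_Icc.2 hab.le), lLim, if_neg (lt_irrefl a)]
  rw [h1, h2]

lemma mu_Icc_toReal : (mu a b γ (Icc a b)).toReal = γ b - γ a := by
  rw [mu_Icc hab hγ, ENNReal.toReal_ofReal]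
  rw [sub_nonneg]
  exact hγ (left_mem_Icc.2 hab.le) (right_mem_Icc.2 hab.le) hab.le

end mono

lemma mu_congr (hab : a ≤ b) (h : ∀ t ∈ Icc a b, γ t = γ' t) : mu a b γ = mu a b γ' := by
  have hc : cl a b γ = cl a b γ' := by
    funext t
    exact h _ ⟨le_max_left _ _, max_le hab (min_le_left _ _)⟩
  exact congrArg (fun g => (if h : Monotone g then h.stieltjesFunction
    else StieltjesFunction.id).measure) hc

section add
variable {γ1 γ2 : ℝ → ℝ} (hab : a < b) (hγ1 : MonotoneOn γ1 (Icc a b)) (hγ2 : MonotoneOn γ2 (Icc a b))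
include hab hγ1 hγ2

lemma mono_add : MonotoneOn (fun t => γ1 t + γ2 t) (Icc a b) := fun x hx y hy hxy =>
  add_le_add (hγ1 hx hy hxy) (hγ2 hx hy hxy)

lemma stj_add (t : ℝ) :
    stj a b (fun t => γ1 t + γ2 t) t = stj a b γ1 t + stj a b γ2 t := by
  have h12 : Monotone (cl a b (fun t => γ1 t + γ2 t)) := cl_mono' hab (mono_add hab hγ1 hγ2)
  rw [stj_apply h12, stj_apply (cl_mono' hab hγ1), stj_apply (cl_mono' hab hγ2)]
  apply rightLim_eq_of_tendsto
  have : cl a b (fun t => γ1 t + γ2 t) = fun s => cl a b γ1 s + cl a b γ2 s := rfl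
  rw [this]
  exact ((cl_mono' hab hγ1).tendsto_rightLim t).add ((cl_mono' hab hγ2).tendsto_rightLim t)

lemma mu_add : mu a b (fun t => γ1 t + γ2 t) = mu a b γ1 + mu a b γ2 := by
  haveI := mu_fin hab (mono_add hab hγ1 hγ2)
  haveI : IsLocallyFiniteMeasure (mu a b (fun t => γ1 t + γ2 t)) := inferInstance
  apply Measure.ext_of_Ioc
  intro c d hcd
  rw [Measure.add_apply, mu, mu, mu, (stj a b _).measure_Ioc, (stj a b _).measure_Ioc,
    (stj a b _).measure_Ioc, stj_add hab hγ1 hγ2, stj_add hab hγ1 hγ2]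
  rw [show stj a b γ1 d + stj a b γ2 d - (stj a b γ1 c + stj a b γ2 c)
      = (stj a b γ1 d - stj a b γ1 c) + (stj a b γ2 d - stj a b γ2 c) by ring]
  rw [ENNReal.ofReal_add (sub_nonneg.2 ((stj a b γ1).mono hcd.le)) (sub_nonneg.2 ((stj a b γ2).mono hcd.le))]

end add

lemma mu_le {δ γ : ℝ → ℝ} (hab : a < b) (hδ : MonotoneOn δ (Icc a b))
    (hsub : MonotoneOn (fun t => γ t - δ t) (Icc a b)) : mu a b δ ≤ mu a b γ := by
  have hγ : MonotoneOn γ (Icc a b) := by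
    have := mono_add hab hδ hsub
    simpa using this
  have : mu a b γ = mu a b δ + mu a b (fun t => γ t - δ t) := by
    rw [← mu_add hab hδ hsub]
    exact mu_congr hab.le (fun t _ => by ring)
  rw [this]
  exact Measure.le_add_right le_rfl


section partition
variable {P : RDSPartition a b}

lemma px_le (hij : i ≤ j) (hj : j ≤ P.n) : P.x i ≤ P.x j := by
  induction j with
  | zero => simp_all
  | succ k ih =>
    rcases Nat.lt_succ_iff_lt_or_eq.1 (Nat.lt_succ_of_le hij) with h | h
    · exact le_trans (ih (Nat.lt_succ_iff.1 h) (le_trans (Nat.le_succ k) hj))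
        (P.mono k (Nat.lt_of_succ_le hj)).le
    · exact h ▸ le_rfl

lemma px_lt (hij : i < j) (hj : j ≤ P.n) : P.x i < P.x j :=
  lt_of_lt_of_le (P.mono i (Nat.lt_of_lt_of_le hij hj))
    (px_le (Nat.succ_le_of_lt hij) hj)

lemma px_mem (hi : i ≤ P.n) : P.x i ∈ Icc a b := by
  constructor
  · have h := px_le (P := P) (Nat.zero_le i) hi
    rwa [P.first] at h
  · have h := px_le (P := P) hi (le_refl P.n)
    rwa [P.last] at h

lemma index_lt (hi : i ≤ P.n) (hj : j ≤ P.n) (h : P.x i < P.x j) : i < j := by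
  by_contra hc
  exact absurd (px_le (Nat.le_of_not_lt hc) hi) (not_le.2 h)

lemma index_eq (hi : i ≤ P.n) (hj : j ≤ P.n) (h : P.x i = P.x j) : i = j := by
  rcases Nat.lt_trichotomy i j with hc | hc | hc
  · exact absurd h (px_lt hc hj).ne
  · exact hc
  · exact absurd h.symm (px_lt hc hi).ne

lemma mid_mem (hi : i < P.n) : (P.x i + P.x (i + 1)) / 2 ∈ Ioo (P.x i) (P.x (i + 1)) :=
  ⟨by linarith [P.mono i hi], by linarith [P.mono i hi]⟩

lemma notmem_Ioo (hj : j ≤ P.n) (hi : i < P.n) :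
    P.x j ∉ Ioo (P.x i) (P.x (i + 1)) := by
  rintro ⟨h1, h2⟩
  have hlt := index_lt (le_of_lt hi) hj h1
  have hlt2 := index_lt hj hi h2
  omega

lemma Ioo_disjoint (hi : i < P.n) (hj : j < P.n) (hne : i ≠ j) :
    Disjoint (Ioo (P.x i) (P.x (i + 1))) (Ioo (P.x j) (P.x (j + 1))) := by
  rw [Set.disjoint_left]
  rintro t ⟨h1, h2⟩ ⟨h3, h4⟩
  rcases Nat.lt_or_ge i j with hc | hc
  · have : P.x (i + 1) ≤ P.x j := px_le hc hj.le
    linarith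
  · have hc' : j < i := Nat.lt_of_le_of_ne hc (Ne.symm hne)
    have : P.x (j + 1) ≤ P.x i := px_le hc' hi.le
    linarith

lemma icc_eq_union (hab : a < b) :
    Icc a b = (⋃ i ∈ Finset.range (P.n + 1), ({P.x i} : Set ℝ)) ∪
      ⋃ i ∈ Finset.range P.n, Ioo (P.x i) (P.x (i + 1)) := by
  apply Set.Subset.antisymm
  · intro t ht
    by_cases hsing : ∃ i, i ≤ P.n ∧ P.x i = t
    · obtain ⟨i, hi, hxi⟩ := hsing
      exact Or.inl (Set.mem_biUnion (Finset.mem_range.2 (Nat.lt_succ_of_le hi)) (by simp [hxi]))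
    · push_neg at hsing
      set F := (Finset.range (P.n + 1)).filter (fun i => P.x i < t) with hF
      have h0 : 0 ∈ F := by
        rw [hF, Finset.mem_filter]
        refine ⟨Finset.mem_range.2 (Nat.succ_pos _), ?_⟩
        have h0' : P.x 0 ≤ t := by rw [P.first]; exact ht.1
        exact lt_of_le_of_ne h0' (hsing 0 (Nat.zero_le _))
      set i := F.max' ⟨0, h0⟩ with hi
      have hiF : i ∈ F := F.max'_mem _
      rw [hF, Finset.mem_filter, Finset.mem_range] at hiF
      have hin : i ≤ P.n := Nat.lt_succ_iff.1 hiF.1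
      have hine : i ≠ P.n := by
        intro hc
        have := hiF.2
        rw [hc, P.last] at this
        exact absurd ht.2 (not_le.2 this)
      have hilt : i < P.n := Nat.lt_of_le_of_ne hin hine
      have hlt : t < P.x (i + 1) := by
        rcases lt_or_ge t (P.x (i + 1)) with hc | hc
        · exact hc
        · have : P.x (i + 1) < t :=
            lt_of_le_of_ne hc (hsing (i + 1) (Nat.succ_le_of_lt hilt))
          have : i + 1 ∈ F := by
            rw [hF, Finset.mem_filter, Finset.mem_range]
            exact ⟨Nat.succ_lt_succ hilt, this⟩
          have := F.le_max' _ this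
          omega
      exact Or.inr (Set.mem_biUnion (Finset.mem_range.2 hilt) ⟨hiF.2, hlt⟩)
  · apply Set.union_subset
    · exact Set.iUnion₂_subset fun i hi =>
        Set.singleton_subset_iff.2 (px_mem (Nat.lt_succ_iff.1 (Finset.mem_range.1 hi)))
    · exact Set.iUnion₂_subset fun i hi =>
        fun t ht => ⟨le_trans (px_mem (le_of_lt (Finset.mem_range.1 hi))).1 ht.1.le,
          le_trans ht.2.le (px_mem (Finset.mem_range.1 hi)).2⟩

end partition


section steprep
variable {P : RDSPartition a b} {u : ℝ → ℝ} {γ : ℝ → ℝ}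

/-- measurable globalization of a step function -/
def stepApprox (P : RDSPartition a b) (u : ℝ → ℝ) : ℝ → ℝ := fun t =>
  (∑ i ∈ Finset.range (P.n + 1), Set.indicator ({P.x i} : Set ℝ) (fun _ => u (P.x i)) t) +
    ∑ i ∈ Finset.range P.n,
      Set.indicator (Ioo (P.x i) (P.x (i + 1))) (fun _ => u ((P.x i + P.x (i + 1)) / 2)) t

lemma stepApprox_measurable : Measurable (stepApprox P u) := by
  apply Measurable.add
  · exact Finset.measurable_sum _ fun i _ =>
      (measurable_const.indicator (measurableSet_singleton _))
  · exact Finset.measurable_sum _ fun i _ =>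
      (measurable_const.indicator measurableSet_Ioo)

lemma stepApprox_eq (hab : a < b) (hu : IsStepOn a b u P) (ht : t ∈ Icc a b) :
    stepApprox P u t = u t := by
  rw [icc_eq_union (P := P) hab] at ht
  rcases ht with ht | ht
  · simp only [Set.mem_iUnion, Finset.mem_range, Set.mem_singleton_iff] at ht
    obtain ⟨j, hj, hxj⟩ := ht
    have hjn : j ≤ P.n := Nat.lt_succ_iff.1 hj
    subst hxj
    rw [stepApprox]
    have h2 : ∀ i ∈ Finset.range P.n,
        Set.indicator (Ioo (P.x i) (P.x (i + 1))) (fun _ => u ((P.x i + P.x (i + 1)) / 2)) (P.x j) = 0 := by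
      intro i hi
      exact Set.indicator_of_notMem (notmem_Ioo hjn (Finset.mem_range.1 hi)) _
    rw [Finset.sum_congr rfl h2, Finset.sum_const_zero, add_zero]
    rw [Finset.sum_eq_single j]
    · simp
    · intro i hi hne
      apply Set.indicator_of_notMem
      simp only [Set.mem_singleton_iff]
      intro hc
      exact hne (index_eq (Nat.lt_succ_iff.1 (Finset.mem_range.1 hi)) hjn hc.symm)
    · intro hc
      exact absurd (Finset.mem_range.2 hj) hc
  · simp only [Set.mem_iUnion, Finset.mem_range] at ht
    obtain ⟨j, hj, hxj⟩ := ht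
    rw [stepApprox]
    have h1 : ∀ i ∈ Finset.range (P.n + 1),
        Set.indicator ({P.x i} : Set ℝ) (fun _ => u (P.x i)) t = 0 := by
      intro i hi
      apply Set.indicator_of_notMem
      simp only [Set.mem_singleton_iff]
      intro hc
      exact notmem_Ioo (Nat.lt_succ_iff.1 (Finset.mem_range.1 hi)) hj (hc ▸ hxj)
    rw [Finset.sum_congr rfl h1, Finset.sum_const_zero, zero_add]
    rw [Finset.sum_eq_single j]
    · rw [Set.indicator_of_mem hxj]
      exact (hu j hj t hxj).symm
    · intro i hi hne
      apply Set.indicator_of_notMem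
      intro hc
      exact (Set.disjoint_left.1 (Ioo_disjoint (Finset.mem_range.1 hi) hj hne) hc) hxj
    · intro hc
      exact absurd (Finset.mem_range.2 hj) hc

variable (hab : a < b) (hγ : MonotoneOn γ (Icc a b))
include hab hγ

lemma integrableOn_pieces (hu : IsStepOn a b u P) :
    (∀ i, i ≤ P.n → IntegrableOn u ({P.x i} : Set ℝ) (mu a b γ)) ∧
      (∀ i, i < P.n → IntegrableOn u (Ioo (P.x i) (P.x (i + 1))) (mu a b γ)) := by
  haveI := mu_fin hab hγ
  constructor
  · intro i hi
    exact (integrableOn_singleton_iff).2 (Or.inr (measure_lt_top _ _))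
  · intro i hi
    have hconst : IntegrableOn (fun _ => u ((P.x i + P.x (i + 1)) / 2)) (Ioo (P.x i) (P.x (i + 1))) (mu a b γ) := by
      apply integrableOn_const (measure_lt_top _ _).ne
    apply hconst.congr
    exact ae_restrict_of_forall_mem measurableSet_Ioo fun s hs => (hu i hi s hs).symm

lemma integrableOn_step (hu : IsStepOn a b u P) :
    IntegrableOn u (Icc a b) (mu a b γ) := by
  rw [icc_eq_union (P := P) hab]
  apply IntegrableOn.union
  · exact integrableOn_finset_iUnion.2 fun i hi =>
      (integrableOn_pieces hab hγ hu).1 i (Nat.lt_succ_iff.1 (Finset.mem_range.1 hi))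
  · exact integrableOn_finset_iUnion.2 fun i hi =>
      (integrableOn_pieces hab hγ hu).2 i (Finset.mem_range.1 hi)

lemma stepInt_eq_integral (hu : IsStepOn a b u P) :
    stepInt a b γ P u = ∫ t in Icc a b, u t ∂(mu a b γ) := by
  haveI := mu_fin hab hγ
  have hS : ∀ i ∈ Finset.range (P.n + 1), MeasurableSet ({P.x i} : Set ℝ) :=
    fun i _ => measurableSet_singleton _
  have hT : ∀ i ∈ Finset.range P.n, MeasurableSet (Ioo (P.x i) (P.x (i + 1))) :=
    fun i _ => measurableSet_Ioo
  have hdisjS : (↑(Finset.range (P.n + 1)) : Set ℕ).Pairwise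
      (Function.onFun Disjoint fun i => ({P.x i} : Set ℝ)) := by
    intro i hi j hj hne
    simp only [Function.onFun, Set.disjoint_singleton]
    intro hc
    exact hne (index_eq (Nat.lt_succ_iff.1 (by simpa using hi)) (Nat.lt_succ_iff.1 (by simpa using hj)) hc)
  have hdisjT : (↑(Finset.range P.n) : Set ℕ).Pairwise
      (Function.onFun Disjoint fun i => Ioo (P.x i) (P.x (i + 1))) := by
    intro i hi j hj hne
    exact Ioo_disjoint (by simpa using hi) (by simpa using hj) hne
  have hdisjST : Disjoint (⋃ i ∈ Finset.range (P.n + 1), ({P.x i} : Set ℝ))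
      (⋃ i ∈ Finset.range P.n, Ioo (P.x i) (P.x (i + 1))) := by
    rw [Set.disjoint_left]
    intro t ht hc
    simp only [Set.mem_iUnion, Finset.mem_range, Set.mem_singleton_iff] at ht hc
    obtain ⟨i, hi, hxi⟩ := ht
    obtain ⟨j, hj, hxj⟩ := hc
    subst hxi
    exact notmem_Ioo (Nat.lt_succ_iff.1 hi) hj hxj
  have hIS : IntegrableOn u (⋃ i ∈ Finset.range (P.n + 1), ({P.x i} : Set ℝ)) (mu a b γ) :=
    integrableOn_finset_iUnion.2 fun i hi =>
      (integrableOn_pieces hab hγ hu).1 i (Nat.lt_succ_iff.1 (Finset.mem_range.1 hi))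
  have hIT : IntegrableOn u (⋃ i ∈ Finset.range P.n, Ioo (P.x i) (P.x (i + 1))) (mu a b γ) :=
    integrableOn_finset_iUnion.2 fun i hi =>
      (integrableOn_pieces hab hγ hu).2 i (Finset.mem_range.1 hi)
  rw [icc_eq_union (P := P) hab,
    setIntegral_union hdisjST (Finset.measurableSet_biUnion _ hT) hIS hIT,
    integral_biUnion_finset _ hS hdisjS (fun i hi => (integrableOn_pieces hab hγ hu).1 i
      (Nat.lt_succ_iff.1 (Finset.mem_range.1 hi))),
    integral_biUnion_finset _ hT hdisjT (fun i hi => (integrableOn_pieces hab hγ hu).2 i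
      (Finset.mem_range.1 hi))]
  rw [stepInt]
  congr 1
  · apply Finset.sum_congr rfl
    intro i hi
    rw [integral_singleton, measureReal_def, mu_singleton_toReal hab hγ (px_mem (Nat.lt_succ_iff.1 (Finset.mem_range.1 hi))),
      smul_eq_mul, mul_comm]
  · apply Finset.sum_congr rfl
    intro i hi
    have hi' : i < P.n := Finset.mem_range.1 hi
    rw [setIntegral_congr_fun measurableSet_Ioo (fun s hs => hu i hi' s hs),
      setIntegral_const, measureReal_def, mu_Ioo_toReal hab hγ (px_mem hi'.le) (px_mem hi')
        (P.mono i hi'), smul_eq_mul, mul_comm]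

end steprep


section envelopes

def USet (a b : ℝ) (α f : ℝ → ℝ) : Set ℝ :=
  { r | ∃ (u : ℝ → ℝ) (P : RDSPartition a b), IsStepOn a b u P ∧
    (∀ t ∈ Set.Icc a b, f t ≤ u t) ∧ r = stepInt a b α P u }

def LSet (a b : ℝ) (α f : ℝ → ℝ) : Set ℝ :=
  { r | ∃ (v : ℝ → ℝ) (P : RDSPartition a b), IsStepOn a b v P ∧
    (∀ t ∈ Set.Icc a b, v t ≤ f t) ∧ r = stepInt a b α P v }

lemma upperRDS_def (α f : ℝ → ℝ) : upperRDS a b α f = sInf (USet a b α f) := rfl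
lemma lowerRDS_def (α f : ℝ → ℝ) : lowerRDS a b α f = sSup (LSet a b α f) := rfl

/-- the trivial partition -/
def P1 (a b : ℝ) (hab : a < b) : RDSPartition a b where
  n := 1
  x := fun i => if i = 0 then a else b
  mono := by intro i hi; interval_cases i; simpa using hab
  first := by simp
  last := by simp

lemma isStepOn_const {P : RDSPartition a b} (c : ℝ) : IsStepOn a b (fun _ => c) P :=
  fun _ _ _ _ => rfl

variable {γ f g : ℝ → ℝ} (hab : a < b) (hγ : MonotoneOn γ (Icc a b))
include hab hγ

lemma USet_nonempty (hM : ∀ t ∈ Icc a b, f t ≤ M) : (USet a b γ f).Nonempty :=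
  ⟨_, fun _ => M, P1 a b hab, isStepOn_const M, hM, rfl⟩

lemma LSet_nonempty (hM : ∀ t ∈ Icc a b, M ≤ f t) : (LSet a b γ f).Nonempty :=
  ⟨_, fun _ => M, P1 a b hab, isStepOn_const M, hM, rfl⟩

lemma LSet_le_USet (hr : r ∈ LSet a b γ f) (hs : s ∈ USet a b γ f) : r ≤ s := by
  obtain ⟨v, Q, hv, hvf, rfl⟩ := hr
  obtain ⟨u, P, hu, hfu, rfl⟩ := hs
  rw [stepInt_eq_integral hab hγ hv, stepInt_eq_integral hab hγ hu]
  exact setIntegral_mono_on (integrableOn_step hab hγ hv) (integrableOn_step hab hγ hu)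
    measurableSet_Icc (fun t ht => le_trans (hvf t ht) (hfu t ht))

lemma bddBelow_USet (hne : (LSet a b γ f).Nonempty) : BddBelow (USet a b γ f) := by
  obtain ⟨r, hr⟩ := hne
  exact ⟨r, fun s hs => LSet_le_USet hab hγ hr hs⟩

lemma bddAbove_LSet (hne : (USet a b γ f).Nonempty) : BddAbove (LSet a b γ f) := by
  obtain ⟨s, hs⟩ := hne
  exact ⟨s, fun r hr => LSet_le_USet hab hγ hr hs⟩

lemma bddOn_bounds (hf : BddOn a b f) : ∃ M : ℝ, (∀ t ∈ Icc a b, f t ≤ M) ∧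
    (∀ t ∈ Icc a b, -M ≤ f t) := by
  obtain ⟨M, hM⟩ := hf
  exact ⟨M, fun t ht => (abs_le.1 (hM t ht)).2, fun t ht => (abs_le.1 (hM t ht)).1⟩

lemma lower_le_upper (hf : BddOn a b f) : lowerRDS a b γ f ≤ upperRDS a b γ f := by
  obtain ⟨M, hM1, hM2⟩ := bddOn_bounds hab hγ hf
  have hU := USet_nonempty hab hγ hM1
  have hL := LSet_nonempty hab hγ hM2
  rw [lowerRDS_def, upperRDS_def]
  exact csSup_le hL fun r hr => le_csInf hU fun s hs => LSet_le_USet hab hγ hr hs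

lemma upperRDS_le (hf : BddOn a b f) (hr : r ∈ USet a b γ f) : upperRDS a b γ f ≤ r := by
  obtain ⟨M, hM1, hM2⟩ := bddOn_bounds hab hγ hf
  exact csInf_le (bddBelow_USet hab hγ (LSet_nonempty hab hγ hM2)) hr

lemma le_lowerRDS (hf : BddOn a b f) (hr : r ∈ LSet a b γ f) : r ≤ lowerRDS a b γ f := by
  obtain ⟨M, hM1, hM2⟩ := bddOn_bounds hab hγ hf
  exact le_csSup (bddAbove_LSet hab hγ (USet_nonempty hab hγ hM1)) hr

lemma integrableInc_of_criterion (hf : BddOn a b f)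
    (h : ∀ ε > (0:ℝ), ∃ (P : RDSPartition a b) (u v : ℝ → ℝ), IsStepOn a b u P ∧ IsStepOn a b v P ∧
      (∀ t ∈ Icc a b, v t ≤ f t) ∧ (∀ t ∈ Icc a b, f t ≤ u t) ∧
      stepInt a b γ P u - stepInt a b γ P v < ε) :
    RDSIntegrableInc a b γ f := by
  have h2 : upperRDS a b γ f ≤ lowerRDS a b γ f := by
    apply le_of_forall_pos_le_add
    intro ε hε
    obtain ⟨P, u, v, hu, hv, hvf, hfu, hlt⟩ := h ε hε
    have h3 : upperRDS a b γ f ≤ stepInt a b γ P u :=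
      upperRDS_le hab hγ hf ⟨u, P, hu, hfu, rfl⟩
    have h4 : stepInt a b γ P v ≤ lowerRDS a b γ f :=
      le_lowerRDS hab hγ hf ⟨v, P, hv, hvf, rfl⟩
    linarith
  exact le_antisymm (lower_le_upper hab hγ hf) h2

lemma isStepOn_add_const {P : RDSPartition a b} {u : ℝ → ℝ} (hu : IsStepOn a b u P) (c : ℝ) :
    IsStepOn a b (fun t => u t + c) P := by
  intro i hi s hs
  simp only [hu i hi s hs]

lemma stepInt_add_const {P : RDSPartition a b} {u : ℝ → ℝ} (hu : IsStepOn a b u P) (c : ℝ) :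
    stepInt a b γ P (fun t => u t + c) = stepInt a b γ P u + c * (γ b - γ a) := by
  haveI := mu_fin hab hγ
  rw [stepInt_eq_integral hab hγ (isStepOn_add_const hab hγ hu c),
    stepInt_eq_integral hab hγ hu]
  rw [integral_add (integrableOn_step hab hγ hu) (integrableOn_const (measure_lt_top _ _).ne)]
  rw [setIntegral_const, measureReal_def, mu_Icc_toReal hab hγ, smul_eq_mul, mul_comm]

end envelopes


section unifconv
variable {γ g : ℝ → ℝ} (hab : a < b) (hγ : MonotoneOn γ (Icc a b))
include hab hγ

lemma upper_close {f1 f2 : ℝ → ℝ} {ε : ℝ} (hε : 0 ≤ ε) (hf1 : BddOn a b f1) (hf2 : BddOn a b f2)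
    (hcl : ∀ t ∈ Icc a b, f1 t ≤ f2 t + ε) :
    upperRDS a b γ f1 ≤ upperRDS a b γ f2 + ε * (γ b - γ a) := by
  obtain ⟨M, hM1, hM2⟩ := bddOn_bounds hab hγ hf2
  have key : ∀ r ∈ USet a b γ f2, upperRDS a b γ f1 ≤ r + ε * (γ b - γ a) := by
    rintro r ⟨u, P, hu, hfu, rfl⟩
    have h1 : upperRDS a b γ f1 ≤ stepInt a b γ P (fun t => u t + ε) :=
      upperRDS_le hab hγ hf1 ⟨_, P, isStepOn_add_const hab hγ hu ε,
        fun t ht => le_trans (hcl t ht) (add_le_add_left (hfu t ht) ε), rfl⟩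
    rw [stepInt_add_const hab hγ hu ε] at h1
    exact h1
  have h2 : upperRDS a b γ f1 - ε * (γ b - γ a) ≤ upperRDS a b γ f2 := by
    exact le_csInf (USet_nonempty hab hγ hM1) fun r hr => by linarith [key r hr]
  linarith

lemma lower_close {f1 f2 : ℝ → ℝ} {ε : ℝ} (hε : 0 ≤ ε) (hf1 : BddOn a b f1) (hf2 : BddOn a b f2)
    (hcl : ∀ t ∈ Icc a b, f2 t - ε ≤ f1 t) :
    lowerRDS a b γ f2 - ε * (γ b - γ a) ≤ lowerRDS a b γ f1 := by
  obtain ⟨M, hM1, hM2⟩ := bddOn_bounds hab hγ hf2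
  have key : ∀ r ∈ LSet a b γ f2, r - ε * (γ b - γ a) ≤ lowerRDS a b γ f1 := by
    rintro r ⟨v, P, hv, hvf, rfl⟩
    have h1 : stepInt a b γ P (fun t => v t + (-ε)) ≤ lowerRDS a b γ f1 :=
      le_lowerRDS hab hγ hf1 ⟨_, P, isStepOn_add_const hab hγ hv (-ε),
        fun t ht => by have := hvf t ht; have := hcl t ht; linarith, rfl⟩
    rw [stepInt_add_const hab hγ hv (-ε)] at h1
    linarith
  have h2 : lowerRDS a b γ f2 ≤ lowerRDS a b γ f1 + ε * (γ b - γ a) := by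
    exact csSup_le (LSet_nonempty hab hγ hM2) fun r hr => by linarith [key r hr]
  linarith

lemma hC_nonneg : (0:ℝ) ≤ γ b - γ a :=
  sub_nonneg.2 (hγ (left_mem_Icc.2 hab.le) (right_mem_Icc.2 hab.le) hab.le)

lemma bddOn_of_unif {f : ℕ → ℝ → ℝ} (hfb : ∀ k, BddOn a b (f k))
    (hconv : TendstoUniformlyOn f g atTop (Icc a b)) : BddOn a b g := by
  obtain ⟨k, hk⟩ := ((Metric.tendstoUniformlyOn_iff.1 hconv) 1 one_pos).exists
  obtain ⟨M, hM⟩ := hfb k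
  refine ⟨M + 1, fun t ht => ?_⟩
  have h1 := hk t ht
  rw [Real.dist_eq] at h1
  have := abs_sub_abs_le_abs_sub (g t) (f k t)
  have := hM t ht
  linarith [abs_nonneg (g t - f k t)]

lemma unif_inc {f : ℕ → ℝ → ℝ} (hfb : ∀ k, BddOn a b (f k))
    (hfi : ∀ k, RDSIntegrableInc a b γ (f k))
    (hconv : TendstoUniformlyOn f g atTop (Icc a b)) :
    RDSIntegrableInc a b γ g ∧
      Tendsto (fun k => upperRDS a b γ (f k)) atTop (𝓝 (upperRDS a b γ g)) := by
  set C := γ b - γ a with hC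
  have hC0 : 0 ≤ C := hC_nonneg hab hγ
  have hgb : BddOn a b g := bddOn_of_unif hab hγ hfb hconv
  have close : ∀ ε > (0:ℝ), ∀ᶠ k in atTop,
      (∀ t ∈ Icc a b, g t ≤ f k t + ε) ∧ (∀ t ∈ Icc a b, f k t ≤ g t + ε) := by
    intro ε hε
    filter_upwards [(Metric.tendstoUniformlyOn_iff.1 hconv) ε hε] with k hk
    constructor
    · intro t ht
      have h1 := hk t ht
      rw [Real.dist_eq] at h1
      have h2 := abs_lt.1 h1
      linarith [h2.1, h2.2]
    · intro t ht
      have h1 := hk t ht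
      rw [Real.dist_eq] at h1
      have h2 := abs_lt.1 h1
      linarith [h2.1, h2.2]
  have hint : RDSIntegrableInc a b γ g := by
    apply le_antisymm (lower_le_upper hab hγ hgb)
    apply le_of_forall_pos_le_add
    intro η hη
    set ε : ℝ := η / (2 * C + 2) with hεdef
    have hε : 0 < ε := div_pos hη (by linarith)
    obtain ⟨k, hk1, hk2⟩ := (close ε hε).exists
    have h1 : upperRDS a b γ g ≤ upperRDS a b γ (f k) + ε * C :=
      upper_close hab hγ hε.le hgb (hfb k) hk1
    have h2 : lowerRDS a b γ (f k) - ε * C ≤ lowerRDS a b γ g :=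
      lower_close hab hγ hε.le hgb (hfb k) (fun t ht => by linarith [hk2 t ht])
    have h3 := hfi k
    rw [RDSIntegrableInc] at h3
    have h4 : 2 * (ε * C) ≤ η := by
      have hd : ε * (2 * C + 2) = η := by
        rw [hεdef]; field_simp
      nlinarith
  
    linarith
  refine ⟨hint, ?_⟩
  rw [Metric.tendsto_atTop]
  intro η hη
  set ε : ℝ := η / (2 * C + 2) with hεdef
  have hε : 0 < ε := div_pos hη (by linarith)
  obtain ⟨N, hN⟩ := eventually_atTop.1 (close ε hε)
  refine ⟨N, fun k hk => ?_⟩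
  obtain ⟨hk1, hk2⟩ := hN k hk
  have h1 : upperRDS a b γ g ≤ upperRDS a b γ (f k) + ε * C :=
    upper_close hab hγ hε.le hgb (hfb k) hk1
  have h2 : upperRDS a b γ (f k) ≤ upperRDS a b γ g + ε * C :=
    upper_close hab hγ hε.le (hfb k) hgb hk2
  rw [Real.dist_eq, abs_lt]
  have h4 : 2 * (ε * C) ≤ η := by
    have hd : ε * (2 * C + 2) = η := by
      rw [hεdef]; field_simp
    nlinarith
  constructor <;> nlinarith [mul_nonneg hε.le hC0]

end unifconv


section refinement

/-- Partition from a finite set of points containing the endpoints. -/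
def partitionOfFinset (a b : ℝ) (S : Finset ℝ) (hS : ↑S ⊆ Icc a b) (ha : a ∈ S) (hb : b ∈ S) :
    RDSPartition a b where
  n := S.card - 1
  x := fun i => if h : i < S.card then ((S.orderIsoOfFin rfl ⟨i, h⟩ : S) : ℝ) else b
  mono := by
    intro i hi
    have hcard : 0 < S.card := Finset.card_pos.2 ⟨a, ha⟩
    have h1 : i < S.card := by omega
    have h2 : i + 1 < S.card := by omega
    show dite _ _ _ < dite _ _ _
    rw [dif_pos h1, dif_pos h2]
    have := (S.orderIsoOfFin rfl).strictMono (show (⟨i, h1⟩ : Fin S.card) < ⟨i + 1, h2⟩ by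
      simp [Fin.lt_def])
    exact_mod_cast this
  first := by
    have hcard : 0 < S.card := Finset.card_pos.2 ⟨a, ha⟩
    show dite _ _ _ = a
    rw [dif_pos hcard]
    have hmem : ((S.orderIsoOfFin rfl ⟨0, hcard⟩ : S) : ℝ) ∈ S := Finset.coe_mem _
    have h1 : a ≤ ((S.orderIsoOfFin rfl ⟨0, hcard⟩ : S) : ℝ) := (hS hmem).1
    have h2 : ((S.orderIsoOfFin rfl ⟨0, hcard⟩ : S) : ℝ) ≤ a := by
      have := (S.orderIsoOfFin rfl).monotone
        (show (⟨0, hcard⟩ : Fin S.card) ≤ (S.orderIsoOfFin rfl).symm ⟨a, ha⟩ by simp [Fin.le_def])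
      rw [OrderIso.apply_symm_apply] at this
      exact_mod_cast this
    exact le_antisymm h2 h1
  last := by
    have hcard : 0 < S.card := Finset.card_pos.2 ⟨a, ha⟩
    have hn : S.card - 1 < S.card := by omega
    show dite _ _ _ = b
    rw [dif_pos hn]
    have hmem : ((S.orderIsoOfFin rfl ⟨S.card - 1, hn⟩ : S) : ℝ) ∈ S := Finset.coe_mem _
    have h1 : ((S.orderIsoOfFin rfl ⟨S.card - 1, hn⟩ : S) : ℝ) ≤ b := (hS hmem).2
    have h2 : b ≤ ((S.orderIsoOfFin rfl ⟨S.card - 1, hn⟩ : S) : ℝ) := by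
      have hle : (S.orderIsoOfFin rfl).symm ⟨b, hb⟩ ≤ (⟨S.card - 1, hn⟩ : Fin S.card) := by
        have := ((S.orderIsoOfFin rfl).symm ⟨b, hb⟩).2
        simp only [Fin.le_def]
        omega
      have := (S.orderIsoOfFin rfl).monotone hle
      rw [OrderIso.apply_symm_apply] at this
      exact_mod_cast this
    exact le_antisymm h1 h2

lemma partitionOfFinset_mem {S : Finset ℝ} (hS : ↑S ⊆ Icc a b) (ha : a ∈ S) (hb : b ∈ S)
    (ht : t ∈ S) : ∃ j, j ≤ (partitionOfFinset a b S hS ha hb).n ∧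
      (partitionOfFinset a b S hS ha hb).x j = t := by
  have hcard : 0 < S.card := Finset.card_pos.2 ⟨a, ha⟩
  refine ⟨((S.orderIsoOfFin rfl).symm ⟨t, ht⟩ : Fin S.card), ?_, ?_⟩
  · have := ((S.orderIsoOfFin rfl).symm ⟨t, ht⟩).2
    show _ ≤ S.card - 1
    omega
  · show dite _ _ _ = t
    rw [dif_pos ((S.orderIsoOfFin rfl).symm ⟨t, ht⟩).2]
    have : (⟨((S.orderIsoOfFin rfl).symm ⟨t, ht⟩ : Fin S.card), ((S.orderIsoOfFin rfl).symm ⟨t, ht⟩).2⟩ : Fin S.card)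
        = (S.orderIsoOfFin rfl).symm ⟨t, ht⟩ := by
      apply Fin.ext; rfl
    rw [this, OrderIso.apply_symm_apply]

/-- refinement of a step function -/
lemma isStepOn_refine {P R : RDSPartition a b} {u : ℝ → ℝ}
    (hsub : ∀ i, i ≤ P.n → ∃ j, j ≤ R.n ∧ R.x j = P.x i)
    (hu : IsStepOn a b u P) : IsStepOn a b u R := by
  intro j hj s hs
  classical
  set F := (Finset.range (P.n + 1)).filter (fun i => P.x i ≤ R.x j) with hF
  have h0 : 0 ∈ F := by
    rw [hF, Finset.mem_filter, Finset.mem_range]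
    refine ⟨Nat.succ_pos _, ?_⟩
    have h' := (px_mem (P := R) hj.le).1
    rw [show P.x 0 = a from P.first]
    exact h'
  set i := F.max' ⟨0, h0⟩ with hi
  have hiF : i ∈ F := F.max'_mem _
  rw [hF, Finset.mem_filter, Finset.mem_range] at hiF
  have hin : i ≤ P.n := Nat.lt_succ_iff.1 hiF.1
  have hilt : i < P.n := by
    rcases Nat.lt_or_ge i P.n with h | h
    · exact h
    · exfalso
      have hieq : i = P.n := le_antisymm hin h
      have h1 : P.x i = b := by rw [hieq, P.last]
      have h2 : R.x (j + 1) ≤ b := (px_mem (P := R) (Nat.succ_le_of_lt hj)).2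
      have h3 := R.mono j hj
      rw [h1] at hiF
      linarith [hiF.2]
  have hup : R.x j < P.x (i + 1) := by
    by_contra hc
    push_neg at hc
    have : i + 1 ∈ F := by
      rw [hF, Finset.mem_filter, Finset.mem_range]
      exact ⟨Nat.succ_lt_succ hilt, hc⟩
    have := F.le_max' _ this
    omega
  have hnext : R.x (j + 1) ≤ P.x (i + 1) := by
    obtain ⟨m, hm, hmx⟩ := hsub (i + 1) (Nat.succ_le_of_lt hilt)
    have hjm : j < m := index_lt (P := R) hj.le hm (by rw [hmx]; exact hup)
    calc R.x (j + 1) ≤ R.x m := px_le (Nat.succ_le_of_lt hjm) hm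
    _ = P.x (i + 1) := hmx
  have hsubset : Ioo (R.x j) (R.x (j + 1)) ⊆ Ioo (P.x i) (P.x (i + 1)) := by
    intro s hs
    exact ⟨lt_of_le_of_lt hiF.2 hs.1, lt_of_lt_of_le hs.2 hnext⟩
  have hmidR : (R.x j + R.x (j + 1)) / 2 ∈ Ioo (P.x i) (P.x (i + 1)) :=
    hsubset (mid_mem hj)
  rw [hu i hilt s (hsubset hs), hu i hilt _ hmidR]

/-- common refinement of two partitions -/
lemma common_refinement (P Q : RDSPartition a b) (hab : a < b) :
    ∃ R : RDSPartition a b, (∀ i, i ≤ P.n → ∃ j, j ≤ R.n ∧ R.x j = P.x i) ∧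
      (∀ i, i ≤ Q.n → ∃ j, j ≤ R.n ∧ R.x j = Q.x i) := by
  classical
  set S := (Finset.range (P.n + 1)).image P.x ∪ (Finset.range (Q.n + 1)).image Q.x with hS
  have hsub : ↑S ⊆ Icc a b := by
    intro t ht
    simp only [hS, Finset.coe_union, Set.mem_union, Finset.coe_image, Set.mem_image,
      Finset.mem_coe, Finset.mem_range] at ht
    rcases ht with ⟨i, hi, rfl⟩ | ⟨i, hi, rfl⟩
    · exact px_mem (Nat.lt_succ_iff.1 hi)
    · exact px_mem (Nat.lt_succ_iff.1 hi)
  have ha : a ∈ S := by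
    simp only [hS, Finset.mem_union, Finset.mem_image, Finset.mem_range]
    exact Or.inl ⟨0, Nat.succ_pos _, P.first⟩
  have hb : b ∈ S := by
    simp only [hS, Finset.mem_union, Finset.mem_image, Finset.mem_range]
    exact Or.inl ⟨P.n, Nat.lt_succ_self _, P.last⟩
  refine ⟨partitionOfFinset a b S hsub ha hb, ?_, ?_⟩
  · intro i hi
    apply partitionOfFinset_mem
    simp only [hS, Finset.mem_union, Finset.mem_image, Finset.mem_range]
    exact Or.inl ⟨i, Nat.lt_succ_of_le hi, rfl⟩
  · intro i hi
    apply partitionOfFinset_mem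
    simp only [hS, Finset.mem_union, Finset.mem_image, Finset.mem_range]
    exact Or.inr ⟨i, Nat.lt_succ_of_le hi, rfl⟩

lemma isStepOn_min {P : RDSPartition a b} {u v : ℝ → ℝ} (hu : IsStepOn a b u P)
    (hv : IsStepOn a b v P) : IsStepOn a b (fun t => min (u t) (v t)) P := by
  intro i hi s hs
  simp only [hu i hi s hs, hv i hi s hs]

lemma isStepOn_max {P : RDSPartition a b} {u v : ℝ → ℝ} (hu : IsStepOn a b u P)
    (hv : IsStepOn a b v P) : IsStepOn a b (fun t => max (u t) (v t)) P := by
  intro i hi s hs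
  simp only [hu i hi s hs, hv i hi s hs]

end refinement


section transfer

lemma sub_trans {P R1 R : RDSPartition a b}
    (h1 : ∀ i, i ≤ P.n → ∃ j, j ≤ R1.n ∧ R1.x j = P.x i)
    (h2 : ∀ i, i ≤ R1.n → ∃ j, j ≤ R.n ∧ R.x j = R1.x i) :
    ∀ i, i ≤ P.n → ∃ j, j ≤ R.n ∧ R.x j = P.x i := by
  intro i hi
  obtain ⟨j, hj, hjx⟩ := h1 i hi
  obtain ⟨m, hm, hmx⟩ := h2 j hj
  exact ⟨m, hm, by rw [hmx, hjx]⟩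

lemma transfer {γ1 γ2 δ f : ℝ → ℝ} (hab : a < b) (hγ1 : MonotoneOn γ1 (Icc a b))
    (hγ2 : MonotoneOn γ2 (Icc a b)) (hδ : MonotoneOn δ (Icc a b))
    (hdom : mu a b δ ≤ mu a b γ1 + mu a b γ2) (hf : BddOn a b f)
    (h1 : RDSIntegrableInc a b γ1 f) (h2 : RDSIntegrableInc a b γ2 f) :
    RDSIntegrableInc a b δ f := by
  apply integrableInc_of_criterion hab hδ hf
  intro ε hε
  obtain ⟨M, hM1, hM2⟩ := bddOn_bounds hab hδ hf
  have hε5 : 0 < ε / 5 := by linarith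
  -- pick near-optimal steps for γ1
  obtain ⟨r1, hr1U, hr1lt⟩ := exists_lt_of_csInf_lt (USet_nonempty hab hγ1 hM1)
    (show sInf (USet a b γ1 f) < upperRDS a b γ1 f + ε / 5 by
      rw [← upperRDS_def]; linarith)
  obtain ⟨u1, P1, hu1, hfu1, rfl⟩ := hr1U
  obtain ⟨s1, hs1L, hs1gt⟩ := exists_lt_of_lt_csSup (LSet_nonempty hab hγ1 hM2)
    (show lowerRDS a b γ1 f - ε / 5 < sSup (LSet a b γ1 f) by
      rw [← lowerRDS_def]; linarith)
  obtain ⟨v1, Q1, hv1, hv1f, rfl⟩ := hs1L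
  -- for γ2
  obtain ⟨r2, hr2U, hr2lt⟩ := exists_lt_of_csInf_lt (USet_nonempty hab hγ2 hM1)
    (show sInf (USet a b γ2 f) < upperRDS a b γ2 f + ε / 5 by
      rw [← upperRDS_def]; linarith)
  obtain ⟨u2, P2, hu2, hfu2, rfl⟩ := hr2U
  obtain ⟨s2, hs2L, hs2gt⟩ := exists_lt_of_lt_csSup (LSet_nonempty hab hγ2 hM2)
    (show lowerRDS a b γ2 f - ε / 5 < sSup (LSet a b γ2 f) by
      rw [← lowerRDS_def]; linarith)
  obtain ⟨v2, Q2, hv2, hv2f, rfl⟩ := hs2L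
  -- common refinement of the four partitions
  obtain ⟨R1, hR1a, hR1b⟩ := common_refinement P1 Q1 hab
  obtain ⟨R2, hR2a, hR2b⟩ := common_refinement P2 Q2 hab
  obtain ⟨R, hRa, hRb⟩ := common_refinement R1 R2 hab
  have hu1R : IsStepOn a b u1 R := isStepOn_refine (sub_trans hR1a hRa) hu1
  have hv1R : IsStepOn a b v1 R := isStepOn_refine (sub_trans hR1b hRa) hv1
  have hu2R : IsStepOn a b u2 R := isStepOn_refine (sub_trans hR2a hRb) hu2
  have hv2R : IsStepOn a b v2 R := isStepOn_refine (sub_trans hR2b hRb) hv2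
  set u : ℝ → ℝ := fun t => min (u1 t) (u2 t) with hu_def
  set v : ℝ → ℝ := fun t => max (v1 t) (v2 t) with hv_def
  have huR : IsStepOn a b u R := isStepOn_min hu1R hu2R
  have hvR : IsStepOn a b v R := isStepOn_max hv1R hv2R
  have hvf : ∀ t ∈ Icc a b, v t ≤ f t := fun t ht => max_le (hv1f t ht) (hv2f t ht)
  have hfu : ∀ t ∈ Icc a b, f t ≤ u t := fun t ht => le_min (hfu1 t ht) (hfu2 t ht)
  refine ⟨R, u, v, huR, hvR, hvf, hfu, ?_⟩
  -- estimate
  have hint1 := h1; have hint2 := h2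
  rw [RDSIntegrableInc] at hint1 hint2
  have hIuδ := integrableOn_step hab hδ huR
  have hIvδ := integrableOn_step hab hδ hvR
  have hIu1 := integrableOn_step hab hγ1 huR
  have hIv1 := integrableOn_step hab hγ1 hvR
  have hIu2 := integrableOn_step hab hγ2 huR
  have hIv2 := integrableOn_step hab hγ2 hvR
  have hIu11 := integrableOn_step hab hγ1 hu1
  have hIv11 := integrableOn_step hab hγ1 hv1
  have hIu22 := integrableOn_step hab hγ2 hu2
  have hIv22 := integrableOn_step hab hγ2 hv2
  rw [stepInt_eq_integral hab hδ huR, stepInt_eq_integral hab hδ hvR]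
  have hsub : ∫ t in Icc a b, u t ∂(mu a b δ) - ∫ t in Icc a b, v t ∂(mu a b δ)
      = ∫ t in Icc a b, (u t - v t) ∂(mu a b δ) := (integral_sub hIuδ hIvδ).symm
  rw [hsub]
  have hvleu : ∀ t ∈ Icc a b, 0 ≤ u t - v t := fun t ht =>
    sub_nonneg.2 (le_trans (hvf t ht) (hfu t ht))
  have step1 : ∫ t in Icc a b, (u t - v t) ∂(mu a b δ)
      ≤ ∫ t in Icc a b, (u t - v t) ∂(mu a b γ1 + mu a b γ2) := by
    apply integral_mono_measure (Measure.restrict_mono (subset_refl _) hdom)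
    · exact ae_restrict_of_forall_mem measurableSet_Icc hvleu
    · rw [Measure.restrict_add]
      exact Integrable.add_measure (hIu1.sub hIv1) (hIu2.sub hIv2)
  have step2 : ∫ t in Icc a b, (u t - v t) ∂(mu a b γ1 + mu a b γ2)
      = ∫ t in Icc a b, (u t - v t) ∂(mu a b γ1) + ∫ t in Icc a b, (u t - v t) ∂(mu a b γ2) := by
    rw [Measure.restrict_add]
    exact integral_add_measure (hIu1.sub hIv1) (hIu2.sub hIv2)
  have step3 : ∫ t in Icc a b, (u t - v t) ∂(mu a b γ1)
      ≤ ∫ t in Icc a b, (u1 t - v1 t) ∂(mu a b γ1) := by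
    apply setIntegral_mono_on (hIu1.sub hIv1) (hIu11.sub hIv11) measurableSet_Icc
    intro t ht
    have h3 := min_le_left (u1 t) (u2 t)
    have h4 := le_max_left (v1 t) (v2 t)
    simp only [hu_def, hv_def]
    exact sub_le_sub h3 h4
  have step4 : ∫ t in Icc a b, (u t - v t) ∂(mu a b γ2)
      ≤ ∫ t in Icc a b, (u2 t - v2 t) ∂(mu a b γ2) := by
    apply setIntegral_mono_on (hIu2.sub hIv2) (hIu22.sub hIv22) measurableSet_Icc
    intro t ht
    have h3 := min_le_right (u1 t) (u2 t)
    have h4 := le_max_right (v1 t) (v2 t)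
    simp only [hu_def, hv_def]
    exact sub_le_sub h3 h4
  have hval1 : ∫ t in Icc a b, (u1 t - v1 t) ∂(mu a b γ1)
      = stepInt a b γ1 P1 u1 - stepInt a b γ1 Q1 v1 := by
    rw [stepInt_eq_integral hab hγ1 hu1, stepInt_eq_integral hab hγ1 hv1]
    exact integral_sub hIu11 hIv11
  have hval2 : ∫ t in Icc a b, (u2 t - v2 t) ∂(mu a b γ2)
      = stepInt a b γ2 P2 u2 - stepInt a b γ2 Q2 v2 := by
    rw [stepInt_eq_integral hab hγ2 hu2, stepInt_eq_integral hab hγ2 hv2]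
    exact integral_sub hIu22 hIv22
  linarith

end transfer


section valueeq
variable {γ f : ℝ → ℝ} (hab : a < b) (hγ : MonotoneOn γ (Icc a b))
include hab hγ

lemma stepInt_mono {P Q : RDSPartition a b} {u w : ℝ → ℝ} (hu : IsStepOn a b u P)
    (hw : IsStepOn a b w Q) (h : ∀ t ∈ Icc a b, u t ≤ w t) :
    stepInt a b γ P u ≤ stepInt a b γ Q w := by
  rw [stepInt_eq_integral hab hγ hu, stepInt_eq_integral hab hγ hw]
  exact setIntegral_mono_on (integrableOn_step hab hγ hu) (integrableOn_step hab hγ hw)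
    measurableSet_Icc h

omit hab hγ in
lemma stepApprox_integrable {P : RDSPartition a b} {u : ℝ → ℝ} {μ : Measure ℝ}
    [IsFiniteMeasure μ] : Integrable (stepApprox P u) μ := by
  apply Integrable.add
  · apply integrable_finset_sum
    intro i _
    rw [integrable_indicator_iff (measurableSet_singleton _)]
    exact integrableOn_const (measure_lt_top _ _).ne
  · apply integrable_finset_sum
    intro i _
    rw [integrable_indicator_iff measurableSet_Ioo]
    exact integrableOn_const (measure_lt_top _ _).ne

lemma approx_seq (hf : BddOn a b f) (hint : RDSIntegrableInc a b γ f) {M : ℝ}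
    (hM1 : ∀ t ∈ Icc a b, f t ≤ M) (hM2 : ∀ t ∈ Icc a b, -M ≤ f t) (n : ℕ) :
    ∃ (P Q : RDSPartition a b) (u v : ℝ → ℝ), IsStepOn a b u P ∧ IsStepOn a b v Q ∧
      (∀ t ∈ Icc a b, f t ≤ u t) ∧ (∀ t ∈ Icc a b, v t ≤ f t) ∧
      (∀ t, u t ≤ M) ∧ (∀ t, -M ≤ v t) ∧
      upperRDS a b γ f ≤ stepInt a b γ P u ∧
      stepInt a b γ P u < upperRDS a b γ f + 1 / (n + 1) ∧
      upperRDS a b γ f - 1 / (n + 1) < stepInt a b γ Q v ∧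
      stepInt a b γ Q v ≤ upperRDS a b γ f := by
  have hεn : (0:ℝ) < 1 / (n + 1) := by positivity
  obtain ⟨r1, hr1U, hr1lt⟩ := exists_lt_of_csInf_lt (USet_nonempty hab hγ hM1)
    (show sInf (USet a b γ f) < upperRDS a b γ f + 1 / (n + 1) by
      rw [← upperRDS_def]; linarith)
  obtain ⟨u0, P, hu0, hfu0, rfl⟩ := hr1U
  obtain ⟨s1, hs1L, hs1gt⟩ := exists_lt_of_lt_csSup (LSet_nonempty hab hγ hM2)
    (show lowerRDS a b γ f - 1 / (n + 1) < sSup (LSet a b γ f) by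
      rw [← lowerRDS_def]; linarith)
  obtain ⟨v0, Q, hv0, hv0f, rfl⟩ := hs1L
  rw [RDSIntegrableInc] at hint
  set u : ℝ → ℝ := fun t => min (u0 t) M with hu_def
  set v : ℝ → ℝ := fun t => max (v0 t) (-M) with hv_def
  have hu : IsStepOn a b u P := isStepOn_min hu0 (isStepOn_const M)
  have hv : IsStepOn a b v Q := isStepOn_max hv0 (isStepOn_const (-M))
  have hfu : ∀ t ∈ Icc a b, f t ≤ u t := fun t ht => le_min (hfu0 t ht) (hM1 t ht)
  have hvf : ∀ t ∈ Icc a b, v t ≤ f t := fun t ht => max_le (hv0f t ht) (hM2 t ht)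
  refine ⟨P, Q, u, v, hu, hv, hfu, hvf, fun t => min_le_right _ _, fun t => le_max_right _ _,
    ?_, ?_, ?_, ?_⟩
  · exact upperRDS_le hab hγ hf ⟨u, P, hu, hfu, rfl⟩
  · calc stepInt a b γ P u ≤ stepInt a b γ P u0 :=
        stepInt_mono hab hγ hu hu0 (fun t _ => min_le_left _ _)
    _ < _ := hr1lt
  · have h1 : stepInt a b γ Q v0 ≤ stepInt a b γ Q v :=
      stepInt_mono hab hγ hv0 hv (fun t _ => le_max_left _ _)
    rw [← hint]
    linarith
  · rw [← hint]
    exact le_lowerRDS hab hγ hf ⟨v, Q, hv, hvf, rfl⟩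

end valueeq


section valueeq2
variable {γ f : ℝ → ℝ} (hab : a < b) (hγ : MonotoneOn γ (Icc a b))
include hab hγ

lemma value_eq_integral (hf : BddOn a b f) (hint : RDSIntegrableInc a b γ f) :
    IntegrableOn f (Icc a b) (mu a b γ) ∧
      upperRDS a b γ f = ∫ t in Icc a b, f t ∂(mu a b γ) := by
  haveI := mu_fin hab hγ
  obtain ⟨M, hM1, hM2⟩ := bddOn_bounds hab hγ hf
  have hM0 : 0 ≤ M := by
    have h1 := hM1 a (left_mem_Icc.2 hab.le)
    have h2 := hM2 a (left_mem_Icc.2 hab.le)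
    linarith
  set I := upperRDS a b γ f with hI
  set μr := (mu a b γ).restrict (Icc a b) with hμr
  haveI : IsFiniteMeasure μr := inferInstance
  set C := γ b - γ a with hCdef
  have hμrIcc : (μr univ).toReal = C := by
    rw [hμr, Measure.restrict_apply_univ, mu_Icc_toReal hab hγ]
  choose P Q u v hu hv hfu hvf hub hlb hIu hult hvgt hvle using
    approx_seq hab hγ hf hint hM1 hM2
  set φ : ℕ → ℝ → ℝ := fun n => stepApprox (P n) (u n) with hφ
  set ψ : ℕ → ℝ → ℝ := fun n => stepApprox (Q n) (v n) with hψ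
  have hφm : ∀ n, Measurable (φ n) := fun n => stepApprox_measurable
  have hψm : ∀ n, Measurable (ψ n) := fun n => stepApprox_measurable
  have hφeq : ∀ n, ∀ t ∈ Icc a b, φ n t = u n t := fun n t ht => stepApprox_eq hab (hu n) ht
  have hψeq : ∀ n, ∀ t ∈ Icc a b, ψ n t = v n t := fun n t ht => stepApprox_eq hab (hv n) ht
  set U : ℝ → ℝ≥0∞ := fun t => ⨅ n, ENNReal.ofReal (φ n t + M) with hU
  set V : ℝ → ℝ≥0∞ := fun t => ⨆ n, ENNReal.ofReal (ψ n t + M) with hV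
  have hUm : Measurable U := Measurable.iInf fun n =>
    ((hφm n).add_const M).ennreal_ofReal
  have hVm : Measurable V := Measurable.iSup fun n =>
    ((hψm n).add_const M).ennreal_ofReal
  -- sandwich on Icc
  have hsand : ∀ t ∈ Icc a b, V t ≤ ENNReal.ofReal (f t + M) ∧ ENNReal.ofReal (f t + M) ≤ U t := by
    intro t ht
    constructor
    · apply iSup_le
      intro n
      apply ENNReal.ofReal_le_ofReal
      have := hψeq n t ht; have := hvf n t ht; linarith
    · apply le_iInf
      intro n
      apply ENNReal.ofReal_le_ofReal
      have := hφeq n t ht; have := hfu n t ht; linarith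
  have hVU : V ≤ᵐ[μr] U := by
    apply ae_restrict_of_forall_mem measurableSet_Icc
    intro t ht
    exact le_trans (hsand t ht).1 (hsand t ht).2
  -- lintegral bounds
  have hIphi : ∀ n, ∫ t in Icc a b, (φ n t + M) ∂(mu a b γ) = stepInt a b γ (P n) (u n) + M * C := by
    intro n
    rw [integral_add (stepApprox_integrable.restrict) (integrable_const M)]
    congr 1
    · rw [setIntegral_congr_fun measurableSet_Icc (fun t ht => hφeq n t ht),
        ← stepInt_eq_integral hab hγ (hu n)]
    · rw [setIntegral_const, measureReal_def, smul_eq_mul, mul_comm, ← hμrIcc, hμr, Measure.restrict_apply_univ]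
  have hIpsi : ∀ n, ∫ t in Icc a b, (ψ n t + M) ∂(mu a b γ) = stepInt a b γ (Q n) (v n) + M * C := by
    intro n
    rw [integral_add (stepApprox_integrable.restrict) (integrable_const M)]
    congr 1
    · rw [setIntegral_congr_fun measurableSet_Icc (fun t ht => hψeq n t ht),
        ← stepInt_eq_integral hab hγ (hv n)]
    · rw [setIntegral_const, measureReal_def, smul_eq_mul, mul_comm, ← hμrIcc, hμr, Measure.restrict_apply_univ]
  have hφnn : ∀ n, 0 ≤ᵐ[μr] fun t => φ n t + M := by
    intro n
    apply ae_restrict_of_forall_mem measurableSet_Icc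
    intro t ht
    show (0:ℝ) ≤ φ n t + M
    have := hφeq n t ht; have := hfu n t ht; have := hM2 t ht; linarith
  have hψnn : ∀ n, 0 ≤ᵐ[μr] fun t => ψ n t + M := by
    intro n
    apply ae_restrict_of_forall_mem measurableSet_Icc
    intro t ht
    show (0:ℝ) ≤ ψ n t + M
    have := hψeq n t ht
    linarith [hlb n t]
  have hUle : ∀ n, ∫⁻ t, U t ∂μr ≤ ENNReal.ofReal (stepInt a b γ (P n) (u n) + M * C) := by
    intro n
    calc ∫⁻ t, U t ∂μr ≤ ∫⁻ t, ENNReal.ofReal (φ n t + M) ∂μr :=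
        lintegral_mono fun t => iInf_le _ n
    _ = ENNReal.ofReal (∫ t, (φ n t + M) ∂μr) :=
        (ofReal_integral_eq_lintegral_ofReal ((stepApprox_integrable.restrict).add (integrable_const M))
          (hφnn n)).symm
    _ = _ := by rw [← hIphi n]
  have hVge : ∀ n, ENNReal.ofReal (stepInt a b γ (Q n) (v n) + M * C) ≤ ∫⁻ t, V t ∂μr := by
    intro n
    calc ENNReal.ofReal (stepInt a b γ (Q n) (v n) + M * C)
        = ENNReal.ofReal (∫ t, (ψ n t + M) ∂μr) := by rw [← hIpsi n]
    _ = ∫⁻ t, ENNReal.ofReal (ψ n t + M) ∂μr :=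
        ofReal_integral_eq_lintegral_ofReal ((stepApprox_integrable.restrict).add (integrable_const M)) (hψnn n)
    _ ≤ ∫⁻ t, V t ∂μr := lintegral_mono fun t => le_iSup (fun n => ENNReal.ofReal (ψ n t + M)) n
  have hVle : ∫⁻ t, V t ∂μr ≤ ∫⁻ t, U t ∂μr := lintegral_mono_ae hVU
  have hUtop : ∫⁻ t, U t ∂μr ≠ ⊤ := by
    apply ne_top_of_le_ne_top _ (hUle 0)
    exact ENNReal.ofReal_ne_top
  have hVtop : ∫⁻ t, V t ∂μr ≠ ⊤ := ne_top_of_le_ne_top hUtop hVle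
  -- U ≤ V + 2/(n+1)
  have hd : ∀ n : ℕ, ∫⁻ t, U t ∂μr ≤ ∫⁻ t, V t ∂μr + ENNReal.ofReal (2 / (n + 1)) := by
    intro n
    calc ∫⁻ t, U t ∂μr ≤ ENNReal.ofReal (stepInt a b γ (P n) (u n) + M * C) := hUle n
    _ ≤ ENNReal.ofReal ((stepInt a b γ (Q n) (v n) + M * C) + 2 / (n + 1)) := by
        apply ENNReal.ofReal_le_ofReal
        have h1 := hult n
        have h2 := hvgt n
        have : (2:ℝ) / (n+1) = 1/(n+1) + 1/(n+1) := by ring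
        linarith
    _ ≤ ENNReal.ofReal (stepInt a b γ (Q n) (v n) + M * C) + ENNReal.ofReal (2 / (n + 1)) :=
        ENNReal.ofReal_add_le
    _ ≤ _ := add_le_add_left (hVge n) _
  have hUVle : ∫⁻ t, U t ∂μr ≤ ∫⁻ t, V t ∂μr := by
    apply ENNReal.le_of_forall_pos_le_add
    intro ε hε hfin
    obtain ⟨n, hn⟩ := exists_nat_one_div_lt (show (0:ℝ) < ε / 2 by positivity)
    refine le_trans (hd n) (add_le_add_right ?_ _)
    have h2 : (2:ℝ) / (n + 1) ≤ ε := by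
      have h3 : (2:ℝ)/(n+1) = 2 * (1/((n:ℝ)+1)) := by ring
      rw [h3]; linarith
    calc ENNReal.ofReal (2 / (n+1)) ≤ ENNReal.ofReal (ε : ℝ) := ENNReal.ofReal_le_ofReal h2
    _ = (ε : ℝ≥0∞) := ENNReal.ofReal_coe_nnreal
  have hUV : ∫⁻ t, U t ∂μr = ∫⁻ t, V t ∂μr := le_antisymm hUVle hVle
  -- U = V a.e.
  have hzero : ∫⁻ t, (U t - V t) ∂μr = 0 := by
    rw [lintegral_sub hVm hVtop hVU, hUV, tsub_self]
  have haeUV : U =ᵐ[μr] V := by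
    have h0 := (lintegral_eq_zero_iff (hUm.sub hVm)).1 hzero
    filter_upwards [h0, hVU] with t h1 h2
    have h3 : U t - V t = 0 := h1
    exact le_antisymm (tsub_eq_zero_iff_le.1 h3) h2
  -- f + M representation
  have haef : (fun t => ENNReal.ofReal (f t + M)) =ᵐ[μr] U := by
    filter_upwards [haeUV, ae_restrict_mem measurableSet_Icc] with t h1 h2
    exact le_antisymm (hsand t h2).2 (h1 ▸ (hsand t h2).1)
  have hUfin : ∀ᵐ t ∂μr, U t < ⊤ := ae_lt_top hUm hUtop
  have hfae : f =ᵐ[μr] fun t => (U t).toReal - M := by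
    filter_upwards [haef, ae_restrict_mem measurableSet_Icc] with t h1 h2
    rw [← h1, ENNReal.toReal_ofReal (by linarith [hM2 t h2])]
    ring
  have hmeas : AEStronglyMeasurable f μr := by
    apply AEStronglyMeasurable.congr _ hfae.symm
    exact ((hUm.ennreal_toReal).sub measurable_const).aestronglyMeasurable
  have hfint : Integrable f μr := by
    apply Integrable.mono' (integrable_const M) hmeas
    apply ae_restrict_of_forall_mem measurableSet_Icc
    intro t ht
    rw [Real.norm_eq_abs, abs_le]
    exact ⟨hM2 t ht, hM1 t ht⟩
  refine ⟨hfint, ?_⟩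
  -- squeeze the integral
  have hsq : ∀ n : ℕ, |∫ t, f t ∂μr - I| ≤ 1 / (n + 1) := by
    intro n
    have h1 : ∫ t, f t ∂μr ≤ stepInt a b γ (P n) (u n) := by
      rw [stepInt_eq_integral hab hγ (hu n)]
      exact setIntegral_mono_on hfint (integrableOn_step hab hγ (hu n)) measurableSet_Icc (hfu n)
    have h2 : stepInt a b γ (Q n) (v n) ≤ ∫ t, f t ∂μr := by
      rw [stepInt_eq_integral hab hγ (hv n)]
      exact setIntegral_mono_on (integrableOn_step hab hγ (hv n)) hfint measurableSet_Icc (hvf n)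
    have h3 := hult n
    have h4 := hvgt n
    rw [abs_le]
    constructor <;> linarith
  have : |∫ t, f t ∂μr - I| ≤ 0 :=
    ge_of_tendsto' tendsto_one_div_add_atTop_nhds_zero_nat hsq
  have h6 : |∫ t, f t ∂μr - I| = 0 :=
    le_antisymm (by assumption) (abs_nonneg _)
  have h7 := sub_eq_zero.1 (abs_eq_zero.1 h6)
  exact h7.symm

end valueeq2


section welldef

lemma value_welldef {u v u' v' f : ℝ → ℝ} (hab : a < b)
    (hu : MonotoneOn u (Icc a b)) (hv : MonotoneOn v (Icc a b))
    (hu' : MonotoneOn u' (Icc a b)) (hv' : MonotoneOn v' (Icc a b))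
    (heq : ∀ t ∈ Icc a b, u t - v t = u' t - v' t) (hf : BddOn a b f)
    (hiu : RDSIntegrableInc a b u f) (hiv : RDSIntegrableInc a b v f)
    (hiu' : RDSIntegrableInc a b u' f) (hiv' : RDSIntegrableInc a b v' f) :
    upperRDS a b u f - upperRDS a b v f = upperRDS a b u' f - upperRDS a b v' f := by
  obtain ⟨hIu, hVu⟩ := value_eq_integral hab hu hf hiu
  obtain ⟨hIv, hVv⟩ := value_eq_integral hab hv hf hiv
  obtain ⟨hIu', hVu'⟩ := value_eq_integral hab hu' hf hiu'
  obtain ⟨hIv', hVv'⟩ := value_eq_integral hab hv' hf hiv'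
  rw [hVu, hVv, hVu', hVv']
  have hmeq : mu a b u + mu a b v' = mu a b u' + mu a b v := by
    rw [← mu_add hab hu hv', ← mu_add hab hu' hv]
    apply mu_congr hab.le
    intro t ht
    have := heq t ht
    show u t + v' t = u' t + v t
    linarith
  have h1 : ∫ t in Icc a b, f t ∂(mu a b u + mu a b v')
      = ∫ t in Icc a b, f t ∂(mu a b u) + ∫ t in Icc a b, f t ∂(mu a b v') := by
    rw [Measure.restrict_add]
    exact integral_add_measure hIu hIv'
  have h2 : ∫ t in Icc a b, f t ∂(mu a b u' + mu a b v)
      = ∫ t in Icc a b, f t ∂(mu a b u') + ∫ t in Icc a b, f t ∂(mu a b v) := by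
    rw [Measure.restrict_add]
    exact integral_add_measure hIu' hIv
  rw [hmeq] at h1
  rw [h1] at h2
  linarith

lemma eVariationOn_sub_le (u v : ℝ → ℝ) (s : Set ℝ) :
    eVariationOn (fun t => u t - v t) s ≤ eVariationOn u s + eVariationOn v s := by
  rw [eVariationOn]
  apply iSup_le
  rintro ⟨n, ⟨w, hw, hws⟩⟩
  calc ∑ i ∈ Finset.range n, edist ((fun t => u t - v t) (w (i + 1))) ((fun t => u t - v t) (w i))
      ≤ ∑ i ∈ Finset.range n, (edist (u (w (i + 1))) (u (w i)) + edist (v (w (i + 1))) (v (w i))) := by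
        apply Finset.sum_le_sum
        intro i _
        simp only [edist_dist]
        rw [← ENNReal.ofReal_add dist_nonneg dist_nonneg]
        exact ENNReal.ofReal_le_ofReal (dist_sub_sub_le _ _ _ _)
  _ = (∑ i ∈ Finset.range n, edist (u (w (i + 1))) (u (w i)))
      + ∑ i ∈ Finset.range n, edist (v (w (i + 1))) (v (w i)) := Finset.sum_add_distrib
  _ ≤ _ := add_le_add (eVariationOn.sum_le (f := u) (n := n) hw hws) (eVariationOn.sum_le (f := v) (n := n) hw hws)

lemma var_increment {α u v : ℝ → ℝ} (hab : a < b) (hα : BoundedVariationOn α (Icc a b))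
    (hu : MonotoneOn u (Icc a b)) (hv : MonotoneOn v (Icc a b))
    (heq : ∀ t ∈ Icc a b, α t = u t - v t)
    {x y : ℝ} (hx : x ∈ Icc a b) (hy : y ∈ Icc a b) (hxy : x ≤ y) :
    variationOnFromTo α (Icc a b) a y - variationOnFromTo α (Icc a b) a x
      ≤ (u y - u x) + (v y - v x) := by
  have hloc := hα.locallyBoundedVariationOn
  have hamem : a ∈ Icc a b := left_mem_Icc.2 hab.le
  have hsplit := variationOnFromTo.add hloc hamem hx hy
  have hxyval : variationOnFromTo α (Icc a b) x y
      = (eVariationOn α (Icc a b ∩ Icc x y)).toReal := variationOnFromTo.eq_of_le α _ hxy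
  have hcong : eVariationOn α (Icc a b ∩ Icc x y)
      = eVariationOn (fun t => u t - v t) (Icc a b ∩ Icc x y) := by
    apply eVariationOn.eq_of_eqOn
    intro t ht
    exact heq t ht.1
  have hbound : eVariationOn α (Icc a b ∩ Icc x y)
      ≤ ENNReal.ofReal (u y - u x) + ENNReal.ofReal (v y - v x) := by
    rw [hcong]
    exact le_trans (eVariationOn_sub_le u v _)
      (add_le_add (hu.eVariationOn_le hx hy) (hv.eVariationOn_le hx hy))
  have hru : 0 ≤ u y - u x := sub_nonneg.2 (hu hx hy hxy)
  have hrv : 0 ≤ v y - v x := sub_nonneg.2 (hv hx hy hxy)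
  have htoReal : (eVariationOn α (Icc a b ∩ Icc x y)).toReal ≤ (u y - u x) + (v y - v x) := by
    have hne : ENNReal.ofReal (u y - u x) + ENNReal.ofReal (v y - v x) ≠ ⊤ := by
      exact ENNReal.add_ne_top.2 ⟨ENNReal.ofReal_ne_top, ENNReal.ofReal_ne_top⟩
    calc (eVariationOn α (Icc a b ∩ Icc x y)).toReal
        ≤ (ENNReal.ofReal (u y - u x) + ENNReal.ofReal (v y - v x)).toReal :=
          ENNReal.toReal_mono hne hbound
    _ = (u y - u x) + (v y - v x) := by
        rw [ENNReal.toReal_add ENNReal.ofReal_ne_top ENNReal.ofReal_ne_top,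
          ENNReal.toReal_ofReal hru, ENNReal.toReal_ofReal hrv]
  linarith [hsplit, hxyval ▸ htoReal]

end welldef

end RDS13

open RDS13 in
theorem stmt13 (a b : ℝ) (hab : a < b) (α : ℝ → ℝ)
    (hα : BoundedVariationOn α (Set.Icc a b)) (f : ℕ → ℝ → ℝ) (g : ℝ → ℝ)
    (hfb : ∀ k, BddOn a b (f k))
    (hfi : ∀ k, RDSIntegrable a b α (f k))
    (hconv : TendstoUniformlyOn f g atTop (Set.Icc a b)) :
    RDSIntegrable a b α g ∧
    Tendsto (fun k => RDSIntegral a b α (f k)) atTop (𝓝 (RDSIntegral a b α g)) := by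
  classical
  have hloc := hα.locallyBoundedVariationOn
  have hamem : a ∈ Set.Icc a b := Set.left_mem_Icc.2 hab.le
  set p : ℝ → ℝ := fun t => variationOnFromTo α (Set.Icc a b) a t with hp
  set m : ℝ → ℝ := fun t => p t - α t with hm
  have hpm : MonotoneOn p (Set.Icc a b) := variationOnFromTo.monotoneOn hloc hamem
  have hmm : MonotoneOn m (Set.Icc a b) := by
    have h := variationOnFromTo.sub_self_monotoneOn hloc hamem
    intro x hx y hy hxy
    exact h hx hy hxy
  have hdecomp : ∀ t ∈ Set.Icc a b, α t = p t - m t := fun t _ => by rw [hm]; ring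
  have hkint : ∀ k, RDSIntegrableInc a b p (f k) ∧ RDSIntegrableInc a b m (f k) := by
    intro k
    obtain ⟨uk, vk, huk, hvk, heqk, hiu, hiv⟩ := hfi k
    have hdomp : mu a b p ≤ mu a b uk + mu a b vk := by
      rw [← mu_add hab huk hvk]
      apply mu_le hab hpm
      intro x hx y hy hxy
      have h1 := var_increment hab hα huk hvk heqk hx hy hxy
      show uk x + vk x - p x ≤ uk y + vk y - p y
      linarith
    have hdomm : mu a b m ≤ mu a b vk + mu a b vk := by
      rw [← mu_add hab hvk hvk]
      apply mu_le hab hmm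
      intro x hx y hy hxy
      have h1 := var_increment hab hα huk hvk heqk hx hy hxy
      have h2 := heqk x hx
      have h3 := heqk y hy
      show vk x + vk x - m x ≤ vk y + vk y - m y
      rw [hm]
      simp only [hp]
      rw [hm] at *
      simp only [hp] at *
      linarith
    exact ⟨transfer hab huk hvk hpm hdomp (hfb k) hiu hiv,
      transfer hab hvk hvk hmm hdomm (hfb k) hiv hiv⟩
  have hup := unif_inc hab hpm hfb (fun k => (hkint k).1) hconv
  have hum := unif_inc hab hmm hfb (fun k => (hkint k).2) hconv
  have hgb : BddOn a b g := bddOn_of_unif hab hpm hfb hconv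
  have hgint : RDSIntegrable a b α g := ⟨p, m, hpm, hmm, hdecomp, hup.1, hum.1⟩
  refine ⟨hgint, ?_⟩
  have hvalg : RDSIntegral a b α g = upperRDS a b p g - upperRDS a b m g := by
    rw [RDSIntegral, dif_pos hgint]
    obtain ⟨hu', hv', heq', hiu', hiv'⟩ := hgint.choose_spec.choose_spec
    exact value_welldef hab hu' hv' hpm hmm
      (fun t ht => by rw [← heq' t ht]; rw [hm]; ring) hgb hiu' hiv' hup.1 hum.1
  have hvalk : ∀ k, RDSIntegral a b α (f k) = upperRDS a b p (f k) - upperRDS a b m (f k) := by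
    intro k
    rw [RDSIntegral, dif_pos (hfi k)]
    obtain ⟨hu', hv', heq', hiu', hiv'⟩ := (hfi k).choose_spec.choose_spec
    exact value_welldef hab hu' hv' hpm hmm
      (fun t ht => by rw [← heq' t ht]; rw [hm]; ring) (hfb k) hiu' hiv' (hkint k).1 (hkint k).2
  have hfun : (fun k => RDSIntegral a b α (f k))
      = fun k => upperRDS a b p (f k) - upperRDS a b m (f k) := funext hvalk
  rw [hfun, hvalg]
  exact hup.2.sub hum.2
end
end
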